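/- arXiv:2511.21427 — 10 statements merged into one kernel-verified Lean document; each statement's English description precedes it below -/
import Mathlib

section
/- Let K be a field with a valuation v : K → ℤ ∪ {∞} (a surjective additive valuation with value group ℤ). Let f = a₀ + a₁z + ⋯ + aₙzⁿ ∈ K[z] have degree n, and suppose there exist indices j, k with 1 ≤ k+1 ≤ j ≤ n such that: (i) v(aⱼ) = 0; (ii) v(aₖ)/(j−k) < v(aᵢ)/(j−i) for all 0 ≤ i ≤ j−1 with i ≠ k; (iii) if j < n then v(aₖ)/(j−k) > v(aᵢ)/(j−i) for all j+1 ≤ i ≤ n; (iv) gcd(v(aₖ), j−k) = 1. Then in any factorization f = f₁·f₂ in K[z], one of the factors has degree ≤ n − j + k. -/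
noncomputable def uval {K : Type*} [Field K] (v : K → WithTop ℤ) (x : K) : ℤ :=
  (v x).untopD 0

lemma uval_eq {K : Type*} [Field K] (v : K → WithTop ℤ)
    (hv0 : ∀ x : K, v x = ⊤ ↔ x = 0) {x : K} (hx : x ≠ 0) :
    v x = ((uval v x : ℤ) : WithTop ℤ) := by
  have h : v x ≠ ⊤ := fun h => hx ((hv0 x).mp h)
  unfold uval
  cases hvx : v x with
  | top => exact absurd hvx h
  | coe z => simp [WithTop.untopD_coe]

lemma aux_sum_le {K : Type*} [Field K] (v : K → WithTop ℤ)
    (h0 : v 0 = ⊤) (hadd : ∀ x y : K, min (v x) (v y) ≤ v (x + y))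
    {ι : Type*} (s : Finset ι) (F : ι → K) (c : WithTop ℤ)
    (hc : ∀ i ∈ s, c ≤ v (F i)) : c ≤ v (∑ i ∈ s, F i) := by
  induction s using Finset.cons_induction with
  | empty => simp [h0]
  | cons a s ha ih =>
    rw [Finset.sum_cons]
    refine le_trans (le_min (hc a (Finset.mem_cons_self a s)) ?_) (hadd _ _)
    exact ih fun i hi => hc i (Finset.mem_cons_of_mem hi)

lemma aux_sum_lt {K : Type*} [Field K] (v : K → WithTop ℤ)
    (h0 : v 0 = ⊤) (hadd : ∀ x y : K, min (v x) (v y) ≤ v (x + y))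
    {ι : Type*} (s : Finset ι) (F : ι → K) (c : WithTop ℤ) (hct : c < ⊤)
    (hc : ∀ i ∈ s, c < v (F i)) : c < v (∑ i ∈ s, F i) := by
  induction s using Finset.cons_induction with
  | empty => simpa [h0] using hct
  | cons a s ha ih =>
    rw [Finset.sum_cons]
    refine lt_of_lt_of_le (lt_min (hc a (Finset.mem_cons_self a s)) ?_) (hadd _ _)
    exact ih fun i hi => hc i (Finset.mem_cons_of_mem hi)

lemma aux_sum_eq {K : Type*} [Field K] (v : K → WithTop ℤ)
    (h0 : v 0 = ⊤) (hadd : ∀ x y : K, min (v x) (v y) ≤ v (x + y))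
    (hneg : ∀ x : K, v (-x) = v x)
    {ι : Type*} [DecidableEq ι] (s : Finset ι) (F : ι → K) {t : ι} (ht : t ∈ s)
    (htop : v (F t) ≠ ⊤)
    (hlt : ∀ i ∈ s, i ≠ t → v (F t) < v (F i)) :
    v (∑ i ∈ s, F i) = v (F t) := by
  have hR : v (F t) < v (∑ i ∈ s.erase t, F i) := by
    refine aux_sum_lt v h0 hadd _ _ _ (lt_top_iff_ne_top.mpr htop) ?_
    intro i hi
    exact hlt i (Finset.mem_of_mem_erase hi) (Finset.ne_of_mem_erase hi)
  have hsum : F t + ∑ i ∈ s.erase t, F i = ∑ i ∈ s, F i := Finset.add_sum_erase s F ht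
  set R := ∑ i ∈ s.erase t, F i with hRdef
  have h2 : F t = (∑ i ∈ s, F i) + (-R) := by rw [← hsum]; ring
  have h3 : min (v (∑ i ∈ s, F i)) (v (-R)) ≤ v (F t) := by
    rw [h2]; exact hadd _ _
  rw [hneg] at h3
  apply le_antisymm
  · exact (min_le_iff.mp h3).resolve_right (not_le.mpr hR)
  · rw [← hsum]
    exact le_trans (le_min (le_refl _) hR.le) (hadd _ _)

lemma aux_extremes (w' : ℕ → ℤ) (S : Finset ℕ) (hS : S.Nonempty) :
    ∃ a b, a ∈ S ∧ b ∈ S ∧ a ≤ b ∧ w' a = w' b ∧ (∀ i ∈ S, w' a ≤ w' i) ∧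
      (∀ i ∈ S, i < a → w' a < w' i) ∧ (∀ i ∈ S, b < i → w' a < w' i) := by
  classical
  set B := (S.image w').min' (hS.image w') with hB
  have hBmem : B ∈ S.image w' := Finset.min'_mem _ _
  set M := S.filter (fun i => w' i = B) with hM
  have hMne : M.Nonempty := by
    obtain ⟨i, hi, hw⟩ := Finset.mem_image.mp hBmem
    exact ⟨i, Finset.mem_filter.mpr ⟨hi, hw⟩⟩
  have hBle : ∀ i ∈ S, B ≤ w' i := fun i hi =>
    Finset.min'_le _ _ (Finset.mem_image_of_mem w' hi)
  obtain ⟨haS, haB⟩ := Finset.mem_filter.mp (M.min'_mem hMne)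
  obtain ⟨hbS, hbB⟩ := Finset.mem_filter.mp (M.max'_mem hMne)
  refine ⟨M.min' hMne, M.max' hMne, haS, hbS, Finset.min'_le _ _ (M.max'_mem hMne), by rw [haB, hbB], ?_, ?_, ?_⟩
  · intro i hi; rw [haB]; exact hBle i hi
  · intro i hi hlt
    rcases lt_or_eq_of_le (haB ▸ hBle i hi) with h | h
    · exact h
    · exact absurd (Finset.min'_le M i (Finset.mem_filter.mpr ⟨hi, by rw [← h, haB]⟩))
        (not_le.mpr hlt)
  · intro i hi hlt
    rcases lt_or_eq_of_le (haB ▸ hBle i hi) with h | h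
    · exact h
    · exact absurd (Finset.le_max' M i (Finset.mem_filter.mpr ⟨hi, by rw [← h, haB]⟩))
        (not_le.mpr hlt)

open Polynomial in
lemma aux_conv_lower {K : Type*} [Field K] (v : K → WithTop ℤ)
    (hv0 : ∀ x : K, v x = ⊤ ↔ x = 0)
    (hvmul : ∀ x y : K, v (x * y) = v x + v y)
    (hvadd : ∀ x y : K, min (v x) (v y) ≤ v (x + y))
    (hneg : ∀ x : K, v (-x) = v x)
    (d m : ℤ) (hd : 0 < d)
    (g h : Polynomial K) (a₀ b₀ : ℕ) (Bg Bh : ℤ)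
    (ha₀ : g.coeff a₀ ≠ 0) (hb₀ : h.coeff b₀ ≠ 0)
    (hga : d * uval v (g.coeff a₀) + m * (a₀ : ℤ) = Bg)
    (hha : d * uval v (h.coeff b₀) + m * (b₀ : ℤ) = Bh)
    (hgmin : ∀ a : ℕ, g.coeff a ≠ 0 → Bg ≤ d * uval v (g.coeff a) + m * (a : ℤ))
    (hhmin : ∀ b : ℕ, h.coeff b ≠ 0 → Bh ≤ d * uval v (h.coeff b) + m * (b : ℤ))
    (hgstrict : ∀ a : ℕ, g.coeff a ≠ 0 → a < a₀ → Bg < d * uval v (g.coeff a) + m * (a : ℤ))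
    (hhstrict : ∀ b : ℕ, h.coeff b ≠ 0 → b < b₀ → Bh < d * uval v (h.coeff b) + m * (b : ℤ)) :
    ((g * h).coeff (a₀ + b₀) ≠ 0 ∧
      d * uval v ((g * h).coeff (a₀ + b₀)) + m * ((a₀ : ℤ) + b₀) = Bg + Bh) ∧
    (∀ i : ℕ, (g * h).coeff i ≠ 0 → Bg + Bh ≤ d * uval v ((g * h).coeff i) + m * (i : ℤ)) ∧
    (∀ i : ℕ, (g * h).coeff i ≠ 0 → i < a₀ + b₀ →
      Bg + Bh < d * uval v ((g * h).coeff i) + m * (i : ℤ)) := by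
  classical
  have h0 : v 0 = ⊤ := (hv0 0).mpr rfl
  -- value of a generic product term
  have hterm : ∀ a b : ℕ, g.coeff a ≠ 0 → h.coeff b ≠ 0 →
      v (g.coeff a * h.coeff b) = ((uval v (g.coeff a) + uval v (h.coeff b) : ℤ) : WithTop ℤ) := by
    intro a b hga' hhb'
    rw [hvmul, uval_eq v hv0 hga', uval_eq v hv0 hhb', ← WithTop.coe_add]
  have key1 : v ((g * h).coeff (a₀ + b₀)) =
      ((uval v (g.coeff a₀) + uval v (h.coeff b₀) : ℤ) : WithTop ℤ) := by
    rw [Polynomial.coeff_mul]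
    rw [aux_sum_eq v h0 hvadd hneg _ _
      (t := ((a₀ : ℕ), (b₀ : ℕ))) (Finset.HasAntidiagonal.mem_antidiagonal.mpr rfl) ?_ ?_]
    · exact hterm a₀ b₀ ha₀ hb₀
    · rw [hterm a₀ b₀ ha₀ hb₀]; exact WithTop.coe_ne_top
    · rintro ⟨a, b⟩ hab hne
      have habs : a + b = a₀ + b₀ := Finset.HasAntidiagonal.mem_antidiagonal.mp hab
      rw [hterm a₀ b₀ ha₀ hb₀]
      by_cases hga' : g.coeff a = 0
      · rw [show g.coeff a * h.coeff b = 0 by rw [hga', zero_mul], h0]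
        exact WithTop.coe_lt_top _
      by_cases hhb' : h.coeff b = 0
      · rw [show g.coeff a * h.coeff b = 0 by rw [hhb', mul_zero], h0]
        exact WithTop.coe_lt_top _
      rw [hterm a b hga' hhb', WithTop.coe_lt_coe]
      have hcase : a < a₀ ∨ b < b₀ := by
        by_contra hcon
        push_neg at hcon
        apply hne
        have : a = a₀ ∧ b = b₀ := by omega
        simp [Prod.ext_iff, this.1, this.2]
      have hkey : d * (uval v (g.coeff a₀) + uval v (h.coeff b₀)) <
          d * (uval v (g.coeff a) + uval v (h.coeff b)) := by
        rcases hcase with hc | hc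
        · have h1 := hgstrict a hga' hc
          have h2 := hhmin b hhb'
          have hcast : (a : ℤ) + b = (a₀ : ℤ) + b₀ := by exact_mod_cast habs
          have hm : m * (a : ℤ) + m * (b : ℤ) = m * (a₀ : ℤ) + m * (b₀ : ℤ) := by
            linear_combination m * hcast
          linarith [h1, h2, hga, hha, hm]
        · have h1 := hgmin a hga'
          have h2 := hhstrict b hhb' hc
          have hcast : (a : ℤ) + b = (a₀ : ℤ) + b₀ := by exact_mod_cast habs
          have hm : m * (a : ℤ) + m * (b : ℤ) = m * (a₀ : ℤ) + m * (b₀ : ℤ) := by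
            linear_combination m * hcast
          linarith [h1, h2, hga, hha, hm]
      exact lt_of_mul_lt_mul_left hkey hd.le
  have hc0 : (g * h).coeff (a₀ + b₀) ≠ 0 := by
    intro hz
    rw [hz, h0] at key1
    exact WithTop.coe_ne_top key1.symm
  have huv : uval v ((g * h).coeff (a₀ + b₀)) =
      uval v (g.coeff a₀) + uval v (h.coeff b₀) := by
    have := uval_eq v hv0 hc0
    rw [key1] at this
    exact_mod_cast this.symm
  refine ⟨⟨hc0, by rw [huv]; linarith⟩, ?_, ?_⟩
  · intro i hi
    by_contra hcon
    push_neg at hcon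
    have hlt : ∀ p ∈ Finset.HasAntidiagonal.antidiagonal i,
        ((uval v ((g * h).coeff i) : ℤ) : WithTop ℤ) < v (g.coeff p.1 * h.coeff p.2) := by
      rintro ⟨a, b⟩ hab
      have habs : a + b = i := Finset.HasAntidiagonal.mem_antidiagonal.mp hab
      by_cases hga' : g.coeff a = 0
      · rw [show g.coeff a * h.coeff b = 0 by rw [hga', zero_mul], h0]
        exact WithTop.coe_lt_top _
      by_cases hhb' : h.coeff b = 0
      · rw [show g.coeff a * h.coeff b = 0 by rw [hhb', mul_zero], h0]
        exact WithTop.coe_lt_top _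
      rw [hterm a b hga' hhb', WithTop.coe_lt_coe]
      have h1 := hgmin a hga'
      have h2 := hhmin b hhb'
      have habz : (a : ℤ) + b = (i : ℤ) := by exact_mod_cast habs
      have hm : m * (a : ℤ) + m * (b : ℤ) = m * (i : ℤ) := by linear_combination m * habz
      have hkey : d * uval v ((g * h).coeff i) <
          d * (uval v (g.coeff a) + uval v (h.coeff b)) := by
        linarith [h1, h2, hcon, hm]
      exact lt_of_mul_lt_mul_left hkey hd.le
    have := aux_sum_lt v h0 hvadd _ _ _ (WithTop.coe_lt_top _) hlt
    rw [← Polynomial.coeff_mul, ← uval_eq v hv0 hi] at this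
    exact lt_irrefl _ this
  · intro i hi hilt
    by_contra hcon
    push_neg at hcon
    have hlt : ∀ p ∈ Finset.HasAntidiagonal.antidiagonal i,
        ((uval v ((g * h).coeff i) : ℤ) : WithTop ℤ) < v (g.coeff p.1 * h.coeff p.2) := by
      rintro ⟨a, b⟩ hab
      have habs : a + b = i := Finset.HasAntidiagonal.mem_antidiagonal.mp hab
      by_cases hga' : g.coeff a = 0
      · rw [show g.coeff a * h.coeff b = 0 by rw [hga', zero_mul], h0]
        exact WithTop.coe_lt_top _
      by_cases hhb' : h.coeff b = 0
      · rw [show g.coeff a * h.coeff b = 0 by rw [hhb', mul_zero], h0]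
        exact WithTop.coe_lt_top _
      rw [hterm a b hga' hhb', WithTop.coe_lt_coe]
      have habz : (a : ℤ) + b = (i : ℤ) := by exact_mod_cast habs
      have hm : m * (a : ℤ) + m * (b : ℤ) = m * (i : ℤ) := by linear_combination m * habz
      have hcase : a < a₀ ∨ b < b₀ := by omega
      have hkey : d * uval v ((g * h).coeff i) <
          d * (uval v (g.coeff a) + uval v (h.coeff b)) := by
        rcases hcase with hc | hc
        · have h1 := hgstrict a hga' hc
          have h2 := hhmin b hhb'
          linarith [h1, h2, hcon, hm]
        · have h1 := hgmin a hga'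
          have h2 := hhstrict b hhb' hc
          linarith [h1, h2, hcon, hm]
      exact lt_of_mul_lt_mul_left hkey hd.le
    have := aux_sum_lt v h0 hvadd _ _ _ (WithTop.coe_lt_top _) hlt
    rw [← Polynomial.coeff_mul, ← uval_eq v hv0 hi] at this
    exact lt_irrefl _ this

open Polynomial in
lemma aux_conv_upper {K : Type*} [Field K] (v : K → WithTop ℤ)
    (hv0 : ∀ x : K, v x = ⊤ ↔ x = 0)
    (hvmul : ∀ x y : K, v (x * y) = v x + v y)
    (hvadd : ∀ x y : K, min (v x) (v y) ≤ v (x + y))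
    (hneg : ∀ x : K, v (-x) = v x)
    (d m : ℤ) (hd : 0 < d)
    (g h : Polynomial K) (a₀ b₀ : ℕ) (Bg Bh : ℤ)
    (ha₀ : g.coeff a₀ ≠ 0) (hb₀ : h.coeff b₀ ≠ 0)
    (hga : d * uval v (g.coeff a₀) + m * (a₀ : ℤ) = Bg)
    (hha : d * uval v (h.coeff b₀) + m * (b₀ : ℤ) = Bh)
    (hgmin : ∀ a : ℕ, g.coeff a ≠ 0 → Bg ≤ d * uval v (g.coeff a) + m * (a : ℤ))
    (hhmin : ∀ b : ℕ, h.coeff b ≠ 0 → Bh ≤ d * uval v (h.coeff b) + m * (b : ℤ))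
    (hgstrict : ∀ a : ℕ, g.coeff a ≠ 0 → a₀ < a → Bg < d * uval v (g.coeff a) + m * (a : ℤ))
    (hhstrict : ∀ b : ℕ, h.coeff b ≠ 0 → b₀ < b → Bh < d * uval v (h.coeff b) + m * (b : ℤ)) :
    ((g * h).coeff (a₀ + b₀) ≠ 0 ∧
      d * uval v ((g * h).coeff (a₀ + b₀)) + m * ((a₀ : ℤ) + b₀) = Bg + Bh) ∧
    (∀ i : ℕ, (g * h).coeff i ≠ 0 → Bg + Bh ≤ d * uval v ((g * h).coeff i) + m * (i : ℤ)) ∧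
    (∀ i : ℕ, (g * h).coeff i ≠ 0 → a₀ + b₀ < i →
      Bg + Bh < d * uval v ((g * h).coeff i) + m * (i : ℤ)) := by
  classical
  have h0 : v 0 = ⊤ := (hv0 0).mpr rfl
  -- value of a generic product term
  have hterm : ∀ a b : ℕ, g.coeff a ≠ 0 → h.coeff b ≠ 0 →
      v (g.coeff a * h.coeff b) = ((uval v (g.coeff a) + uval v (h.coeff b) : ℤ) : WithTop ℤ) := by
    intro a b hga' hhb'
    rw [hvmul, uval_eq v hv0 hga', uval_eq v hv0 hhb', ← WithTop.coe_add]
  have key1 : v ((g * h).coeff (a₀ + b₀)) =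
      ((uval v (g.coeff a₀) + uval v (h.coeff b₀) : ℤ) : WithTop ℤ) := by
    rw [Polynomial.coeff_mul]
    rw [aux_sum_eq v h0 hvadd hneg _ _
      (t := ((a₀ : ℕ), (b₀ : ℕ))) (Finset.HasAntidiagonal.mem_antidiagonal.mpr rfl) ?_ ?_]
    · exact hterm a₀ b₀ ha₀ hb₀
    · rw [hterm a₀ b₀ ha₀ hb₀]; exact WithTop.coe_ne_top
    · rintro ⟨a, b⟩ hab hne
      have habs : a + b = a₀ + b₀ := Finset.HasAntidiagonal.mem_antidiagonal.mp hab
      rw [hterm a₀ b₀ ha₀ hb₀]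
      by_cases hga' : g.coeff a = 0
      · rw [show g.coeff a * h.coeff b = 0 by rw [hga', zero_mul], h0]
        exact WithTop.coe_lt_top _
      by_cases hhb' : h.coeff b = 0
      · rw [show g.coeff a * h.coeff b = 0 by rw [hhb', mul_zero], h0]
        exact WithTop.coe_lt_top _
      rw [hterm a b hga' hhb', WithTop.coe_lt_coe]
      have hcase : a₀ < a ∨ b₀ < b := by
        by_contra hcon
        push_neg at hcon
        apply hne
        have : a = a₀ ∧ b = b₀ := by omega
        simp [Prod.ext_iff, this.1, this.2]
      have hkey : d * (uval v (g.coeff a₀) + uval v (h.coeff b₀)) <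
          d * (uval v (g.coeff a) + uval v (h.coeff b)) := by
        rcases hcase with hc | hc
        · have h1 := hgstrict a hga' hc
          have h2 := hhmin b hhb'
          have hcast : (a : ℤ) + b = (a₀ : ℤ) + b₀ := by exact_mod_cast habs
          have hm : m * (a : ℤ) + m * (b : ℤ) = m * (a₀ : ℤ) + m * (b₀ : ℤ) := by
            linear_combination m * hcast
          linarith [h1, h2, hga, hha, hm]
        · have h1 := hgmin a hga'
          have h2 := hhstrict b hhb' hc
          have hcast : (a : ℤ) + b = (a₀ : ℤ) + b₀ := by exact_mod_cast habs
          have hm : m * (a : ℤ) + m * (b : ℤ) = m * (a₀ : ℤ) + m * (b₀ : ℤ) := by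
            linear_combination m * hcast
          linarith [h1, h2, hga, hha, hm]
      exact lt_of_mul_lt_mul_left hkey hd.le
  have hc0 : (g * h).coeff (a₀ + b₀) ≠ 0 := by
    intro hz
    rw [hz, h0] at key1
    exact WithTop.coe_ne_top key1.symm
  have huv : uval v ((g * h).coeff (a₀ + b₀)) =
      uval v (g.coeff a₀) + uval v (h.coeff b₀) := by
    have := uval_eq v hv0 hc0
    rw [key1] at this
    exact_mod_cast this.symm
  refine ⟨⟨hc0, by rw [huv]; linarith⟩, ?_, ?_⟩
  · intro i hi
    by_contra hcon
    push_neg at hcon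
    have hlt : ∀ p ∈ Finset.HasAntidiagonal.antidiagonal i,
        ((uval v ((g * h).coeff i) : ℤ) : WithTop ℤ) < v (g.coeff p.1 * h.coeff p.2) := by
      rintro ⟨a, b⟩ hab
      have habs : a + b = i := Finset.HasAntidiagonal.mem_antidiagonal.mp hab
      by_cases hga' : g.coeff a = 0
      · rw [show g.coeff a * h.coeff b = 0 by rw [hga', zero_mul], h0]
        exact WithTop.coe_lt_top _
      by_cases hhb' : h.coeff b = 0
      · rw [show g.coeff a * h.coeff b = 0 by rw [hhb', mul_zero], h0]
        exact WithTop.coe_lt_top _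
      rw [hterm a b hga' hhb', WithTop.coe_lt_coe]
      have h1 := hgmin a hga'
      have h2 := hhmin b hhb'
      have habz : (a : ℤ) + b = (i : ℤ) := by exact_mod_cast habs
      have hm : m * (a : ℤ) + m * (b : ℤ) = m * (i : ℤ) := by linear_combination m * habz
      have hkey : d * uval v ((g * h).coeff i) <
          d * (uval v (g.coeff a) + uval v (h.coeff b)) := by
        linarith [h1, h2, hcon, hm]
      exact lt_of_mul_lt_mul_left hkey hd.le
    have := aux_sum_lt v h0 hvadd _ _ _ (WithTop.coe_lt_top _) hlt
    rw [← Polynomial.coeff_mul, ← uval_eq v hv0 hi] at this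
    exact lt_irrefl _ this
  · intro i hi hilt
    by_contra hcon
    push_neg at hcon
    have hlt : ∀ p ∈ Finset.HasAntidiagonal.antidiagonal i,
        ((uval v ((g * h).coeff i) : ℤ) : WithTop ℤ) < v (g.coeff p.1 * h.coeff p.2) := by
      rintro ⟨a, b⟩ hab
      have habs : a + b = i := Finset.HasAntidiagonal.mem_antidiagonal.mp hab
      by_cases hga' : g.coeff a = 0
      · rw [show g.coeff a * h.coeff b = 0 by rw [hga', zero_mul], h0]
        exact WithTop.coe_lt_top _
      by_cases hhb' : h.coeff b = 0
      · rw [show g.coeff a * h.coeff b = 0 by rw [hhb', mul_zero], h0]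
        exact WithTop.coe_lt_top _
      rw [hterm a b hga' hhb', WithTop.coe_lt_coe]
      have habz : (a : ℤ) + b = (i : ℤ) := by exact_mod_cast habs
      have hm : m * (a : ℤ) + m * (b : ℤ) = m * (i : ℤ) := by linear_combination m * habz
      have hcase : a₀ < a ∨ b₀ < b := by omega
      have hkey : d * uval v ((g * h).coeff i) <
          d * (uval v (g.coeff a) + uval v (h.coeff b)) := by
        rcases hcase with hc | hc
        · have h1 := hgstrict a hga' hc
          have h2 := hhmin b hhb'
          linarith [h1, h2, hcon, hm]
        · have h1 := hgmin a hga'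
          have h2 := hhstrict b hhb' hc
          linarith [h1, h2, hcon, hm]
      exact lt_of_mul_lt_mul_left hkey hd.le
    have := aux_sum_lt v h0 hvadd _ _ _ (WithTop.coe_lt_top _) hlt
    rw [← Polynomial.coeff_mul, ← uval_eq v hv0 hi] at this
    exact lt_irrefl _ this

/-- Generalized Dumas factorization (Theorem 1 of the paper, value group ℤ):
any factorization has a factor of degree ≤ n - j + k. -/
theorem stmt_0 {K : Type*} [Field K] (v : K → WithTop ℤ)
    (hv0 : ∀ x : K, v x = ⊤ ↔ x = 0)
    (hvmul : ∀ x y : K, v (x * y) = v x + v y)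
    (hvadd : ∀ x y : K, min (v x) (v y) ≤ v (x + y))
    (hvsurj : ∀ g : ℤ, ∃ x : K, v x = (g : WithTop ℤ))
    (f : Polynomial K) (n j k : ℕ) (m : ℤ)
    (hdeg : f.natDegree = n) (hk : k + 1 ≤ j) (hjn : j ≤ n)
    (hvj : v (f.coeff j) = 0)
    (hvk : v (f.coeff k) = (m : WithTop ℤ))
    (hii : ∀ i : ℕ, i < j → i ≠ k →
      ((((j : ℤ) - i) * m : ℤ) : WithTop ℤ) < ((((j : ℤ) - k) : ℤ) : WithTop ℤ) * v (f.coeff i))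
    (hiii : j < n → ∀ i : ℕ, j < i → i ≤ n →
      ((((j : ℤ) - i) * m : ℤ) : WithTop ℤ) < ((((j : ℤ) - k) : ℤ) : WithTop ℤ) * v (f.coeff i))
    (hgcd : Int.gcd m ((j : ℤ) - k) = 1) :
    ∀ f₁ f₂ : Polynomial K, f = f₁ * f₂ →
      f₁.natDegree ≤ n - j + k ∨ f₂.natDegree ≤ n - j + k := by
  classical
  intro f₁ f₂ hf
  have h0 : v 0 = ⊤ := (hv0 0).mpr rfl
  -- v 1 = 0
  have hv1 : v (1 : K) = 0 := by
    have h1 := hvmul 1 1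
    rw [one_mul] at h1
    have hne : (1 : K) ≠ 0 := one_ne_zero
    rw [uval_eq v hv0 hne, ← WithTop.coe_add] at h1
    have h2 : uval v (1 : K) = uval v (1 : K) + uval v (1 : K) := by
      exact_mod_cast h1
    have h3 : uval v (1 : K) = 0 := by omega
    rw [uval_eq v hv0 hne, h3]; rfl
  -- v (-x) = v x
  have hvm1 : v (-1 : K) = 0 := by
    have hne : (-1 : K) ≠ 0 := by norm_num
    have h1 := hvmul (-1) (-1)
    rw [show ((-1 : K) * (-1)) = 1 by ring, hv1, uval_eq v hv0 hne, ← WithTop.coe_add] at h1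
    have h2 : (0 : ℤ) = uval v (-1 : K) + uval v (-1 : K) := by exact_mod_cast h1
    have h3 : uval v (-1 : K) = 0 := by omega
    rw [uval_eq v hv0 hne, h3]; rfl
  have hvneg : ∀ x : K, v (-x) = v x := by
    intro x
    rw [show -x = (-1 : K) * x by ring, hvmul, hvm1, zero_add]
  -- nonzero coefficients at j and k
  have hfj : f.coeff j ≠ 0 := by
    intro h; rw [h, h0] at hvj; simp at hvj
  have hfk : f.coeff k ≠ 0 := by
    intro h; rw [h, h0] at hvk; simp at hvk
  have hf0 : f ≠ 0 := fun h => hfj (by simp [h])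
  have hf₁ : f₁ ≠ 0 := fun h => hf0 (by rw [hf, h, zero_mul])
  have hf₂ : f₂ ≠ 0 := fun h => hf0 (by rw [hf, h, mul_zero])
  have hd : (0 : ℤ) < (j : ℤ) - k := by omega
  -- u values at j and k
  have hukm : uval v (f.coeff k) = m := by
    have h := (uval_eq v hv0 hfk).symm.trans hvk
    exact_mod_cast h
  have huj0 : uval v (f.coeff j) = 0 := by
    have h := (uval_eq v hv0 hfj).symm.trans hvj
    exact_mod_cast h
  -- weights of f at k and j
  have hwk : ((j : ℤ) - k) * uval v (f.coeff k) + m * (k : ℤ) = m * (j : ℤ) := by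
    rw [hukm]; ring
  have hwj : ((j : ℤ) - k) * uval v (f.coeff j) + m * (j : ℤ) = m * (j : ℤ) := by
    rw [huj0]; ring
  -- strict inequality elsewhere
  have hstrict : ∀ i : ℕ, f.coeff i ≠ 0 → i ≠ k → i ≠ j →
      m * (j : ℤ) < ((j : ℤ) - k) * uval v (f.coeff i) + m * (i : ℤ) := by
    intro i hci hik hij
    have hin : i ≤ n := hdeg ▸ Polynomial.le_natDegree_of_ne_zero hci
    have hvi := uval_eq v hv0 hci
    have key : ((j : ℤ) - i) * m < ((j : ℤ) - k) * uval v (f.coeff i) := by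
      rcases lt_or_gt_of_ne hij with hlt | hgt
      · have h1 := hii i hlt hik
        rw [hvi, ← WithTop.coe_mul, WithTop.coe_lt_coe] at h1
        exact h1
      · have hjn' : j < n := lt_of_lt_of_le hgt hin
        have h1 := hiii hjn' i hgt hin
        rw [hvi, ← WithTop.coe_mul, WithTop.coe_lt_coe] at h1
        exact h1
    nlinarith [key]
  -- extremes for f₁ and f₂
  obtain ⟨a₁, b₁, ha₁S, hb₁S, hab₁, weq₁, hmin₁, hlo₁, hhi₁⟩ :=
    aux_extremes (fun i => ((j : ℤ) - k) * uval v (f₁.coeff i) + m * (i : ℤ)) f₁.support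
      (Polynomial.nonempty_support_iff.mpr hf₁)
  obtain ⟨a₂, b₂, ha₂S, hb₂S, hab₂, weq₂, hmin₂, hlo₂, hhi₂⟩ :=
    aux_extremes (fun i => ((j : ℤ) - k) * uval v (f₂.coeff i) + m * (i : ℤ)) f₂.support
      (Polynomial.nonempty_support_iff.mpr hf₂)
  have hca₁ : f₁.coeff a₁ ≠ 0 := Polynomial.mem_support_iff.mp ha₁S
  have hca₂ : f₂.coeff a₂ ≠ 0 := Polynomial.mem_support_iff.mp ha₂S
  have hcb₁ : f₁.coeff b₁ ≠ 0 := Polynomial.mem_support_iff.mp hb₁S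
  have hcb₂ : f₂.coeff b₂ ≠ 0 := Polynomial.mem_support_iff.mp hb₂S
  have hmin₁' : ∀ a : ℕ, f₁.coeff a ≠ 0 →
      ((j : ℤ) - k) * uval v (f₁.coeff a₁) + m * (a₁ : ℤ) ≤
      ((j : ℤ) - k) * uval v (f₁.coeff a) + m * (a : ℤ) :=
    fun a ha => hmin₁ a (Polynomial.mem_support_iff.mpr ha)
  have hmin₂' : ∀ a : ℕ, f₂.coeff a ≠ 0 →
      ((j : ℤ) - k) * uval v (f₂.coeff a₂) + m * (a₂ : ℤ) ≤
      ((j : ℤ) - k) * uval v (f₂.coeff a) + m * (a : ℤ) :=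
    fun a ha => hmin₂ a (Polynomial.mem_support_iff.mpr ha)
  have hlo₁' : ∀ a : ℕ, f₁.coeff a ≠ 0 → a < a₁ →
      ((j : ℤ) - k) * uval v (f₁.coeff a₁) + m * (a₁ : ℤ) <
      ((j : ℤ) - k) * uval v (f₁.coeff a) + m * (a : ℤ) :=
    fun a ha hlt => hlo₁ a (Polynomial.mem_support_iff.mpr ha) hlt
  have hlo₂' : ∀ a : ℕ, f₂.coeff a ≠ 0 → a < a₂ →
      ((j : ℤ) - k) * uval v (f₂.coeff a₂) + m * (a₂ : ℤ) <
      ((j : ℤ) - k) * uval v (f₂.coeff a) + m * (a : ℤ) :=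
    fun a ha hlt => hlo₂ a (Polynomial.mem_support_iff.mpr ha) hlt
  have hhi₁' : ∀ a : ℕ, f₁.coeff a ≠ 0 → b₁ < a →
      ((j : ℤ) - k) * uval v (f₁.coeff a₁) + m * (a₁ : ℤ) <
      ((j : ℤ) - k) * uval v (f₁.coeff a) + m * (a : ℤ) :=
    fun a ha hlt => hhi₁ a (Polynomial.mem_support_iff.mpr ha) hlt
  have hhi₂' : ∀ a : ℕ, f₂.coeff a ≠ 0 → b₂ < a →
      ((j : ℤ) - k) * uval v (f₂.coeff a₂) + m * (a₂ : ℤ) <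
      ((j : ℤ) - k) * uval v (f₂.coeff a) + m * (a : ℤ) :=
    fun a ha hlt => hhi₂ a (Polynomial.mem_support_iff.mpr ha) hlt
  -- lower convolution
  obtain ⟨⟨hcL0, hcLw⟩, hgeL, hltL⟩ :=
    aux_conv_lower v hv0 hvmul hvadd hvneg ((j : ℤ) - k) m hd f₁ f₂ a₁ a₂ _ _
      hca₁ hca₂ rfl rfl hmin₁' hmin₂' hlo₁' hlo₂'
  -- upper convolution
  obtain ⟨⟨hcU0, hcUw⟩, hgeU, hgtU⟩ :=
    aux_conv_upper v hv0 hvmul hvadd hvneg ((j : ℤ) - k) m hd f₁ f₂ b₁ b₂ _ _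
      hcb₁ hcb₂ weq₁.symm weq₂.symm
      (fun a ha => weq₁ ▸ hmin₁' a ha) (fun a ha => weq₂ ▸ hmin₂' a ha)
      (fun a ha hlt => weq₁ ▸ hhi₁' a ha hlt) (fun a ha hlt => weq₂ ▸ hhi₂' a ha hlt)
  rw [← hf] at hcL0 hcLw hgeL hltL hcU0 hcUw hgeU hgtU
  -- B₁ + B₂ vs m*j at k
  have hBk := hgeL k hfk
  rw [hwk] at hBk
  -- a₁ + a₂ = k
  have hi₀ : a₁ + a₂ = k := by
    by_contra hne
    by_cases hij : a₁ + a₂ = j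
    · have h2 := hltL k hfk (by omega)
      rw [hwk] at h2
      have h3 : ((j : ℤ) - k) * uval v (f.coeff (a₁ + a₂)) + m * ((a₁ : ℤ) + a₂) =
          m * (j : ℤ) := by
        have hc : ((a₁ : ℤ) + a₂) = (j : ℤ) := by exact_mod_cast hij
        rw [hc, show f.coeff (a₁ + a₂) = f.coeff j by rw [hij], hwj]
      rw [h3] at hcLw
      linarith [h2, hcLw]
    · have h2 := hstrict (a₁ + a₂) hcL0 hne hij
      have hc : ((a₁ : ℤ) + a₂) = ((a₁ + a₂ : ℕ) : ℤ) := by push_cast; ring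
      rw [← hc] at h2
      linarith [h2, hcLw, hBk]
  -- b₁ + b₂ = j
  have hj₀ : b₁ + b₂ = j := by
    by_contra hne
    by_cases hik : b₁ + b₂ = k
    · have h2 := hgtU j hfj (by omega)
      rw [hwj] at h2
      have h3 : ((j : ℤ) - k) * uval v (f.coeff (b₁ + b₂)) + m * ((b₁ : ℤ) + b₂) =
          m * (j : ℤ) := by
        have hc : ((b₁ : ℤ) + b₂) = (k : ℤ) := by exact_mod_cast hik
        rw [hc, show f.coeff (b₁ + b₂) = f.coeff k by rw [hik], hwk]
      rw [h3] at hcUw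
      linarith [h2, hcUw]
    · have h2 := hstrict (b₁ + b₂) hcU0 hik hne
      have hc : ((b₁ : ℤ) + b₂) = ((b₁ + b₂ : ℕ) : ℤ) := by push_cast; ring
      rw [← hc] at h2
      have hBk' := hgeU k hfk
      rw [hwk] at hBk'
      linarith [h2, hcUw, hBk']
  -- degrees add
  have hnd : f₁.natDegree + f₂.natDegree = n := by
    rw [← hdeg, hf, Polynomial.natDegree_mul hf₁ hf₂]
  have hb₁deg : b₁ ≤ f₁.natDegree := Polynomial.le_natDegree_of_ne_zero hcb₁
  have hb₂deg : b₂ ≤ f₂.natDegree := Polynomial.le_natDegree_of_ne_zero hcb₂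
  by_cases hba : b₁ = a₁
  · -- f₂ carries the edge
    left
    omega
  · -- d divides b₁ - a₁, hence b₁ - a₁ ≥ j - k
    have hdvdm : ((j : ℤ) - k) ∣ m * ((b₁ : ℤ) - a₁) := by
      refine ⟨uval v (f₁.coeff a₁) - uval v (f₁.coeff b₁), ?_⟩
      linear_combination -weq₁
    have hcop : IsCoprime ((j : ℤ) - k) m :=
      (Int.isCoprime_iff_gcd_eq_one.mpr hgcd).symm
    have hdvd : ((j : ℤ) - k) ∣ ((b₁ : ℤ) - a₁) := hcop.dvd_of_dvd_mul_left hdvdm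
    have hpos : (0 : ℤ) < (b₁ : ℤ) - a₁ := by omega
    have hge := Int.le_of_dvd hpos hdvd
    right
    omega
end

section
/- Let K be a field with a surjective valuation v : K → ℤ ∪ {∞}. Let f = a₀ + a₁z + ⋯ + aₙzⁿ ∈ K[z] have degree n, and suppose: (i) v(aₙ) = 0; (ii) v(a₀)/n < v(aᵢ)/(n−i) for all 1 ≤ i ≤ n−1; (iii) gcd(v(a₀), n) = 1. Then f is irreducible in K[z]. -/
namespace DumasAux
open Polynomial

variable {K : Type*} [Field K]

lemma nsmul_coe (k : ℕ) (z : ℤ) : (k • ((z : WithTop ℤ))) = (((k : ℤ) * z : ℤ) : WithTop ℤ) := by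
  induction k with
  | zero => simp
  | succ k ih =>
    rw [succ_nsmul, ih, ← WithTop.coe_add]
    congr 1
    push_cast
    ring

lemma nsmul_top {k : ℕ} (hk : k ≠ 0) : (k • (⊤ : WithTop ℤ)) = ⊤ := by
  cases k with
  | zero => exact absurd rfl hk
  | succ k => rw [succ_nsmul, add_top]

lemma v_zero (v : K → WithTop ℤ) (hv0 : ∀ x : K, v x = ⊤ ↔ x = 0) : v 0 = ⊤ := (hv0 0).2 rfl

lemma v_one (v : K → WithTop ℤ) (hv0 : ∀ x : K, v x = ⊤ ↔ x = 0)
    (hvmul : ∀ x y : K, v (x * y) = v x + v y) : v 1 = 0 := by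
  have h := hvmul 1 1
  rw [mul_one] at h
  have h1 : v 1 ≠ ⊤ := by simp [hv0]
  lift v 1 to ℤ using h1 with z
  rw [← WithTop.coe_add, WithTop.coe_eq_coe] at h
  have : z = 0 := by omega
  simp [this]

lemma v_neg (v : K → WithTop ℤ) (hv0 : ∀ x : K, v x = ⊤ ↔ x = 0)
    (hvmul : ∀ x y : K, v (x * y) = v x + v y) (x : K) : v (-x) = v x := by
  have hm1 : v (-1 : K) = 0 := by
    have h := hvmul (-1) (-1)
    rw [neg_mul_neg, one_mul, v_one v hv0 hvmul] at h
    have h1 : v (-1 : K) ≠ ⊤ := by simp [hv0]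
    lift v (-1 : K) to ℤ using h1 with z
    rw [← WithTop.coe_add, eq_comm, WithTop.coe_eq_zero] at h
    have : z = 0 := by omega
    simp [this]
  calc v (-x) = v ((-1) * x) := by rw [neg_one_mul]
  _ = v (-1 : K) + v x := hvmul _ _
  _ = v x := by rw [hm1, zero_add]

lemma v_add_eq_left (v : K → WithTop ℤ) (hv0 : ∀ x : K, v x = ⊤ ↔ x = 0)
    (hvmul : ∀ x y : K, v (x * y) = v x + v y)
    (hvadd : ∀ x y : K, min (v x) (v y) ≤ v (x + y))
    {x y : K} (hlt : v x < v y) : v (x + y) = v x := by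
  refine le_antisymm ?_ ?_
  · have h := hvadd (x + y) (-y)
    rw [add_neg_cancel_right, v_neg v hv0 hvmul] at h
    by_contra hc
    push_neg at hc
    exact absurd h (by simp [lt_min_iff, hc, hlt])
  · exact le_trans (by simp [hlt.le]) (hvadd x y)

lemma v_sum_ge (v : K → WithTop ℤ) (hv0 : ∀ x : K, v x = ⊤ ↔ x = 0)
    (hvadd : ∀ x y : K, min (v x) (v y) ≤ v (x + y))
    {ι : Type*} (s : Finset ι) (x : ι → K) :
    s.inf (fun i => v (x i)) ≤ v (s.sum x) := by
  induction s using Finset.cons_induction with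
  | empty => simp [v_zero v hv0]
  | cons a s ha ih =>
    rw [Finset.sum_cons, Finset.inf_cons]
    refine le_trans ?_ (hvadd (x a) (s.sum x))
    exact inf_le_inf_left _ ih

lemma v_sum_eq (v : K → WithTop ℤ) (hv0 : ∀ x : K, v x = ⊤ ↔ x = 0)
    (hvmul : ∀ x y : K, v (x * y) = v x + v y)
    (hvadd : ∀ x y : K, min (v x) (v y) ≤ v (x + y))
    {ι : Type*} (s : Finset ι) (x : ι → K) (i₀ : ι) (hi₀ : i₀ ∈ s)
    (hlt : ∀ i ∈ s, i ≠ i₀ → v (x i₀) < v (x i)) :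
    v (s.sum x) = v (x i₀) := by
  classical
  rw [← Finset.add_sum_erase s x hi₀]
  rcases eq_or_lt_of_le (le_top : v (x i₀) ≤ ⊤) with htop | htop
  · -- then every term has v = ⊤, so every x i = 0 and the sum of the erase part is 0
    have hz : ∀ i ∈ s.erase i₀, x i = 0 := by
      intro i hi
      rw [← hv0]
      have := hlt i (Finset.mem_of_mem_erase hi) (Finset.ne_of_mem_erase hi)
      rw [htop] at this
      exact absurd this not_top_lt
    rw [Finset.sum_eq_zero hz, add_zero]
  · apply v_add_eq_left v hv0 hvmul hvadd
    calc v (x i₀) < (s.erase i₀).inf (fun i => v (x i)) := by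
          rw [Finset.lt_inf_iff htop]
          intro i hi
          exact hlt i (Finset.mem_of_mem_erase hi) (Finset.ne_of_mem_erase hi)
    _ ≤ v ((s.erase i₀).sum x) := v_sum_ge v hv0 hvadd _ _

/-- The Gauss-type weight `n • v(coeff i) + i*m`. -/
noncomputable def W (v : K → WithTop ℤ) (n : ℕ) (m : ℤ) (g : Polynomial K) (i : ℕ) : WithTop ℤ :=
  n • v (g.coeff i) + (((i : ℤ) * m : ℤ) : WithTop ℤ)

lemma W_eq_top (v : K → WithTop ℤ) (hv0 : ∀ x : K, v x = ⊤ ↔ x = 0) {n : ℕ} (hn : n ≠ 0)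
    (m : ℤ) {g : Polynomial K} {i : ℕ} (hc : g.coeff i = 0) : W v n m g i = ⊤ := by
  rw [W, (hv0 _).2 hc, nsmul_top hn, top_add]

lemma coeff_ne_zero_of_W (v : K → WithTop ℤ) (hv0 : ∀ x : K, v x = ⊤ ↔ x = 0) {n : ℕ}
    (hn : n ≠ 0) {m : ℤ} {g : Polynomial K} {i : ℕ} (h : W v n m g i ≠ ⊤) : g.coeff i ≠ 0 :=
  fun hc => h (W_eq_top v hv0 hn m hc)

lemma W_add_W (v : K → WithTop ℤ) (hvmul : ∀ x y : K, v (x * y) = v x + v y)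
    (n : ℕ) (m : ℤ) (g h : Polynomial K) (i j : ℕ) :
    W v n m g i + W v n m h j
      = n • v (g.coeff i * h.coeff j) + ((((i + j : ℕ) : ℤ) * m : ℤ) : WithTop ℤ) := by
  rw [W, W, hvmul, smul_add]
  rw [show ((((i + j : ℕ) : ℤ) * m : ℤ) : WithTop ℤ)
      = (((i : ℤ) * m : ℤ) : WithTop ℤ) + (((j : ℤ) * m : ℤ) : WithTop ℤ) by
    rw [← WithTop.coe_add]; congr 1; push_cast; ring]
  abel

lemma coe_add_lt {A B : ℤ} {x y : WithTop ℤ} (hx : (A : WithTop ℤ) < x)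
    (hy : (B : WithTop ℤ) ≤ y) : ((A + B : ℤ) : WithTop ℤ) < x + y := by
  cases x with
  | top =>
    rw [top_add]
    exact WithTop.coe_lt_top _
  | coe x =>
    cases y with
    | top =>
      rw [add_top]
      exact WithTop.coe_lt_top _
    | coe y =>
      rw [← WithTop.coe_add, WithTop.coe_lt_coe]
      rw [WithTop.coe_lt_coe] at hx
      rw [WithTop.coe_le_coe] at hy
      omega

lemma coe_add_lt' {A B : ℤ} {x y : WithTop ℤ} (hx : (A : WithTop ℤ) ≤ x)
    (hy : (B : WithTop ℤ) < y) : ((A + B : ℤ) : WithTop ℤ) < x + y := by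
  rw [add_comm x y, show A + B = B + A by ring]
  exact coe_add_lt hy hx

lemma nsmul_add_lt_cancel {n : ℕ} {x y : WithTop ℤ} {c : ℤ}
    (hlt : n • x + (c : WithTop ℤ) < n • y + (c : WithTop ℤ)) : x < y := by
  by_contra hc
  push_neg at hc
  exact absurd (add_le_add_left (nsmul_le_nsmul_right hc n) _) (not_le.2 hlt)

/-- Exact value of W of a product at a sum of "extremal" points. -/
lemma keyPoint (v : K → WithTop ℤ) (hv0 : ∀ x : K, v x = ⊤ ↔ x = 0)
    (hvmul : ∀ x y : K, v (x * y) = v x + v y)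
    (hvadd : ∀ x y : K, min (v x) (v y) ≤ v (x + y))
    (n : ℕ) (m : ℤ) (g h : Polynomial K) (a b : ℕ) (A B : ℤ)
    (hga : W v n m g a = (A : WithTop ℤ)) (hhb : W v n m h b = (B : WithTop ℤ))
    (hstrict : ∀ i j : ℕ, i + j = a + b → i ≠ a →
      (((A + B : ℤ)) : WithTop ℤ) < W v n m g i + W v n m h j) :
    W v n m (g * h) (a + b) = ((A + B : ℤ) : WithTop ℤ) := by
  have hab : W v n m g a + W v n m h b = ((A + B : ℤ) : WithTop ℤ) := by
    rw [hga, hhb, WithTop.coe_add]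
  have hvsum : v ((g * h).coeff (a + b)) = v (g.coeff a * h.coeff b) := by
    rw [Polynomial.coeff_mul]
    refine v_sum_eq v hv0 hvmul hvadd _ _ (a, b) (by simp) ?_
    rintro ⟨i, j⟩ hij hne
    rw [Finset.HasAntidiagonal.mem_antidiagonal] at hij
    have hia : i ≠ a := by
      rintro rfl
      exact hne (by simpa using (by omega : j = b))
    have h1 := hstrict i j hij hia
    rw [W_add_W v hvmul n m g h i j, hij] at h1
    rw [← hab, W_add_W v hvmul n m g h a b] at h1
    exact nsmul_add_lt_cancel h1
  rw [W, hvsum, ← W_add_W v hvmul n m g h a b, hab]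

/-- Lower bound for W of a product. -/
lemma keyLB (v : K → WithTop ℤ) (hv0 : ∀ x : K, v x = ⊤ ↔ x = 0)
    (hvmul : ∀ x y : K, v (x * y) = v x + v y)
    (hvadd : ∀ x y : K, min (v x) (v y) ≤ v (x + y))
    (n : ℕ) (m : ℤ) (g h : Polynomial K) (k : ℕ) (A B : ℤ)
    (hA : ∀ i : ℕ, (A : WithTop ℤ) ≤ W v n m g i)
    (hB : ∀ j : ℕ, (B : WithTop ℤ) ≤ W v n m h j) :
    ((A + B : ℤ) : WithTop ℤ) ≤ W v n m (g * h) k := by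
  obtain ⟨⟨i, j⟩, hij, hinf⟩ := Finset.exists_mem_eq_inf (Finset.HasAntidiagonal.antidiagonal k)
    (⟨(0, k), by simp⟩) (fun x => v (g.coeff x.1 * h.coeff x.2))
  rw [Finset.HasAntidiagonal.mem_antidiagonal] at hij
  have h1 : v (g.coeff i * h.coeff j) ≤ v ((g * h).coeff k) := by
    rw [Polynomial.coeff_mul, ← hinf]
    exact v_sum_ge v hv0 hvadd _ _
  calc ((A + B : ℤ) : WithTop ℤ) ≤ W v n m g i + W v n m h j := by
        rw [WithTop.coe_add]
        exact add_le_add (hA i) (hB j)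
    _ = n • v (g.coeff i * h.coeff j) + ((((i + j : ℕ) : ℤ) * m : ℤ) : WithTop ℤ) :=
        W_add_W v hvmul n m g h i j
    _ ≤ W v n m (g * h) k := by
        rw [W, hij]
        exact add_le_add_left (nsmul_le_nsmul_right h1 n) _

/-- Strict lower bound for W of a product. -/
lemma keyStrict (v : K → WithTop ℤ) (hv0 : ∀ x : K, v x = ⊤ ↔ x = 0)
    (hvmul : ∀ x y : K, v (x * y) = v x + v y)
    (hvadd : ∀ x y : K, min (v x) (v y) ≤ v (x + y))
    (n : ℕ) (m : ℤ) (g h : Polynomial K) (k : ℕ) (C : ℤ)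
    (hstrict : ∀ i j : ℕ, i + j = k → (C : WithTop ℤ) < W v n m g i + W v n m h j) :
    (C : WithTop ℤ) < W v n m (g * h) k := by
  obtain ⟨⟨i, j⟩, hij, hinf⟩ := Finset.exists_mem_eq_inf (Finset.HasAntidiagonal.antidiagonal k)
    (⟨(0, k), by simp⟩) (fun x => v (g.coeff x.1 * h.coeff x.2))
  rw [Finset.HasAntidiagonal.mem_antidiagonal] at hij
  have h1 : v (g.coeff i * h.coeff j) ≤ v ((g * h).coeff k) := by
    rw [Polynomial.coeff_mul, ← hinf]
    exact v_sum_ge v hv0 hvadd _ _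
  calc (C : WithTop ℤ) < W v n m g i + W v n m h j := hstrict i j hij
    _ = n • v (g.coeff i * h.coeff j) + ((((i + j : ℕ) : ℤ) * m : ℤ) : WithTop ℤ) :=
        W_add_W v hvmul n m g h i j
    _ ≤ W v n m (g * h) k := by
        rw [W, hij]
        exact add_le_add_left (nsmul_le_nsmul_right h1 n) _

lemma W_coe (v : K → WithTop ℤ) (hv0 : ∀ x : K, v x = ⊤ ↔ x = 0)
    (n : ℕ) (m : ℤ) {g : Polynomial K} {i : ℕ} (hc : g.coeff i ≠ 0) :
    ∃ A : ℤ, W v n m g i = (A : WithTop ℤ) := by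
  have : v (g.coeff i) ≠ ⊤ := fun h => hc ((hv0 _).1 h)
  lift v (g.coeff i) to ℤ using this with z hz
  exact ⟨(n : ℤ) * z + (i : ℤ) * m, by rw [W, ← hz, nsmul_coe, ← WithTop.coe_add]⟩

lemma exists_extremal (v : K → WithTop ℤ) (hv0 : ∀ x : K, v x = ⊤ ↔ x = 0)
    {n : ℕ} (hn : n ≠ 0) (m : ℤ) {g : Polynomial K} (hg : g ≠ 0) :
    ∃ (amin amax : ℕ) (A : ℤ),
      W v n m g amin = (A : WithTop ℤ) ∧ W v n m g amax = (A : WithTop ℤ) ∧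
      (∀ i : ℕ, (A : WithTop ℤ) ≤ W v n m g i) ∧
      (∀ i : ℕ, i < amin → (A : WithTop ℤ) < W v n m g i) ∧
      (∀ i : ℕ, amax < i → (A : WithTop ℤ) < W v n m g i) ∧
      amin ≤ g.natDegree ∧ amax ≤ g.natDegree := by
  classical
  obtain ⟨i₀, hi₀s, hi₀⟩ := Finset.exists_mem_eq_inf g.support
    (Polynomial.support_nonempty.2 hg) (W v n m g)
  obtain ⟨A, hA⟩ := W_coe v hv0 n m (Polynomial.mem_support_iff.1 hi₀s)
  have hinf : g.support.inf (W v n m g) = (A : WithTop ℤ) := hi₀.trans hA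
  have hle : ∀ i : ℕ, (A : WithTop ℤ) ≤ W v n m g i := by
    intro i
    by_cases hi : i ∈ g.support
    · rw [← hinf]
      exact Finset.inf_le hi
    · rw [W_eq_top v hv0 hn m (Polynomial.notMem_support_iff.1 hi)]
      exact le_top
  set t : Finset ℕ := g.support.filter (fun i => W v n m g i = (A : WithTop ℤ)) with ht
  have hi₀t : i₀ ∈ t := Finset.mem_filter.2 ⟨hi₀s, hA⟩
  have htne : t.Nonempty := ⟨i₀, hi₀t⟩
  have hstrict : ∀ i : ℕ, i ∉ t → (A : WithTop ℤ) < W v n m g i := by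
    intro i hit
    rcases eq_or_lt_of_le (hle i) with h | h
    · exfalso
      by_cases hi : i ∈ g.support
      · exact hit (Finset.mem_filter.2 ⟨hi, h.symm⟩)
      · rw [W_eq_top v hv0 hn m (Polynomial.notMem_support_iff.1 hi)] at h
        exact (WithTop.coe_ne_top h)
    · exact h
  refine ⟨t.min' htne, t.max' htne, A,
    (Finset.mem_filter.1 (t.min'_mem htne)).2,
    (Finset.mem_filter.1 (t.max'_mem htne)).2, hle, ?_, ?_, ?_, ?_⟩
  · intro i hi
    exact hstrict i (fun hit => absurd (t.min'_le i hit) (by omega))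
  · intro i hi
    exact hstrict i (fun hit => absurd (t.le_max' i hit) (by omega))
  · exact Polynomial.le_natDegree_of_mem_supp _ (Finset.mem_filter.1 (t.min'_mem htne)).1
  · exact Polynomial.le_natDegree_of_mem_supp _ (Finset.mem_filter.1 (t.max'_mem htne)).1

lemma natCast_mul_eq_nsmul {n : ℕ} (hn : n ≠ 0) (x : WithTop ℤ) :
    ((n : WithTop ℤ)) * x = n • x := by
  cases x with
  | top =>
    rw [nsmul_top hn, WithTop.mul_top]
    · intro h
      rw [show ((n : WithTop ℤ)) = (((n : ℤ) : WithTop ℤ)) by push_cast; rfl] at h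
      rw [WithTop.coe_eq_zero] at h
      omega
  | coe x =>
    rw [nsmul_coe, show ((n : WithTop ℤ)) = (((n : ℤ) : WithTop ℤ)) by push_cast; rfl,
      ← WithTop.coe_mul]

end DumasAux

open DumasAux Polynomial in
/-- Generalized Dumas irreducibility criterion (case j = n, k = 0). -/
theorem stmt_1 {K : Type*} [Field K] (v : K → WithTop ℤ)
    (hv0 : ∀ x : K, v x = ⊤ ↔ x = 0)
    (hvmul : ∀ x y : K, v (x * y) = v x + v y)
    (hvadd : ∀ x y : K, min (v x) (v y) ≤ v (x + y))
    (hvsurj : ∀ g : ℤ, ∃ x : K, v x = (g : WithTop ℤ))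
    (f : Polynomial K) (n : ℕ) (m : ℤ)
    (hdeg : f.natDegree = n)
    (hvn : v (f.coeff n) = 0)
    (hv0' : v (f.coeff 0) = (m : WithTop ℤ))
    (hii : ∀ i : ℕ, 1 ≤ i → i < n →
      ((((n : ℤ) - i) * m : ℤ) : WithTop ℤ) < ((n : ℕ) : WithTop ℤ) * v (f.coeff i))
    (hgcd : Int.gcd m (n : ℤ) = 1) :
    Irreducible f := by
  have hn : n ≠ 0 := by
    rintro rfl
    rw [hv0', WithTop.coe_eq_zero] at hvn
    subst hvn
    simp at hgcd
  have hf : f ≠ 0 := fun h => hn (by rw [← hdeg, h, natDegree_zero])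
  -- facts about the weights of f
  have hWf0 : W v n m f 0 = (((n : ℤ) * m : ℤ) : WithTop ℤ) := by
    rw [W, hv0', nsmul_coe, ← WithTop.coe_add]
    congr 1
    push_cast
    ring
  have hWfn : W v n m f n = (((n : ℤ) * m : ℤ) : WithTop ℤ) := by
    rw [W, hvn, smul_zero, zero_add]
  have hWfmid : ∀ i : ℕ, 1 ≤ i → i < n →
      ((((n : ℤ) * m : ℤ)) : WithTop ℤ) < W v n m f i := by
    intro i h1 h2
    have h := hii i h1 h2
    rw [natCast_mul_eq_nsmul hn] at h
    calc (((n : ℤ) * m : ℤ) : WithTop ℤ)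
        = (((((n : ℤ) - i) * m : ℤ)) : WithTop ℤ) + (((i : ℤ) * m : ℤ) : WithTop ℤ) := by
          rw [← WithTop.coe_add]; congr 1; ring
      _ < n • v (f.coeff i) + (((i : ℤ) * m : ℤ) : WithTop ℤ) :=
          (WithTop.add_lt_add_iff_right (WithTop.coe_ne_top)).2 h
      _ = W v n m f i := rfl
  have hWfhigh : ∀ i : ℕ, n < i → ((((n : ℤ) * m : ℤ)) : WithTop ℤ) < W v n m f i := by
    intro i hi
    rw [W_eq_top v hv0 hn m (coeff_eq_zero_of_natDegree_lt (hdeg ▸ hi))]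
    exact WithTop.coe_lt_top _
  have hWfle : ∀ k : ℕ, ((((n : ℤ) * m : ℤ)) : WithTop ℤ) ≤ W v n m f k := by
    intro k
    rcases lt_trichotomy k n with hk | hk | hk
    · rcases Nat.eq_zero_or_pos k with rfl | hk0
      · exact hWf0.ge
      · exact (hWfmid k hk0 hk).le
    · subst hk
      exact hWfn.ge
    · exact (hWfhigh k hk).le
  constructor
  · intro hu
    have := natDegree_eq_zero_of_isUnit hu
    omega
  · intro g h hfgh
    by_contra hc
    push_neg at hc
    obtain ⟨hug, huh⟩ := hc
    have hg : g ≠ 0 := by rintro rfl; rw [zero_mul] at hfgh; exact hf hfgh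
    have hh : h ≠ 0 := by rintro rfl; rw [mul_zero] at hfgh; exact hf hfgh
    have hpq : g.natDegree + h.natDegree = n := by
      rw [← hdeg, hfgh, natDegree_mul hg hh]
    have hp1 : 1 ≤ g.natDegree := by
      by_contra hp
      push_neg at hp
      rw [Nat.lt_one_iff] at hp
      have := eq_C_of_natDegree_eq_zero hp
      exact hug (this ▸ isUnit_C.2 (isUnit_iff_ne_zero.2
        (fun hz => hg (by rw [this, hz, map_zero]))))
    have hq1 : 1 ≤ h.natDegree := by
      by_contra hp
      push_neg at hp
      rw [Nat.lt_one_iff] at hp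
      have := eq_C_of_natDegree_eq_zero hp
      exact huh (this ▸ isUnit_C.2 (isUnit_iff_ne_zero.2
        (fun hz => hh (by rw [this, hz, map_zero]))))
    obtain ⟨a1, a2, A, hga1, hga2, hgle, hgminlt, hgmaxlt, ha1d, ha2d⟩ :=
      exists_extremal v hv0 hn m hg
    obtain ⟨b1, b2, B, hhb1, hhb2, hhle, hhminlt, hhmaxlt, hb1d, hb2d⟩ :=
      exists_extremal v hv0 hn m hh
    rw [hfgh] at hWf0 hWfn hWfmid hWfhigh hWfle
    -- the top point
    have hPmax : W v n m (g * h) (a2 + b2) = ((A + B : ℤ) : WithTop ℤ) := by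
      refine keyPoint v hv0 hvmul hvadd n m g h a2 b2 A B hga2 hhb2 ?_
      intro i j hij hia
      rcases lt_or_gt_of_ne hia with hlt | hgt
      · exact coe_add_lt' (hgle i) (hhmaxlt j (by omega))
      · exact coe_add_lt (hgmaxlt i hgt) (hhle j)
    have hSmax : ∀ k : ℕ, a2 + b2 < k → ((A + B : ℤ) : WithTop ℤ) < W v n m (g * h) k := by
      intro k hk
      refine keyStrict v hv0 hvmul hvadd n m g h k (A + B) ?_
      intro i j hij
      rcases le_or_gt i a2 with hia | hia
      · exact coe_add_lt' (hgle i) (hhmaxlt j (by omega))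
      · exact coe_add_lt (hgmaxlt i hia) (hhle j)
    have hLB : ∀ k : ℕ, ((A + B : ℤ) : WithTop ℤ) ≤ W v n m (g * h) k :=
      fun k => keyLB v hv0 hvmul hvadd n m g h k A B hgle hhle
    -- pin down A + B = n * m
    have hABeq : A + B = (n : ℤ) * m := by
      have h1 := hWfn ▸ hLB n
      have h2 := hPmax ▸ hWfle (a2 + b2)
      rw [WithTop.coe_le_coe] at h1 h2
      omega
    -- pin down a2 + b2 = n
    have habn : a2 + b2 = n := by
      rcases lt_trichotomy (a2 + b2) n with hk | hk | hk
      · have := hWfn ▸ hSmax n hk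
        rw [hABeq] at this
        exact absurd this (lt_irrefl _)
      · exact hk
      · have := hPmax ▸ hWfhigh (a2 + b2) hk
        rw [hABeq] at this
        exact absurd this (lt_irrefl _)
    -- the bottom point
    have hPmin : W v n m (g * h) (a1 + b1) = ((A + B : ℤ) : WithTop ℤ) := by
      refine keyPoint v hv0 hvmul hvadd n m g h a1 b1 A B hga1 hhb1 ?_
      intro i j hij hia
      rcases lt_or_gt_of_ne hia with hlt | hgt
      · exact coe_add_lt (hgminlt i hlt) (hhle j)
      · exact coe_add_lt' (hgle i) (hhminlt j (by omega))
    have hSmin : ∀ k : ℕ, k < a1 + b1 → ((A + B : ℤ) : WithTop ℤ) < W v n m (g * h) k := by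
      intro k hk
      refine keyStrict v hv0 hvmul hvadd n m g h k (A + B) ?_
      intro i j hij
      rcases le_or_gt a1 i with hia | hia
      · exact coe_add_lt' (hgle i) (hhminlt j (by omega))
      · exact coe_add_lt (hgminlt i hia) (hhle j)
    have hab0 : a1 = 0 := by
      by_contra hab
      have hk : 0 < a1 + b1 := by omega
      have := hWf0 ▸ hSmin 0 hk
      rw [hABeq] at this
      exact absurd this (lt_irrefl _)
    subst hab0
    -- extract integer equations
    have hz0top : v (g.coeff 0) ≠ ⊤ := by
      intro hh'
      rw [W, hh', nsmul_top hn, top_add] at hga1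
      exact WithTop.top_ne_coe hga1
    have hz2top : v (g.coeff a2) ≠ ⊤ := by
      intro hh'
      rw [W, hh', nsmul_top hn, top_add] at hga2
      exact WithTop.top_ne_coe hga2
    lift v (g.coeff 0) to ℤ using hz0top with z0 hz0
    lift v (g.coeff a2) to ℤ using hz2top with z2 hz2
    rw [W, ← hz0, nsmul_coe, ← WithTop.coe_add, WithTop.coe_eq_coe] at hga1
    rw [W, ← hz2, nsmul_coe, ← WithTop.coe_add, WithTop.coe_eq_coe] at hga2
    -- n ∣ a2 * m
    have hdvd : (n : ℤ) ∣ m * (a2 : ℤ) := ⟨z0 - z2, by push_cast at hga1 hga2 ⊢; linarith⟩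
    have hdvd2 : (n : ℤ) ∣ (a2 : ℤ) := Int.dvd_of_dvd_mul_right_of_gcd_one hdvd
      (by rw [Int.gcd_comm]; exact hgcd)
    rw [Int.natCast_dvd_natCast] at hdvd2
    -- bounds on a2
    have ha2lt : a2 < n := by omega
    have ha2pos : 1 ≤ a2 := by omega
    exact absurd (Nat.le_of_dvd (by omega) hdvd2) (by omega)
end

section
/- Let K be a field with a surjective valuation v : K → ℤ ∪ {∞}. Let f = a₀ + a₁z + ⋯ + aₙzⁿ ∈ K[z] of degree n satisfy: (i) v(aₙ) = 0; (ii) there is k with 0 ≤ k < n such that v(aₖ)/(n−k) < v(aᵢ)/(n−i) for all 0 ≤ i ≤ n−1, i ≠ k; (iii) gcd(v(aₖ), n−k) = 1. Then in any factorization f = f₁·f₂ in K[z], one of the factors has degree ≤ k. -/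
open Polynomial Finset

section Aux

variable {K : Type*} [Field K]

private lemma aux_vone (v : K → WithTop ℤ)
    (hv0 : ∀ x : K, v x = ⊤ ↔ x = 0)
    (hvmul : ∀ x y : K, v (x * y) = v x + v y) : v (1 : K) = 0 := by
  have h := hvmul 1 1
  rw [mul_one] at h
  have hne : v (1 : K) ≠ ⊤ := fun ht => one_ne_zero ((hv0 1).1 ht)
  lift (v (1 : K)) to ℤ using hne with a ha
  have h2 : a = a + a := by exact_mod_cast h
  have h3 : a = 0 := by omega
  exact_mod_cast h3

private lemma aux_vneg (v : K → WithTop ℤ)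
    (hv0 : ∀ x : K, v x = ⊤ ↔ x = 0)
    (hvmul : ∀ x y : K, v (x * y) = v x + v y) (x : K) : v (-x) = v x := by
  have h1 : v (1 : K) = 0 := aux_vone v hv0 hvmul
  have hm1 : v (-1 : K) = 0 := by
    have h := hvmul (-1) (-1)
    rw [neg_mul_neg, one_mul, h1] at h
    have hne : v (-1 : K) ≠ ⊤ := fun ht => (by norm_num : (-1 : K) ≠ 0) ((hv0 _).1 ht)
    lift (v (-1 : K)) to ℤ using hne with a ha
    have h2 : (0 : ℤ) = a + a := by exact_mod_cast h
    have h3 : a = 0 := by omega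
    exact_mod_cast h3
  calc v (-x) = v ((-1) * x) := by rw [neg_one_mul]
    _ = v (-1 : K) + v x := hvmul _ _
    _ = v x := by rw [hm1, zero_add]

private lemma aux_vadd_eq (v : K → WithTop ℤ)
    (hv0 : ∀ x : K, v x = ⊤ ↔ x = 0)
    (hvmul : ∀ x y : K, v (x * y) = v x + v y)
    (hvadd : ∀ x y : K, min (v x) (v y) ≤ v (x + y))
    {x y : K} (hlt : v x < v y) : v (x + y) = v x := by
  refine le_antisymm ?_ ?_
  · have h2 := hvadd (x + y) (-y)
    rw [add_neg_cancel_right, aux_vneg v hv0 hvmul] at h2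
    rcases min_le_iff.mp h2 with h | h
    · exact h
    · exact absurd h (not_le.mpr hlt)
  · have := hvadd x y
    rwa [min_eq_left hlt.le] at this

private lemma aux_vsum (v : K → WithTop ℤ)
    (hv0 : ∀ x : K, v x = ⊤ ↔ x = 0)
    (hvadd : ∀ x y : K, min (v x) (v y) ≤ v (x + y))
    {ι : Type*} (s : Finset ι) (F : ι → K) :
    (s.inf fun i => v (F i)) ≤ v (∑ i ∈ s, F i) := by
  classical
  induction s using Finset.induction_on with
  | empty => simp [(hv0 0).2 rfl]
  | insert a t hnotmem ih =>
    rw [Finset.sum_insert hnotmem, Finset.inf_insert]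
    exact le_trans (min_le_min le_rfl ih) (hvadd _ _)

end Aux

/-- Jhorar–Khanduja / Weintraub-type bound (value group ℤ): any factorization of f
has a factor of degree ≤ k. -/
theorem stmt_3 {K : Type*} [Field K] (v : K → WithTop ℤ)
    (hv0 : ∀ x : K, v x = ⊤ ↔ x = 0)
    (hvmul : ∀ x y : K, v (x * y) = v x + v y)
    (hvadd : ∀ x y : K, min (v x) (v y) ≤ v (x + y))
    (hvsurj : ∀ g : ℤ, ∃ x : K, v x = (g : WithTop ℤ))
    (f : Polynomial K) (n k : ℕ) (m : ℤ)
    (hdeg : f.natDegree = n) (hkn : k < n)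
    (hvn : v (f.coeff n) = 0)
    (hvk : v (f.coeff k) = (m : WithTop ℤ))
    (hii : ∀ i : ℕ, i < n → i ≠ k →
      ((((n : ℤ) - i) * m : ℤ) : WithTop ℤ) < ((((n : ℤ) - k) : ℤ) : WithTop ℤ) * v (f.coeff i))
    (hgcd : Int.gcd m ((n : ℤ) - k) = 1) :
    ∀ f₁ f₂ : Polynomial K, f = f₁ * f₂ →
      f₁.natDegree ≤ k ∨ f₂.natDegree ≤ k := by
  classical
  intro p q hf
  by_contra hcon
  push_neg at hcon
  obtain ⟨hpk, hqk⟩ := hcon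

  -- basic setup
  have hn0 : 0 < n := Nat.pos_of_ne_zero (by omega)
  have hfne : f ≠ 0 := by
    intro h0
    rw [h0, natDegree_zero] at hdeg
    omega
  have hpne : p ≠ 0 := fun h0 => hfne (by rw [hf, h0, zero_mul])
  have hqne : q ≠ 0 := fun h0 => hfne (by rw [hf, h0, mul_zero])
  set r := p.natDegree with hr
  set s := q.natDegree with hs
  have hrs : r + s = n := by rw [← hdeg, hf, natDegree_mul hpne hqne]
  have hlead : f.coeff n = p.coeff r * q.coeff s := by
    rw [hf, ← hrs]
    exact coeff_mul_degree_add_degree p q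
  -- the weighted valuation
  set c : ℤ := (n : ℤ) - k with hc
  have hcpos : 0 < c := by rw [hc]; omega
  have hcne : (c : WithTop ℤ) ≠ 0 := by exact_mod_cast hcpos.ne'
  set w : K → WithTop ℤ := fun x => ((c : ℤ) : WithTop ℤ) * v x with hwdef
  have hwcoe : ∀ (a : ℤ) (x : K), v x = (a : WithTop ℤ) → w x = ((c * a : ℤ) : WithTop ℤ) := by
    intro a x hx
    simp only [hwdef, hx, ← WithTop.coe_mul]
  have hwtop : ∀ x : K, x = 0 → w x = ⊤ := by
    intro x hx
    simp only [hwdef, hx, (hv0 0).2 rfl, WithTop.mul_top hcne]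
  have hwnetop : ∀ x : K, w x ≠ ⊤ → x ≠ 0 := fun x hw hx => hw (hwtop x hx)
  have hwmono : ∀ x y : K, v x ≤ v y → w x ≤ w y := by
    intro x y hxy
    cases hy : v y with
    | top => simp only [hwdef, hy, WithTop.mul_top hcne, le_top]
    | coe b =>
      rw [hy] at hxy
      cases hx : v x with
      | top => rw [hx] at hxy; exact absurd hxy (by simp)
      | coe a =>
        rw [hx] at hxy
        simp only [hwdef, hx, hy, ← WithTop.coe_mul, WithTop.coe_le_coe] at *
        have : a ≤ b := by exact_mod_cast hxy
        nlinarith [hcpos]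
  have hwltv : ∀ x y : K, w x < w y → v x < v y := by
    intro x y hxy
    by_contra hle
    exact absurd (hwmono y x (not_lt.mp hle)) (not_le.mpr hxy)
  have hwmul : ∀ x y : K, w (x * y) = w x + w y := by
    intro x y
    rcases eq_or_ne x 0 with rfl | hx
    · rw [zero_mul, hwtop 0 rfl, top_add]
    rcases eq_or_ne y 0 with rfl | hy
    · rw [mul_zero, hwtop 0 rfl, add_top]
    have hvx : v x ≠ ⊤ := fun ht => hx ((hv0 x).1 ht)
    have hvy : v y ≠ ⊤ := fun ht => hy ((hv0 y).1 ht)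
    lift (v x) to ℤ using hvx with a ha
    lift (v y) to ℤ using hvy with b hb
    have hxy : v (x * y) = ((a + b : ℤ) : WithTop ℤ) := by
      rw [hvmul, ← ha, ← hb]; push_cast; ring
    rw [hwcoe _ _ hxy, hwcoe a x ha.symm, hwcoe b y hb.symm, ← WithTop.coe_add]
    congr 1
    ring
  -- the weight function T
  set T : Polynomial K → ℕ → WithTop ℤ :=
    fun g i => w (g.coeff i) + ((m * i : ℤ) : WithTop ℤ) with hTdef
  have hTtop : ∀ (g : Polynomial K) (i : ℕ), g.coeff i = 0 → T g i = ⊤ := by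
    intro g i hgi
    simp only [hTdef, hwtop _ hgi, top_add]
  have hpair : ∀ (i j : ℕ),
      T p i + T q j = w (p.coeff i * q.coeff j) + ((m * i + m * j : ℤ) : WithTop ℤ) := by
    intro i j
    simp only [hTdef, hwmul]
    push_cast
    abel
  -- values at k and n
  have hTfk : T f k = ((m * n : ℤ) : WithTop ℤ) := by
    simp only [hTdef, hwcoe m (f.coeff k) hvk, ← WithTop.coe_add]
    congr 1
    rw [hc]; ring
  have hTfn : T f n = ((m * n : ℤ) : WithTop ℤ) := by
    simp only [hTdef, hwdef, hvn, mul_zero, zero_add]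
  have hF1 : ∀ i : ℕ, i < n → i ≠ k → ((m * n : ℤ) : WithTop ℤ) < T f i := by
    intro i hin hik
    have h1 := hii i hin hik
    have h2 := WithTop.add_lt_add_right
      (show ((m * i : ℤ) : WithTop ℤ) ≠ ⊤ from WithTop.coe_ne_top) h1
    have h3 : (((n : ℤ) - i) * m + m * i : ℤ) = m * n := by ring
    calc ((m * n : ℤ) : WithTop ℤ)
        = ((((n : ℤ) - i) * m : ℤ) : WithTop ℤ) + ((m * i : ℤ) : WithTop ℤ) := by
          rw [← WithTop.coe_add, h3]
      _ < ((c : ℤ) : WithTop ℤ) * v (f.coeff i) + ((m * i : ℤ) : WithTop ℤ) := h2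
      _ = T f i := rfl
  -- leading coefficients
  have hvprs : v (p.coeff r) + v (q.coeff s) = 0 := by rw [← hvmul, ← hlead, hvn]
  have hvpr : v (p.coeff r) ≠ ⊤ := by
    intro ht
    rw [ht, top_add] at hvprs
    exact WithTop.top_ne_zero hvprs
  have hvqs : v (q.coeff s) ≠ ⊤ := by
    intro ht
    rw [ht, add_top] at hvprs
    exact WithTop.top_ne_zero hvprs
  obtain ⟨ag, hag⟩ := WithTop.ne_top_iff_exists.mp hvpr
  obtain ⟨ah, hah⟩ := WithTop.ne_top_iff_exists.mp hvqs
  have hagah : ag + ah = 0 := by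
    have : ((ag + ah : ℤ) : WithTop ℤ) = ((0 : ℤ) : WithTop ℤ) := by
      push_cast
      rw [hag, hah, hvprs]
    exact_mod_cast this
  have hTpr : T p r = ((c * ag + m * r : ℤ) : WithTop ℤ) := by
    simp only [hTdef, hwcoe ag (p.coeff r) hag.symm, ← WithTop.coe_add]
  have hTqs : T q s = ((c * ah + m * s : ℤ) : WithTop ℤ) := by
    simp only [hTdef, hwcoe ah (q.coeff s) hah.symm, ← WithTop.coe_add]
  have hTsum : T p r + T q s = ((m * n : ℤ) : WithTop ℤ) := by
    rw [hTpr, hTqs, ← WithTop.coe_add, WithTop.coe_eq_coe]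
    have hrsz : (r : ℤ) + s = n := by exact_mod_cast hrs
    have h2 : c * (ag + ah) = 0 := by rw [hagah, mul_zero]
    linear_combination h2 + m * hrsz
  -- minima
  set A : WithTop ℤ := (Finset.range (r + 1)).inf (T p) with hA
  set B : WithTop ℤ := (Finset.range (s + 1)).inf (T q) with hB
  have hAle : ∀ i : ℕ, A ≤ T p i := by
    intro i
    by_cases hi : i ≤ r
    · exact Finset.inf_le (Finset.mem_range.mpr (by omega))
    · rw [hTtop p i (coeff_eq_zero_of_natDegree_lt (by omega))]
      exact le_top
  have hBle : ∀ j : ℕ, B ≤ T q j := by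
    intro j
    by_cases hj : j ≤ s
    · exact Finset.inf_le (Finset.mem_range.mpr (by omega))
    · rw [hTtop q j (coeff_eq_zero_of_natDegree_lt (by omega))]
      exact le_top
  have hAne : A ≠ ⊤ := by
    intro ht
    have := hAle r
    rw [ht, top_le_iff, hTpr] at this
    exact WithTop.coe_ne_top this
  have hBne : B ≠ ⊤ := by
    intro ht
    have := hBle s
    rw [ht, top_le_iff, hTqs] at this
    exact WithTop.coe_ne_top this
  -- minimal achieving indices
  set Sp : Finset ℕ := (Finset.range (r + 1)).filter (fun i => T p i = A) with hSp
  set Sq : Finset ℕ := (Finset.range (s + 1)).filter (fun j => T q j = B) with hSq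
  have hSpne : Sp.Nonempty := by
    obtain ⟨i, hi, hieq⟩ := Finset.exists_mem_eq_inf (Finset.range (r + 1))
      ⟨0, Finset.mem_range.mpr (by omega)⟩ (T p)
    exact ⟨i, Finset.mem_filter.mpr ⟨hi, hieq.symm⟩⟩
  have hSqne : Sq.Nonempty := by
    obtain ⟨j, hj, hjeq⟩ := Finset.exists_mem_eq_inf (Finset.range (s + 1))
      ⟨0, Finset.mem_range.mpr (by omega)⟩ (T q)
    exact ⟨j, Finset.mem_filter.mpr ⟨hj, hjeq.symm⟩⟩
  set i₁ : ℕ := Sp.min' hSpne with hi₁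
  set j₁ : ℕ := Sq.min' hSqne with hj₁
  have hi₁mem := Finset.min'_mem Sp hSpne
  have hj₁mem := Finset.min'_mem Sq hSqne
  have hi₁r : i₁ ≤ r := by
    have := (Finset.mem_filter.mp hi₁mem).1
    rw [Finset.mem_range] at this
    omega
  have hj₁s : j₁ ≤ s := by
    have := (Finset.mem_filter.mp hj₁mem).1
    rw [Finset.mem_range] at this
    omega
  have hTi₁ : T p i₁ = A := (Finset.mem_filter.mp hi₁mem).2
  have hTj₁ : T q j₁ = B := (Finset.mem_filter.mp hj₁mem).2
  have hi₁min : ∀ i : ℕ, i < i₁ → A < T p i := by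
    intro i hi
    refine lt_of_le_of_ne (hAle i) fun heq => ?_
    have : i ∈ Sp := Finset.mem_filter.mpr ⟨Finset.mem_range.mpr (by omega), heq.symm⟩
    exact absurd (Finset.min'_le Sp i this) (by omega)
  have hj₁min : ∀ j : ℕ, j < j₁ → B < T q j := by
    intro j hj
    refine lt_of_le_of_ne (hBle j) fun heq => ?_
    have : j ∈ Sq := Finset.mem_filter.mpr ⟨Finset.mem_range.mpr (by omega), heq.symm⟩
    exact absurd (Finset.min'_le Sq j this) (by omega)
  -- G1: A + B ≤ T f n
  have hABn : A + B ≤ ((m * n : ℤ) : WithTop ℤ) := by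
    obtain ⟨x₀, hx₀mem, hx₀⟩ := Finset.exists_mem_eq_inf (antidiagonal n)
      ⟨(0, n), by simp⟩ (fun x : ℕ × ℕ => v (p.coeff x.1 * q.coeff x.2))
    have hx₀sum : x₀.1 + x₀.2 = n := Finset.HasAntidiagonal.mem_antidiagonal.mp hx₀mem
    have hvc : v (p.coeff x₀.1 * q.coeff x₀.2) ≤ v (f.coeff n) := by
      rw [hf, coeff_mul, ← hx₀]
      exact aux_vsum v hv0 hvadd _ _
    calc A + B ≤ T p x₀.1 + T q x₀.2 := add_le_add (hAle _) (hBle _)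
      _ = w (p.coeff x₀.1 * q.coeff x₀.2) + ((m * x₀.1 + m * x₀.2 : ℤ) : WithTop ℤ) :=
        hpair _ _
      _ ≤ w (f.coeff n) + ((m * x₀.1 + m * x₀.2 : ℤ) : WithTop ℤ) :=
        add_le_add_left (hwmono _ _ hvc) _
      _ = T f n := by
        have hmx : (m * x₀.1 + m * x₀.2 : ℤ) = m * (n : ℤ) := by
          have h' : (x₀.1 : ℤ) + x₀.2 = n := by exact_mod_cast hx₀sum
          linear_combination m * h'
        simp only [hTdef, hmx]
      _ = ((m * n : ℤ) : WithTop ℤ) := hTfn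
  -- G2: A + B = T f (i₁ + j₁)
  have hstrict : ∀ x : ℕ × ℕ, x ∈ (antidiagonal (i₁ + j₁)).erase (i₁, j₁) →
      v (p.coeff i₁ * q.coeff j₁) < v (p.coeff x.1 * q.coeff x.2) := by
    intro x hx
    obtain ⟨hxne, hxmem⟩ := Finset.mem_erase.mp hx
    have hxsum : x.1 + x.2 = i₁ + j₁ := Finset.HasAntidiagonal.mem_antidiagonal.mp hxmem
    have hlt : A + B < T p x.1 + T q x.2 := by
      have hx12 : x.1 < i₁ ∨ x.2 < j₁ := by
        have hne2 : x.1 ≠ i₁ ∨ x.2 ≠ j₁ := by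
          by_contra hcc
          push_neg at hcc
          exact hxne (by rw [Prod.ext_iff]; exact ⟨hcc.1, hcc.2⟩)
        omega
      rcases hx12 with h1 | h2
      · calc A + B < T p x.1 + B := WithTop.add_lt_add_right hBne (hi₁min x.1 h1)
          _ ≤ T p x.1 + T q x.2 := add_le_add_right (hBle _) _
      · calc A + B < A + T q x.2 := WithTop.add_lt_add_left hAne (hj₁min x.2 h2)
          _ ≤ T p x.1 + T q x.2 := add_le_add (hAle _) le_rfl
    rw [← hTi₁, ← hTj₁] at hlt
    rw [hpair, hpair] at hlt
    have hxsum' : (m * x.1 + m * x.2 : ℤ) = (m * i₁ + m * j₁ : ℤ) := by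
      have h' : (x.1 : ℤ) + x.2 = (i₁ : ℤ) + j₁ := by exact_mod_cast hxsum
      linear_combination m * h'
    rw [hxsum'] at hlt
    have hw : w (p.coeff i₁ * q.coeff j₁) < w (p.coeff x.1 * q.coeff x.2) :=
      (WithTop.add_lt_add_iff_right WithTop.coe_ne_top).mp hlt
    exact hwltv _ _ hw
  have hvmain : v (p.coeff i₁ * q.coeff j₁) ≠ ⊤ := by
    intro ht
    have hw : w (p.coeff i₁ * q.coeff j₁) = ⊤ :=
      hwtop _ ((hv0 _).1 ht)
    have : T p i₁ + T q j₁ = ⊤ := by rw [hpair, hw, top_add]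
    rw [hTi₁, hTj₁] at this
    exact (WithTop.add_ne_top.mpr ⟨hAne, hBne⟩) this
  have hG2 : T f (i₁ + j₁) = A + B := by
    have hcoeff : v (f.coeff (i₁ + j₁)) = v (p.coeff i₁ * q.coeff j₁) := by
      rw [hf, coeff_mul]
      rw [← Finset.add_sum_erase _ _ (Finset.HasAntidiagonal.mem_antidiagonal.mpr rfl :
        ((i₁, j₁) : ℕ × ℕ) ∈ antidiagonal (i₁ + j₁))]
      rcases Finset.eq_empty_or_nonempty ((antidiagonal (i₁ + j₁)).erase (i₁, j₁)) with he | hne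
      · rw [he, Finset.sum_empty, add_zero]
      · refine aux_vadd_eq v hv0 hvmul hvadd ?_
        obtain ⟨y₀, hy₀mem, hy₀⟩ := Finset.exists_mem_eq_inf _ hne
          (fun x : ℕ × ℕ => v (p.coeff x.1 * q.coeff x.2))
        calc v (p.coeff i₁ * q.coeff j₁)
            < v (p.coeff y₀.1 * q.coeff y₀.2) := hstrict y₀ hy₀mem
          _ = _ := hy₀.symm
          _ ≤ v (∑ x ∈ (antidiagonal (i₁ + j₁)).erase (i₁, j₁),
              p.coeff x.1 * q.coeff x.2) := aux_vsum v hv0 hvadd _ _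
    have : T f (i₁ + j₁) = T p i₁ + T q j₁ := by
      rw [hpair]
      simp only [hTdef]
      have hweq : w (f.coeff (i₁ + j₁)) = w (p.coeff i₁ * q.coeff j₁) := by
        simp only [hwdef]
        rw [hcoeff]
      rw [hweq]
      congr 1
      rw [WithTop.coe_eq_coe]
      push_cast
      ring
    rw [this, hTi₁, hTj₁]
  -- i₁ + j₁ ∈ {k, n}
  have hABne : A + B ≠ ⊤ := WithTop.add_ne_top.mpr ⟨hAne, hBne⟩
  have htn : i₁ + j₁ ≤ n := by
    by_contra hgt
    have : T f (i₁ + j₁) = ⊤ :=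
      hTtop f _ (coeff_eq_zero_of_natDegree_lt (by omega))
    rw [hG2] at this
    exact hABne this
  have hkey : i₁ + j₁ = k ∨ i₁ + j₁ = n := by
    by_contra hno
    push_neg at hno
    have h1 : i₁ + j₁ < n := lt_of_le_of_ne htn hno.2
    have h2 := hF1 (i₁ + j₁) h1 hno.1
    rw [hG2] at h2
    exact absurd hABn (not_le.mpr h2)
  rcases hkey with hK | hN
  · -- case i₁ + j₁ = k : gcd contradiction
    have hABk : A + B = ((m * n : ℤ) : WithTop ℤ) := by rw [← hG2, hK, hTfk]
    -- A = T p r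
    obtain ⟨a, haA⟩ := WithTop.ne_top_iff_exists.mp hAne
    obtain ⟨b, hbB⟩ := WithTop.ne_top_iff_exists.mp hBne
    have hab : a + b = m * n := by
      rw [← haA, ← hbB, ← WithTop.coe_add, WithTop.coe_eq_coe] at hABk
      exact hABk
    have haTpr : a ≤ c * ag + m * r := by
      have := hAle r
      rw [← haA, hTpr, WithTop.coe_le_coe] at this
      exact this
    have hbTqs : b ≤ c * ah + m * s := by
      have := hBle s
      rw [← hbB, hTqs, WithTop.coe_le_coe] at this
      exact this
    have hsum : (c * ag + m * r) + (c * ah + m * s) = m * n := by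
      rw [← WithTop.coe_eq_coe (α := ℤ), WithTop.coe_add, ← hTpr, ← hTqs, hTsum]
    have haeq : a = c * ag + m * r := by omega
    -- A = T p i₁, with coefficient nonzero
    have hpi₁ne : p.coeff i₁ ≠ 0 := by
      intro h0
      have := hTtop p i₁ h0
      rw [hTi₁, ← haA] at this
      exact WithTop.coe_ne_top this
    have hvpi₁ : v (p.coeff i₁) ≠ ⊤ := fun ht => hpi₁ne ((hv0 _).1 ht)
    obtain ⟨ai, hai⟩ := WithTop.ne_top_iff_exists.mp hvpi₁
    have hTpi₁ : ((c * ai + m * i₁ : ℤ) : WithTop ℤ) = (a : WithTop ℤ) := by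
      rw [haA]
      rw [← hTi₁]
      simp only [hTdef, hwcoe ai (p.coeff i₁) hai.symm, ← WithTop.coe_add]
    have heq : c * ai + m * i₁ = c * ag + m * r := by
      have := WithTop.coe_eq_coe.mp hTpi₁
      omega
    -- divisibility
    have hdvd : c ∣ m * ((r : ℤ) - i₁) := ⟨ai - ag, by linarith⟩
    have hcop : IsCoprime c m := (Int.isCoprime_iff_gcd_eq_one.mpr hgcd).symm
    have hdvd2 : c ∣ ((r : ℤ) - i₁) := hcop.dvd_of_dvd_mul_left hdvd
    have hi₁k : i₁ ≤ k := by omega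
    have hlow : 0 < (r : ℤ) - i₁ := by
      have : i₁ < r := lt_of_le_of_lt hi₁k hpk
      omega
    have hupp : (r : ℤ) - i₁ < c := by
      have hj₁lt : j₁ < s := lt_of_le_of_lt (by omega : j₁ ≤ k) hqk
      rw [hc]
      omega
    have := Int.le_of_dvd hlow hdvd2
    omega
  · -- case i₁ + j₁ = n : forces i₁ = r, j₁ = s, contradiction at k
    have hi₁r' : i₁ = r := by omega
    have hj₁s' : j₁ = s := by omega
    have hABn' : A + B = ((m * n : ℤ) : WithTop ℤ) := by rw [← hG2, hN, hTfn]
    -- every term of coeff k is strictly above A + B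
    obtain ⟨y₀, hy₀mem, hy₀⟩ := Finset.exists_mem_eq_inf (antidiagonal k)
      ⟨(0, k), by simp⟩ (fun x : ℕ × ℕ => v (p.coeff x.1 * q.coeff x.2))
    have hy₀sum : y₀.1 + y₀.2 = k := Finset.HasAntidiagonal.mem_antidiagonal.mp hy₀mem
    have h1 : A + B < T p y₀.1 + T q y₀.2 := by
      have hy1 : y₀.1 < i₁ := by omega
      calc A + B < T p y₀.1 + B := WithTop.add_lt_add_right hBne (hi₁min y₀.1 hy1)
        _ ≤ T p y₀.1 + T q y₀.2 := add_le_add_right (hBle _) _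
    have h2 : T p y₀.1 + T q y₀.2 ≤ T f k := by
      have hvc : v (p.coeff y₀.1 * q.coeff y₀.2) ≤ v (f.coeff k) := by
        rw [hf, coeff_mul, ← hy₀]
        exact aux_vsum v hv0 hvadd _ _
      calc T p y₀.1 + T q y₀.2
          = w (p.coeff y₀.1 * q.coeff y₀.2) + ((m * y₀.1 + m * y₀.2 : ℤ) : WithTop ℤ) :=
            hpair _ _
        _ ≤ w (f.coeff k) + ((m * y₀.1 + m * y₀.2 : ℤ) : WithTop ℤ) :=
            add_le_add_left (hwmono _ _ hvc) _
        _ = T f k := by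
            have hmy : (m * y₀.1 + m * y₀.2 : ℤ) = m * (k : ℤ) := by
              have h' : (y₀.1 : ℤ) + y₀.2 = k := by exact_mod_cast hy₀sum
              linear_combination m * h'
            simp only [hTdef, hmy]
    have h3 : A + B < T f k := lt_of_lt_of_le h1 h2
    rw [hABn', hTfk] at h3
    exact lt_irrefl _ h3
end

section
/- Let Γ be a totally ordered abelian group, G_v ≤ Γ a subgroup, γ ∈ Γ, and suppose m ≥ 1 is an integer with m·γ ∈ G_v, and for every divisor d > 1 of m one has m·γ ∉ d·G_v. Then for every integer i with 1 ≤ i < m, i·γ ∉ G_v. -/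
/-- Key group-theoretic lemma: if m·γ ∈ G_v but m·γ ∉ d·G_v for every divisor d > 1 of m,
then i·γ ∉ G_v for 1 ≤ i < m. -/
theorem stmt_4 {Γ : Type*} [AddCommGroup Γ] [LinearOrder Γ] [IsOrderedAddMonoid Γ] (G : AddSubgroup Γ)
    (γ : Γ) (m : ℕ) (hm : 1 ≤ m) (hmγ : m • γ ∈ G)
    (hdiv : ∀ d : ℕ, 1 < d → d ∣ m → ¬ ∃ g ∈ G, m • γ = d • g) :
    ∀ i : ℕ, 1 ≤ i → i < m → i • γ ∉ G := by
  intro i hi1 him hiG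
  set d := Nat.gcd i m with hd
  have hdpos : 0 < d := Nat.gcd_pos_of_pos_left m (by omega)
  have hddvd : d ∣ m := Nat.gcd_dvd_right i m
  have hdle : d ≤ i := Nat.le_of_dvd (by omega) (Nat.gcd_dvd_left i m)
  -- d • γ ∈ G via Bezout
  have hbez : (d : ℤ) = i * Nat.gcdA i m + m * Nat.gcdB i m := Nat.gcd_eq_gcd_ab i m
  have hdG : (d : ℤ) • γ ∈ G := by
    rw [hbez, add_smul, mul_comm (i : ℤ), mul_comm (m : ℤ), mul_smul, mul_smul]
    exact G.add_mem (G.zsmul_mem (by simpa using hiG) _) (G.zsmul_mem (by simpa using hmγ) _)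
  have hdG' : d • γ ∈ G := by simpa using hdG
  -- m/d > 1
  have hmd : m / d * d = m := Nat.div_mul_cancel hddvd
  have hq : 1 < m / d := by
    by_contra h
    push_neg at h
    have : m / d * d ≤ 1 * d := Nat.mul_le_mul_right d h
    omega
  refine hdiv (m / d) hq (Nat.div_dvd_of_dvd hddvd) ⟨d • γ, hdG', ?_⟩
  rw [← smul_assoc, smul_eq_mul, Nat.div_mul_cancel hddvd]
end

section
/- Let K be a field with valuation v : K → Γ ∪ {∞}, γ an element of an ordered abelian group containing the value group, and w the Gauss valuation on K[z] given by w(Σ αᵢ zⁱ) = minᵢ{v(αᵢ) + iγ}. For nonzero f, g ∈ K[z], let k_f, k_g denote the smallest indices at which the minimum defining w(f), w(g) respectively is attained. Then the smallest index at which the minimum defining w(fg) is attained equals k_f + k_g. -/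
open Polynomial Finset

section AuxGauss

variable {K : Type*} {Γ' : Type*} [Field K] [AddCommGroup Γ'] [LinearOrder Γ'] [IsOrderedAddMonoid Γ']
  {u : K → WithTop Γ'}

lemma auxGauss_one (u0 : ∀ x : K, u x = ⊤ ↔ x = 0)
    (umul : ∀ x y : K, u (x * y) = u x + u y) : u (1 : K) = 0 := by
  have h := umul 1 1
  rw [mul_one] at h
  have h1t : u (1 : K) ≠ ⊤ := by simp [u0]
  lift u (1 : K) to Γ' using h1t with a ha
  rw [← WithTop.coe_add, WithTop.coe_inj] at h
  have : a = 0 := left_eq_add.mp h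
  exact_mod_cast congrArg (fun b : Γ' => (b : WithTop Γ')) this

lemma auxGauss_neg (u0 : ∀ x : K, u x = ⊤ ↔ x = 0)
    (umul : ∀ x y : K, u (x * y) = u x + u y) (x : K) : u (-x) = u x := by
  have hm1 : u (-1 : K) = 0 := by
    have h := umul (-1) (-1)
    rw [neg_mul_neg, one_mul, auxGauss_one u0 umul] at h
    have ht : u (-1 : K) ≠ ⊤ := by
      intro h'; rw [h'] at h; simp at h
    lift u (-1 : K) to Γ' using ht with a ha
    rw [← WithTop.coe_add] at h
    have h2 : a + a = 0 := by exact_mod_cast h.symm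
    have h3 : a = 0 := by
      by_contra hne
      rcases lt_or_gt_of_ne hne with h1 | h1
      · have := add_lt_add h1 h1
        rw [h2, add_zero] at this
        exact absurd this (lt_irrefl 0)
      · have := add_lt_add h1 h1
        rw [h2, add_zero] at this
        exact absurd this (lt_irrefl 0)
    exact_mod_cast congrArg (fun b : Γ' => (b : WithTop Γ')) h3
  rw [← neg_one_mul, umul, hm1, zero_add]

lemma auxGauss_add_left (u0 : ∀ x : K, u x = ⊤ ↔ x = 0)
    (umul : ∀ x y : K, u (x * y) = u x + u y)
    (uadd : ∀ x y : K, min (u x) (u y) ≤ u (x + y))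
    {a b : K} (h : u a < u b) : u (a + b) = u a := by
  refine le_antisymm ?_ ((min_eq_left h.le) ▸ uadd a b)
  by_contra hlt
  push_neg at hlt
  have h2 : u ((a + b) + (-b)) = u a := congrArg u (by ring)
  have h3 := uadd (a + b) (-b)
  rw [h2, auxGauss_neg u0 umul] at h3
  exact absurd h3 (not_le.mpr (lt_min hlt h))

lemma auxGauss_sum_le (u0 : ∀ x : K, u x = ⊤ ↔ x = 0)
    (uadd : ∀ x y : K, min (u x) (u y) ≤ u (x + y))
    {α : Type*} (s : Finset α) (F : α → K) (c d : WithTop Γ')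
    (h : ∀ j ∈ s, c ≤ u (F j) + d) :
    c ≤ u (∑ j ∈ s, F j) + d := by
  induction s using Finset.cons_induction with
  | empty => simp [(u0 0).mpr rfl]
  | cons a s ha ih =>
    rw [Finset.sum_cons]
    have h1 := h a (Finset.mem_cons_self a s)
    have h2 : c ≤ u (∑ j ∈ s, F j) + d := ih (fun j hj => h j (Finset.mem_cons.mpr (Or.inr hj)))
    have h3 : c ≤ min (u (F a)) (u (∑ j ∈ s, F j)) + d := by
      rcases le_total (u (F a)) (u (∑ j ∈ s, F j)) with hle | hle
      · rwa [min_eq_left hle]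
      · rwa [min_eq_right hle]
    exact h3.trans (add_le_add_left (uadd _ _) d)

lemma auxGauss_sum_lt (u0 : ∀ x : K, u x = ⊤ ↔ x = 0)
    (uadd : ∀ x y : K, min (u x) (u y) ≤ u (x + y))
    {α : Type*} (s : Finset α) (F : α → K) (c d : WithTop Γ')
    (hc : c ≠ ⊤)
    (h : ∀ j ∈ s, c < u (F j) + d) :
    c < u (∑ j ∈ s, F j) + d := by
  induction s using Finset.cons_induction with
  | empty =>
    have : u (∑ j ∈ (∅ : Finset α), F j) = ⊤ := by simp [(u0 0).mpr rfl]
    rw [this, top_add]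
    exact lt_top_iff_ne_top.mpr hc
  | cons a s ha ih =>
    rw [Finset.sum_cons]
    have h1 := h a (Finset.mem_cons_self a s)
    have h2 : c < u (∑ j ∈ s, F j) + d := ih (fun j hj => h j (Finset.mem_cons.mpr (Or.inr hj)))
    have h3 : c < min (u (F a)) (u (∑ j ∈ s, F j)) + d := by
      rcases le_total (u (F a)) (u (∑ j ∈ s, F j)) with hle | hle
      · rwa [min_eq_left hle]
      · rwa [min_eq_right hle]
    exact h3.trans_le (add_le_add_left (uadd _ _) d)

lemma auxGauss_sum_eq (u0 : ∀ x : K, u x = ⊤ ↔ x = 0)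
    (umul : ∀ x y : K, u (x * y) = u x + u y)
    (uadd : ∀ x y : K, min (u x) (u y) ≤ u (x + y))
    {α : Type*} [DecidableEq α] {s : Finset α} {F : α → K} {j0 : α} (hj0 : j0 ∈ s)
    (hne : u (F j0) ≠ ⊤)
    (hlt : ∀ j ∈ s, j ≠ j0 → u (F j0) < u (F j)) :
    u (∑ j ∈ s, F j) = u (F j0) := by
  rw [← Finset.add_sum_erase s F hj0]
  apply auxGauss_add_left u0 umul uadd
  have := auxGauss_sum_lt u0 uadd (s.erase j0) F (u (F j0)) 0 hne (fun j hj => by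
    rw [add_zero]
    exact hlt j (Finset.mem_of_mem_erase hj) (Finset.ne_of_mem_erase hj))
  rwa [add_zero] at this

end AuxGauss

/-- The smallest index attaining the minimum defining the Gauss valuation is additive:
for nonzero f, g, the initial index of f·g is k_f + k_g. -/
theorem stmt_6 {K Γ Γ' : Type*} [Field K] [AddCommGroup Γ] [LinearOrder Γ] [IsOrderedAddMonoid Γ]
    [AddCommGroup Γ'] [LinearOrder Γ'] [IsOrderedAddMonoid Γ'] (ι : Γ →+ Γ')
    (hι : ∀ a b : Γ, a ≤ b ↔ ι a ≤ ι b)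
    (v : K → WithTop Γ)
    (hv0 : ∀ x : K, v x = ⊤ ↔ x = 0)
    (hvmul : ∀ x y : K, v (x * y) = v x + v y)
    (hvadd : ∀ x y : K, min (v x) (v y) ≤ v (x + y))
    (γ : Γ') (w : Polynomial K → WithTop Γ')
    (hw : ∀ f : Polynomial K, w f =
      (Finset.range (f.natDegree + 1)).inf
        (fun i => (v (f.coeff i)).map ι + ((i • γ : Γ') : WithTop Γ')))
    (f g : Polynomial K) (hf : f ≠ 0) (hg : g ≠ 0) (kf kg : ℕ)
    (hkf : IsLeast {i : ℕ | (v (f.coeff i)).map ι + ((i • γ : Γ') : WithTop Γ') = w f} kf)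
    (hkg : IsLeast {i : ℕ | (v (g.coeff i)).map ι + ((i • γ : Γ') : WithTop Γ') = w g} kg) :
    IsLeast {i : ℕ | (v ((f * g).coeff i)).map ι + ((i • γ : Γ') : WithTop Γ') = w (f * g)}
      (kf + kg) := by
  -- basic properties of u := (v ·).map ι
  have u0 : ∀ x : K, (v x).map ι = ⊤ ↔ x = 0 := by
    intro x; rw [WithTop.map_eq_top_iff, hv0]
  have mapadd : ∀ a b : WithTop Γ, (a + b).map ι = a.map ι + b.map ι := by
    intro a b
    cases a with
    | top => simp
    | coe a =>
      cases b with
      | top => simp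
      | coe b => simp [← WithTop.coe_add, map_add]
  have umul : ∀ x y : K, (v (x * y)).map ι = (v x).map ι + (v y).map ι := by
    intro x y; rw [hvmul, mapadd]
  have umono : ∀ a b : WithTop Γ, a ≤ b ↔ a.map ι ≤ b.map ι := by
    intro a b
    cases a with
    | top =>
      cases b with
      | top => simp
      | coe b => simp
    | coe a =>
      cases b with
      | top => simp
      | coe b => simpa using hι a b
  have uadd : ∀ x y : K, min ((v x).map ι) ((v y).map ι) ≤ (v (x + y)).map ι := by
    intro x y
    have h := (umono _ _).mp (hvadd x y)
    have hm : min ((v x).map ι) ((v y).map ι) = (min (v x) (v y)).map ι := by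
      rcases le_total (v x) (v y) with hle | hle
      · rw [min_eq_left hle, min_eq_left ((umono _ _).mp hle)]
      · rw [min_eq_right hle, min_eq_right ((umono _ _).mp hle)]
    rw [hm]; exact h
  -- w h ≤ value at any index
  have hwle : ∀ (h : Polynomial K) (i : ℕ),
      w h ≤ (v (h.coeff i)).map ι + ((i • γ : Γ') : WithTop Γ') := by
    intro h i
    by_cases hi : i < h.natDegree + 1
    · rw [hw]; exact Finset.inf_le (Finset.mem_range.mpr hi)
    · have hc : h.coeff i = 0 := coeff_eq_zero_of_natDegree_lt (by omega)
      rw [hc, (u0 0).mpr rfl, top_add]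
      exact le_top
  have hwfne : w f ≠ ⊤ := by
    intro h
    have h1 := hwle f f.natDegree
    rw [h, top_le_iff] at h1
    rcases WithTop.add_eq_top.mp h1 with h3 | h3
    · exact hf (Polynomial.leadingCoeff_eq_zero.mp (f.coeff_natDegree ▸ (u0 _).mp h3))
    · exact WithTop.coe_ne_top h3
  have hwgne : w g ≠ ⊤ := by
    intro h
    have h1 := hwle g g.natDegree
    rw [h, top_le_iff] at h1
    rcases WithTop.add_eq_top.mp h1 with h3 | h3
    · exact hg (Polynomial.leadingCoeff_eq_zero.mp (g.coeff_natDegree ▸ (u0 _).mp h3))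
    · exact WithTop.coe_ne_top h3
  have hfkf : f.coeff kf ≠ 0 := by
    intro h
    apply hwfne
    rw [← hkf.1, h, (u0 0).mpr rfl, top_add]
  have hgkg : g.coeff kg ≠ 0 := by
    intro h
    apply hwgne
    rw [← hkg.1, h, (u0 0).mpr rfl, top_add]
  have hstrf : ∀ i < kf, w f < (v (f.coeff i)).map ι + ((i • γ : Γ') : WithTop Γ') := by
    intro i hi
    refine lt_of_le_of_ne (hwle f i) ?_
    intro h
    exact absurd (hkf.2 h.symm) (by omega)
  have hstrg : ∀ i < kg, w g < (v (g.coeff i)).map ι + ((i • γ : Γ') : WithTop Γ') := by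
    intro i hi
    refine lt_of_le_of_ne (hwle g i) ?_
    intro h
    exact absurd (hkg.2 h.symm) (by omega)
  have hterm : ∀ p q : ℕ,
      (v (f.coeff p * g.coeff q)).map ι + (((p + q) • γ : Γ') : WithTop Γ')
        = ((v (f.coeff p)).map ι + ((p • γ : Γ') : WithTop Γ'))
          + ((v (g.coeff q)).map ι + ((q • γ : Γ') : WithTop Γ')) := by
    intro p q
    rw [umul, add_nsmul, WithTop.coe_add]
    abel
  have hmainle : ∀ p q : ℕ,
      w f + w g ≤ (v (f.coeff p * g.coeff q)).map ι + (((p + q) • γ : Γ') : WithTop Γ') := by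
    intro p q
    rw [hterm]
    exact add_le_add (hwle f p) (hwle g q)
  have hmain : ∀ p q : ℕ, p < kf ∨ q < kg →
      w f + w g < (v (f.coeff p * g.coeff q)).map ι + (((p + q) • γ : Γ') : WithTop Γ') := by
    intro p q hpq
    rw [hterm]
    rcases hpq with h | h
    · exact WithTop.add_lt_add_of_lt_of_le hwgne (hstrf p h) (hwle g q)
    · rw [add_comm (w f), add_comm ((v (f.coeff p)).map ι + _)]
      exact WithTop.add_lt_add_of_lt_of_le hwfne (hstrg q h) (hwle f p)
  -- Step A : value at kf + kg
  have hA : (v ((f * g).coeff (kf + kg))).map ι = (v (f.coeff kf * g.coeff kg)).map ι := by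
    rw [Polynomial.coeff_mul]
    refine auxGauss_sum_eq u0 umul uadd (j0 := ((kf, kg) : ℕ × ℕ))
      (Finset.HasAntidiagonal.mem_antidiagonal.mpr rfl) ?_ ?_
    · rw [Ne, u0]
      exact mul_ne_zero hfkf hgkg
    · intro x hx hxne
      have hsum : x.1 + x.2 = kf + kg := Finset.HasAntidiagonal.mem_antidiagonal.mp hx
      have hor : x.1 < kf ∨ x.2 < kg := by
        by_contra hcon
        push_neg at hcon
        have h1 : x.1 = kf := by omega
        have h2 : x.2 = kg := by omega
        exact hxne (Prod.ext h1 h2)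
      have h1 := hmain x.1 x.2 hor
      rw [hsum] at h1
      have h2 : (v (f.coeff kf * g.coeff kg)).map ι + (((kf + kg) • γ : Γ') : WithTop Γ')
          = w f + w g := by
        rw [hterm, hkf.1, hkg.1]
      rw [← h2] at h1
      exact (WithTop.add_lt_add_iff_right (WithTop.coe_ne_top)).mp h1
  have hAval : (v ((f * g).coeff (kf + kg))).map ι + (((kf + kg) • γ : Γ') : WithTop Γ')
      = w f + w g := by
    rw [hA, hterm, hkf.1, hkg.1]
  -- Step B : lower bound for all indices
  have hB : ∀ i : ℕ,
      w f + w g ≤ (v ((f * g).coeff i)).map ι + ((i • γ : Γ') : WithTop Γ') := by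
    intro i
    rw [Polynomial.coeff_mul]
    refine auxGauss_sum_le u0 uadd _ _ _ _ ?_
    intro x hx
    have hsum : x.1 + x.2 = i := Finset.HasAntidiagonal.mem_antidiagonal.mp hx
    have h1 := hmainle x.1 x.2
    rwa [hsum] at h1
  have hwfg : w (f * g) = w f + w g := by
    refine le_antisymm ?_ ?_
    · rw [← hAval]
      exact hwle (f * g) (kf + kg)
    · rw [hw (f * g)]
      exact Finset.le_inf (fun i _ => hB i)
  have hCstrict : ∀ i < kf + kg,
      w f + w g < (v ((f * g).coeff i)).map ι + ((i • γ : Γ') : WithTop Γ') := by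
    intro i hi
    rw [Polynomial.coeff_mul]
    refine auxGauss_sum_lt u0 uadd _ _ _ _ (WithTop.add_ne_top.mpr ⟨hwfne, hwgne⟩) ?_
    intro x hx
    have hsum : x.1 + x.2 = i := Finset.HasAntidiagonal.mem_antidiagonal.mp hx
    have hor : x.1 < kf ∨ x.2 < kg := by omega
    have h1 := hmain x.1 x.2 hor
    rwa [hsum] at h1
  constructor
  · show (v ((f * g).coeff (kf + kg))).map ι + (((kf + kg) • γ : Γ') : WithTop Γ') = w (f * g)
    rw [hwfg]
    exact hAval
  · intro i hi
    by_contra hlt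
    push_neg at hlt
    have h1 := hCstrict i (by omega)
    rw [← hwfg] at h1
    have h2 : (v ((f * g).coeff i)).map ι + ((i • γ : Γ') : WithTop Γ') = w (f * g) := hi
    rw [h2] at h1
    exact lt_irrefl _ h1
end

section
/- Let K be a field with a surjective valuation v : K → ℤ ∪ {∞} and let f = a₀ + a₁z + ⋯ + aₙzⁿ ∈ K[z] of degree n with v(aₙ) = 0 and v(a₀)/n ≤ v(aᵢ)/(n−i) for all 1 ≤ i ≤ n−1. Then every irreducible factor of f in K[z] has degree at least n / gcd(v(a₀), n). -/
open Polynomial Finset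

/-! Auxiliary machinery: a "scaled Gauss valuation" argument for the single-segment
Newton polygon bound. -/

namespace Stmt8Aux

/-- Multiply a `WithTop ℤ` value by the natural number `n`. -/
def sc (n : ℕ) (x : WithTop ℤ) : WithTop ℤ := x.map (fun a => (n : ℤ) * a)

@[simp] lemma sc_top (n : ℕ) : sc n (⊤ : WithTop ℤ) = ⊤ := rfl

@[simp] lemma sc_coe (n : ℕ) (a : ℤ) : sc n (a : WithTop ℤ) = (((n : ℤ) * a : ℤ) : WithTop ℤ) := rfl

lemma sc_add (n : ℕ) (x y : WithTop ℤ) : sc n (x + y) = sc n x + sc n y := by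
  cases x with
  | top => simp [sc]
  | coe a =>
    cases y with
    | top => simp [sc]
    | coe b =>
      rw [← WithTop.coe_add]
      simp only [sc, WithTop.map_coe]
      rw [mul_add, WithTop.coe_add]

lemma sc_mono (n : ℕ) : Monotone (sc n) := by
  intro a b hab
  cases b with
  | top => exact le_top
  | coe b =>
    cases a with
    | top => exact absurd hab (by simp)
    | coe a =>
      simp only [sc_coe, WithTop.coe_le_coe] at hab ⊢
      exact mul_le_mul_of_nonneg_left hab (by positivity)

lemma sc_ne_top {n : ℕ} {x : WithTop ℤ} (hx : x ≠ ⊤) : sc n x ≠ ⊤ := by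
  cases x with
  | top => exact absurd rfl hx
  | coe a => rw [sc_coe]; exact WithTop.coe_ne_top

/-- The cost function: `n·v(pᵢ) + i·m₀`. -/
def cst {K : Type*} [Field K] (v : K → WithTop ℤ) (n : ℕ) (m₀ : ℤ)
    (p : Polynomial K) (i : ℕ) : WithTop ℤ :=
  sc n (v (p.coeff i)) + (((i : ℤ) * m₀ : ℤ) : WithTop ℤ)

section Sums

set_option linter.unusedSectionVars false

variable {K : Type*} [Field K] {ι : Type*} [DecidableEq ι]

lemma sum_le_val (w : K → WithTop ℤ) (w0 : w 0 = ⊤)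
    (wadd : ∀ x y, min (w x) (w y) ≤ w (x + y))
    (s : Finset ι) (F : ι → K) (c : WithTop ℤ) (hc : ∀ i ∈ s, c ≤ w (F i)) :
    c ≤ w (∑ i ∈ s, F i) := by
  induction s using Finset.cons_induction with
  | empty => simp [w0]
  | cons a s ha ih =>
    rw [Finset.sum_cons]
    refine le_trans ?_ (wadd _ _)
    refine le_min (hc a (Finset.mem_cons_self _ _)) (ih fun i hi => hc i ?_)
    exact Finset.mem_cons_of_mem hi

lemma sum_lt_val (w : K → WithTop ℤ) (w0 : w 0 = ⊤)
    (wadd : ∀ x y, min (w x) (w y) ≤ w (x + y))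
    (s : Finset ι) (F : ι → K) (c : WithTop ℤ) (hc : c ≠ ⊤)
    (hstrict : ∀ i ∈ s, c < w (F i)) :
    c < w (∑ i ∈ s, F i) := by
  induction s using Finset.cons_induction with
  | empty => simpa [w0] using lt_top_iff_ne_top.mpr hc
  | cons a s ha ih =>
    rw [Finset.sum_cons]
    refine lt_of_lt_of_le ?_ (wadd _ _)
    refine lt_min (hstrict a (Finset.mem_cons_self _ _)) (ih fun i hi => hstrict i ?_)
    exact Finset.mem_cons_of_mem hi

lemma sum_eq_val (w : K → WithTop ℤ) (w0 : w 0 = ⊤)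
    (wadd : ∀ x y, min (w x) (w y) ≤ w (x + y))
    (wneg : ∀ x, w (-x) = w x)
    (s : Finset ι) (F : ι → K) (c : WithTop ℤ) (i₀ : ι) (hi₀ : i₀ ∈ s)
    (hF : w (F i₀) = c) (hc : c ≠ ⊤)
    (hst : ∀ i ∈ s, i ≠ i₀ → c < w (F i)) :
    w (∑ i ∈ s, F i) = c := by
  have hrest : c < w (∑ i ∈ s.erase i₀, F i) :=
    sum_lt_val w w0 wadd _ _ _ hc
      (fun i hi => hst i (Finset.mem_of_mem_erase hi) (Finset.ne_of_mem_erase hi))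
  rw [← Finset.add_sum_erase s F hi₀]
  set y := ∑ i ∈ s.erase i₀, F i with hy
  have hle : c ≤ w (F i₀ + y) := by
    refine le_trans ?_ (wadd _ _)
    exact le_min hF.ge hrest.le
  have hge : w (F i₀ + y) ≤ c := by
    by_contra hlt
    push_neg at hlt
    have h2 : min (w (F i₀ + y)) (w (-y)) ≤ w (F i₀ + y + -y) := wadd _ _
    rw [add_neg_cancel_right, wneg, hF] at h2
    exact absurd (lt_of_lt_of_le (lt_min hlt hrest) h2) (lt_irrefl c)
  exact le_antisymm hge hle

end Sums

variable {K : Type*} [Field K]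

/-- For a nonzero polynomial, the scaled Gauss valuation, together with its largest
and smallest attaining indices. -/
lemma exists_attain (v : K → WithTop ℤ) (hv0 : ∀ x : K, v x = ⊤ ↔ x = 0)
    (n : ℕ) (m₀ : ℤ) (p : Polynomial K) (hp : p ≠ 0) :
    ∃ (W : ℤ) (r s : ℕ), r ≤ p.natDegree ∧
      cst v n m₀ p r = (W : WithTop ℤ) ∧ cst v n m₀ p s = (W : WithTop ℤ) ∧
      (∀ j, (W : WithTop ℤ) ≤ cst v n m₀ p j) ∧
      (∀ j, r < j → (W : WithTop ℤ) < cst v n m₀ p j) ∧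
      (∀ j, j < s → (W : WithTop ℤ) < cst v n m₀ p j) := by
  set k := p.natDegree with hk
  have hck : cst v n m₀ p k ≠ ⊤ := by
    have h1 : v (p.coeff k) ≠ ⊤ := by
      rw [Ne, hv0]
      exact Polynomial.leadingCoeff_ne_zero.mpr hp
    exact WithTop.add_ne_top.mpr ⟨sc_ne_top h1, WithTop.coe_ne_top⟩
  have hhigh : ∀ j, k < j → cst v n m₀ p j = ⊤ := by
    intro j hj
    have : p.coeff j = 0 := Polynomial.coeff_eq_zero_of_natDegree_lt hj
    rw [cst, this, (hv0 0).mpr rfl, sc_top, top_add]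
  set T := (Finset.range (k + 1)).inf (cst v n m₀ p) with hT
  have hTle : ∀ j, j ≤ k → T ≤ cst v n m₀ p j := by
    intro j hj
    exact Finset.inf_le (Finset.mem_range.mpr (by omega))
  have hTne : T ≠ ⊤ := ne_top_of_le_ne_top hck (hTle k le_rfl)
  obtain ⟨W, hW⟩ := WithTop.ne_top_iff_exists.mp hTne
  set A := (Finset.range (k + 1)).filter (fun j => cst v n m₀ p j = T) with hA
  have hAne : A.Nonempty := by
    obtain ⟨j₀, hj₀mem, hj₀⟩ := Finset.exists_mem_eq_inf (Finset.range (k + 1))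
      (Finset.nonempty_range_iff.mpr (Nat.succ_ne_zero k)) (cst v n m₀ p)
    exact ⟨j₀, Finset.mem_filter.mpr ⟨hj₀mem, hj₀.symm⟩⟩
  set r := A.max' hAne with hr
  set s := A.min' hAne with hs
  have hrA : r ∈ A := A.max'_mem hAne
  have hsA : s ∈ A := A.min'_mem hAne
  refine ⟨W, r, s, ?_, ?_, ?_, ?_, ?_, ?_⟩
  · have := Finset.mem_range.mp (Finset.mem_filter.mp hrA).1; omega
  · rw [(Finset.mem_filter.mp hrA).2, ← hW]
  · rw [(Finset.mem_filter.mp hsA).2, ← hW]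
  · intro j
    rcases le_or_gt j k with hj | hj
    · rw [hW]; exact hTle j hj
    · rw [hhigh j hj]; exact le_top
  · intro j hj
    rcases le_or_gt j k with hjk | hjk
    · refine lt_of_le_of_ne (by rw [hW]; exact hTle j hjk) ?_
      intro heq
      have : j ∈ A := Finset.mem_filter.mpr ⟨Finset.mem_range.mpr (by omega), by rw [← heq, hW]⟩
      exact absurd (Finset.le_max' A j this) (by omega)
    · rw [hhigh j hjk]; exact lt_top_iff_ne_top.mpr WithTop.coe_ne_top
  · intro j hj
    have hsk : s ≤ k := by
      have := Finset.mem_range.mp (Finset.mem_filter.mp hsA).1; omega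
    refine lt_of_le_of_ne (by rw [hW]; exact hTle j (by omega)) ?_
    intro heq
    have : j ∈ A := Finset.mem_filter.mpr ⟨Finset.mem_range.mpr (by omega), by rw [← heq, hW]⟩
    exact absurd (Finset.min'_le A j this) (by omega)

lemma coe_add_lt_left {a b : ℤ} {x y : WithTop ℤ}
    (hx : (a : WithTop ℤ) < x) (hy : (b : WithTop ℤ) ≤ y) :
    ((a + b : ℤ) : WithTop ℤ) < x + y := by
  cases x with
  | top =>
    rw [top_add]
    exact lt_top_iff_ne_top.mpr WithTop.coe_ne_top
  | coe x =>
    cases y with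
    | top =>
      rw [add_top]
      exact lt_top_iff_ne_top.mpr WithTop.coe_ne_top
    | coe y =>
      have hx' : a < x := WithTop.coe_lt_coe.mp hx
      have hy' : b ≤ y := WithTop.coe_le_coe.mp hy
      rw [← WithTop.coe_add, WithTop.coe_lt_coe]
      omega

lemma coe_add_lt_right {a b : ℤ} {x y : WithTop ℤ}
    (hx : (a : WithTop ℤ) ≤ x) (hy : (b : WithTop ℤ) < y) :
    ((a + b : ℤ) : WithTop ℤ) < x + y := by
  rw [add_comm x y, add_comm a b]
  exact coe_add_lt_left hy hx

lemma coe_add_le {a b : ℤ} {x y : WithTop ℤ}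
    (hx : (a : WithTop ℤ) ≤ x) (hy : (b : WithTop ℤ) ≤ y) :
    ((a + b : ℤ) : WithTop ℤ) ≤ x + y := by
  rw [WithTop.coe_add]
  exact add_le_add hx hy

/-- Key properties of the cost function of a product. -/
lemma prod_props (v : K → WithTop ℤ) (hv0 : ∀ x : K, v x = ⊤ ↔ x = 0)
    (hvmul : ∀ x y : K, v (x * y) = v x + v y)
    (hvadd : ∀ x y : K, min (v x) (v y) ≤ v (x + y))
    (hvneg : ∀ x : K, v (-x) = v x)
    (n : ℕ) (m₀ : ℤ) (g h : Polynomial K) (Wg Wh : ℤ) (rg sg rh sh : ℕ)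
    (hBg : cst v n m₀ g rg = (Wg : WithTop ℤ))
    (hSg : cst v n m₀ g sg = (Wg : WithTop ℤ))
    (hAg : ∀ j, (Wg : WithTop ℤ) ≤ cst v n m₀ g j)
    (hCg : ∀ j, rg < j → (Wg : WithTop ℤ) < cst v n m₀ g j)
    (hDg : ∀ j, j < sg → (Wg : WithTop ℤ) < cst v n m₀ g j)
    (hBh : cst v n m₀ h rh = (Wh : WithTop ℤ))
    (hSh : cst v n m₀ h sh = (Wh : WithTop ℤ))
    (hAh : ∀ j, (Wh : WithTop ℤ) ≤ cst v n m₀ h j)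
    (hCh : ∀ j, rh < j → (Wh : WithTop ℤ) < cst v n m₀ h j)
    (hDh : ∀ j, j < sh → (Wh : WithTop ℤ) < cst v n m₀ h j) :
    (∀ i, ((Wg + Wh : ℤ) : WithTop ℤ) ≤ cst v n m₀ (g * h) i) ∧
    cst v n m₀ (g * h) (rg + rh) = ((Wg + Wh : ℤ) : WithTop ℤ) ∧
    (∀ i, rg + rh < i → ((Wg + Wh : ℤ) : WithTop ℤ) < cst v n m₀ (g * h) i) ∧
    (∀ i, i < sg + sh → ((Wg + Wh : ℤ) : WithTop ℤ) < cst v n m₀ (g * h) i) := by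
  -- the auxiliary "valuation" for a fixed index i
  have w0 : ∀ i : ℕ, (fun x : K => sc n (v x) + (((i : ℤ) * m₀ : ℤ) : WithTop ℤ)) 0 = ⊤ := by
    intro i; simp only [(hv0 0).mpr rfl, sc_top, top_add]
  have wadd : ∀ (i : ℕ) (x y : K),
      min (sc n (v x) + (((i : ℤ) * m₀ : ℤ) : WithTop ℤ))
        (sc n (v y) + (((i : ℤ) * m₀ : ℤ) : WithTop ℤ)) ≤
      sc n (v (x + y)) + (((i : ℤ) * m₀ : ℤ) : WithTop ℤ) := by
    intro i x y
    rw [min_add_add_right, ← (sc_mono n).map_min]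
    exact add_le_add_left (sc_mono n (hvadd x y)) _
  have wneg : ∀ (i : ℕ) (x : K),
      sc n (v (-x)) + (((i : ℤ) * m₀ : ℤ) : WithTop ℤ)
        = sc n (v x) + (((i : ℤ) * m₀ : ℤ) : WithTop ℤ) := by
    intro i x; rw [hvneg]
  have hterm : ∀ (i j j' : ℕ), j + j' = i →
      sc n (v (g.coeff j * h.coeff j')) + (((i : ℤ) * m₀ : ℤ) : WithTop ℤ)
        = cst v n m₀ g j + cst v n m₀ h j' := by
    intro i j j' hjj
    have hc : ((i : ℤ) * m₀ : ℤ) = ((j : ℤ) * m₀ : ℤ) + ((j' : ℤ) * m₀ : ℤ) := by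
      rw [← hjj]; push_cast; ring
    rw [hvmul, sc_add, hc, WithTop.coe_add, cst, cst]
    abel
  have hcoeff : ∀ i, cst v n m₀ (g * h) i =
      sc n (v (∑ x ∈ Finset.HasAntidiagonal.antidiagonal i, g.coeff x.1 * h.coeff x.2))
        + (((i : ℤ) * m₀ : ℤ) : WithTop ℤ) := by
    intro i; rw [cst, Polynomial.coeff_mul]
  refine ⟨?_, ?_, ?_, ?_⟩
  · intro i
    rw [hcoeff i]
    refine sum_le_val _ (w0 i) (wadd i) _ _ _ ?_
    intro x hx
    rw [hterm i x.1 x.2 (Finset.HasAntidiagonal.mem_antidiagonal.mp hx)]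
    exact coe_add_le (hAg _) (hAh _)
  · rw [hcoeff (rg + rh)]
    refine sum_eq_val _ (w0 _) (wadd _) (wneg _) _ _ _ (rg, rh)
      (Finset.HasAntidiagonal.mem_antidiagonal.mpr rfl) ?_ WithTop.coe_ne_top ?_
    · rw [hterm _ rg rh rfl, hBg, hBh, WithTop.coe_add]
    · intro x hx hne
      have hxsum : x.1 + x.2 = rg + rh := Finset.HasAntidiagonal.mem_antidiagonal.mp hx
      rw [hterm _ x.1 x.2 hxsum]
      rcases lt_or_ge rg x.1 with h1 | h1
      · exact coe_add_lt_left (hCg _ h1) (hAh _)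
      · have h2 : rh < x.2 := by
          rcases eq_or_lt_of_le h1 with he | hl
          · exact absurd (Prod.ext he (show x.2 = rh by omega)) hne
          · omega
        exact coe_add_lt_right (hAg _) (hCh _ h2)
  · intro i hi
    rw [hcoeff i]
    refine sum_lt_val _ (w0 i) (wadd i) _ _ _ WithTop.coe_ne_top ?_
    intro x hx
    have hxsum : x.1 + x.2 = i := Finset.HasAntidiagonal.mem_antidiagonal.mp hx
    rw [hterm i x.1 x.2 hxsum]
    rcases lt_or_ge rg x.1 with h1 | h1
    · exact coe_add_lt_left (hCg _ h1) (hAh _)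
    · exact coe_add_lt_right (hAg _) (hCh _ (by omega))
  · intro i hi
    rw [hcoeff i]
    refine sum_lt_val _ (w0 i) (wadd i) _ _ _ WithTop.coe_ne_top ?_
    intro x hx
    have hxsum : x.1 + x.2 = i := Finset.HasAntidiagonal.mem_antidiagonal.mp hx
    rw [hterm i x.1 x.2 hxsum]
    rcases lt_or_ge x.1 sg with h1 | h1
    · exact coe_add_lt_left (hDg _ h1) (hAh _)
    · exact coe_add_lt_right (hAg _) (hDh _ (by omega))

end Stmt8Aux

open Stmt8Aux in
/-- Single-segment Newton polygon bound (j = n case of Theorem 2): every irreducible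
factor of f has degree at least n / gcd(v(a₀), n). -/
theorem stmt_8 {K : Type*} [Field K] (v : K → WithTop ℤ)
    (hv0 : ∀ x : K, v x = ⊤ ↔ x = 0)
    (hvmul : ∀ x y : K, v (x * y) = v x + v y)
    (hvadd : ∀ x y : K, min (v x) (v y) ≤ v (x + y))
    (hvsurj : ∀ g : ℤ, ∃ x : K, v x = (g : WithTop ℤ))
    (f : Polynomial K) (n : ℕ) (m₀ : ℤ)
    (hdeg : f.natDegree = n)
    (hvn : v (f.coeff n) = 0)
    (hv0' : v (f.coeff 0) = (m₀ : WithTop ℤ))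
    (hii : ∀ i : ℕ, 1 ≤ i → i < n →
      ((((n : ℤ) - i) * m₀ : ℤ) : WithTop ℤ) ≤ ((n : ℕ) : WithTop ℤ) * v (f.coeff i)) :
    ∀ g : Polynomial K, Irreducible g → g ∣ f → n / Int.gcd m₀ (n : ℤ) ≤ g.natDegree := by
  intro g hirr hgdvd
  rcases Nat.eq_zero_or_pos n with hn0 | hnpos
  · rw [hn0]; simp
  -- basic valuation facts
  have hvone : v 1 = 0 := by
    have h1 : v 1 = v 1 + v 1 := by rw [← hvmul]; rw [one_mul]
    cases hv1 : v 1 with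
    | top => exact absurd ((hv0 1).mp hv1) one_ne_zero
    | coe a =>
      rw [hv1, ← WithTop.coe_add] at h1
      have : a = a + a := WithTop.coe_injective h1
      have : a = 0 := by omega
      exact_mod_cast this
  have hvneg : ∀ x : K, v (-x) = v x := by
    intro x
    have hm1 : v (-1 : K) + v (-1 : K) = 0 := by
      rw [← hvmul]; norm_num [hvone]
    have hvm1 : v (-1 : K) = 0 := by
      cases hv1 : v (-1 : K) with
      | top => rw [hv1, top_add] at hm1; exact absurd hm1 (by simp)
      | coe a =>
        rw [hv1, ← WithTop.coe_add] at hm1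
        have : a + a = 0 := by exact_mod_cast hm1
        have : a = 0 := by omega
        exact_mod_cast this
    calc v (-x) = v ((-1) * x) := by rw [neg_one_mul]
    _ = v (-1 : K) + v x := hvmul _ _
    _ = v x := by rw [hvm1, zero_add]
  have hfne : f ≠ 0 := by
    intro hf
    rw [hf, Polynomial.coeff_zero, (hv0 0).mpr rfl] at hvn
    exact absurd hvn.symm (by simp)
  obtain ⟨h, hfgh⟩ := hgdvd
  have hgne : g ≠ 0 := fun hg => hfne (by rw [hfgh, hg, zero_mul])
  have hhne : h ≠ 0 := fun hh => hfne (by rw [hfgh, hh, mul_zero])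
  set k := g.natDegree with hkdef
  set l := h.natDegree with hldef
  have hkl : k + l = n := by
    rw [hkdef, hldef, ← Polynomial.natDegree_mul hgne hhne, ← hfgh, hdeg]
  have hkpos : 0 < k := hirr.natDegree_pos
  -- the cost function of f is bounded below by n·m₀
  have hcstf0 : cst v n m₀ f 0 = (((n : ℤ) * m₀ : ℤ) : WithTop ℤ) := by
    rw [cst, hv0', sc_coe]
    push_cast
    rw [zero_mul, add_zero]
  have hcstfn : cst v n m₀ f n = (((n : ℤ) * m₀ : ℤ) : WithTop ℤ) := by
    rw [cst, hvn]
    have : (0 : WithTop ℤ) = ((0 : ℤ) : WithTop ℤ) := rfl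
    rw [this, sc_coe, mul_zero]
    rw [← WithTop.coe_add, zero_add]
  have hflow : ∀ i, (((n : ℤ) * m₀ : ℤ) : WithTop ℤ) ≤ cst v n m₀ f i := by
    intro i
    rcases Nat.eq_zero_or_pos i with hi0 | hipos
    · rw [hi0, hcstf0]
    rcases lt_trichotomy i n with hin | hin | hin
    · have hb := hii i hipos hin
      cases hvi : v (f.coeff i) with
      | top =>
        rw [cst, hvi, sc_top, top_add]; exact le_top
      | coe a =>
        rw [hvi] at hb
        have hcast : ((n : ℕ) : WithTop ℤ) * ((a : ℤ) : WithTop ℤ)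
            = (((n : ℤ) * a : ℤ) : WithTop ℤ) := by
          rw [← WithTop.coe_natCast (α := ℤ), ← WithTop.coe_mul]
        rw [hcast, WithTop.coe_le_coe] at hb
        rw [cst, hvi, sc_coe, ← WithTop.coe_add, WithTop.coe_le_coe]
        have hexp : (n : ℤ) * m₀ = ((n : ℤ) - (i : ℤ)) * m₀ + (i : ℤ) * m₀ := by ring
        rw [hexp]
        exact add_le_add_left hb _
    · rw [hin, hcstfn]
    · rw [cst, Polynomial.coeff_eq_zero_of_natDegree_lt (by omega), (hv0 0).mpr rfl,
        sc_top, top_add]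
      exact le_top
  -- attaining data for g and h
  obtain ⟨Wg, rg, sg, hrgk, hBg, hSg, hAg, hCg, hDg⟩ := exists_attain v hv0 n m₀ g hgne
  obtain ⟨Wh, rh, sh, hrhl, hBh, hSh, hAh, hCh, hDh⟩ := exists_attain v hv0 n m₀ h hhne
  obtain ⟨P1, P2, P3, P5⟩ := prod_props v hv0 hvmul hvadd hvneg n m₀ g h Wg Wh rg sg rh sh
    hBg hSg hAg hCg hDg hBh hSh hAh hCh hDh
  rw [← hfgh] at P1 P2 P3 P5
  -- Wg + Wh = n·m₀
  have e1 : ((Wg + Wh : ℤ) : WithTop ℤ) ≤ (((n : ℤ) * m₀ : ℤ) : WithTop ℤ) := by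
    rw [← hcstfn]; exact P1 n
  have e2 : (((n : ℤ) * m₀ : ℤ) : WithTop ℤ) ≤ ((Wg + Wh : ℤ) : WithTop ℤ) := by
    rw [← P2]; exact hflow (rg + rh)
  have eWW : ((Wg + Wh : ℤ) : WithTop ℤ) = (((n : ℤ) * m₀ : ℤ) : WithTop ℤ) :=
    le_antisymm e1 e2
  have hrsum : rg + rh = n := by
    by_contra hne
    have hlt : rg + rh < n := lt_of_le_of_ne (by omega) hne
    have := P3 n hlt
    rw [hcstfn, ← eWW] at this
    exact absurd this (lt_irrefl _)
  have hssum : sg + sh = 0 := by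
    by_contra hne
    have hlt : 0 < sg + sh := Nat.pos_of_ne_zero hne
    have := P5 0 hlt
    rw [hcstf0, ← eWW] at this
    exact absurd this (lt_irrefl _)
  have hrgek : rg = k := by omega
  have hsg0 : sg = 0 := by omega
  -- g attains its Gauss valuation both at index 0 and at index k
  have hg0 : cst v n m₀ g 0 = (Wg : WithTop ℤ) := by rw [← hsg0]; exact hSg
  have hgk : cst v n m₀ g k = (Wg : WithTop ℤ) := by rw [← hrgek]; exact hBg
  -- extract integer values
  have hv0ne : v (g.coeff 0) ≠ ⊤ := by
    intro ht
    rw [cst, ht, sc_top, top_add] at hg0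
    exact WithTop.coe_ne_top hg0.symm
  have hvkne : v (g.coeff k) ≠ ⊤ := by
    intro ht
    rw [cst, ht, sc_top, top_add] at hgk
    exact WithTop.coe_ne_top hgk.symm
  obtain ⟨a, ha⟩ := WithTop.ne_top_iff_exists.mp hv0ne
  obtain ⟨b, hb⟩ := WithTop.ne_top_iff_exists.mp hvkne
  rw [cst, ← ha, sc_coe, ← WithTop.coe_add] at hg0
  rw [cst, ← hb, sc_coe, ← WithTop.coe_add] at hgk
  have ea : (n : ℤ) * a + (0 : ℤ) * m₀ = Wg := by exact_mod_cast hg0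
  have eb : (n : ℤ) * b + (k : ℤ) * m₀ = Wg := by exact_mod_cast hgk
  have hdvd2 : (n : ℤ) ∣ (k : ℤ) * m₀ := ⟨a - b, by rw [mul_sub]; linarith⟩
  -- number theory finish
  have hnat : n ∣ k * m₀.natAbs := by
    have h1 := Int.natAbs_dvd_natAbs.mpr hdvd2
    rwa [Int.natAbs_mul, Int.natAbs_natCast, Int.natAbs_natCast] at h1
  have hdd : Int.gcd m₀ (n : ℤ) = Nat.gcd m₀.natAbs n := by
    rw [Int.gcd]; simp
  rw [hdd]
  set d := Nat.gcd m₀.natAbs n with hddef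
  have hdpos : 0 < d := Nat.gcd_pos_of_pos_right _ hnpos
  have hdvdn : d ∣ n := Nat.gcd_dvd_right _ _
  have hdvdm : d ∣ m₀.natAbs := Nat.gcd_dvd_left _ _
  have h1 : n / d ∣ k * (m₀.natAbs / d) := by
    have h2 : n / d * d ∣ k * (m₀.natAbs / d) * d := by
      rw [Nat.div_mul_cancel hdvdn, mul_assoc, Nat.div_mul_cancel hdvdm]
      exact hnat
    exact (mul_dvd_mul_iff_right (by omega : d ≠ 0)).mp h2
  have hcop : Nat.Coprime (n / d) (m₀.natAbs / d) :=
    (Nat.coprime_div_gcd_div_gcd hdpos).symm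
  exact Nat.le_of_dvd hkpos (hcop.dvd_of_dvd_mul_right h1)
end

section
/- Let p be a prime and f = a₀ + a₁z + ⋯ + aₙzⁿ ∈ ℤ[z] a polynomial of degree n with p ∤ content(f). Suppose there exist indices j, k with 1 ≤ k+1 ≤ j ≤ n such that: (i) p ∤ aⱼ; (ii) v_p(aₖ)/(j−k) < v_p(aᵢ)/(j−i) for all 0 ≤ i ≤ j−1 with i ≠ k; (iii) gcd(v_p(aₖ), j−k) = 1. Then in any factorization f = f₁·f₂ in ℤ[z], one of the factors has degree ≤ n − j + k. -/
open Polynomial in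
lemma stmt9_L1 (p : ℕ) [Fact p.Prime] (g h : Polynomial ℤ) (i : ℕ)
    (hne : (g * h).coeff i ≠ 0) :
    ∃ r s : ℕ, r + s = i ∧ g.coeff r ≠ 0 ∧ h.coeff s ≠ 0 ∧
      padicValInt p (g.coeff r) + padicValInt p (h.coeff s) ≤
        padicValInt p ((g * h).coeff i) := by
  classical
  set S := (Finset.HasAntidiagonal.antidiagonal i).filter (fun x => g.coeff x.1 * h.coeff x.2 ≠ 0) with hS
  have hSne : S.Nonempty := by
    by_contra hemp
    apply hne
    rw [Polynomial.coeff_mul]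
    refine Finset.sum_eq_zero fun x hx => ?_
    by_contra hx0
    exact hemp ⟨x, Finset.mem_filter.mpr ⟨hx, hx0⟩⟩
  obtain ⟨x, hxS, hxmin⟩ := S.exists_min_image
    (fun x => padicValInt p (g.coeff x.1) + padicValInt p (h.coeff x.2)) hSne
  obtain ⟨hxa, hx0⟩ := Finset.mem_filter.mp hxS
  have hg0 : g.coeff x.1 ≠ 0 := left_ne_zero_of_mul hx0
  have hh0 : h.coeff x.2 ≠ 0 := right_ne_zero_of_mul hx0
  set t := padicValInt p (g.coeff x.1) + padicValInt p (h.coeff x.2) with ht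
  have hdvd : (p : ℤ) ^ t ∣ (g * h).coeff i := by
    rw [Polynomial.coeff_mul]
    refine Finset.dvd_sum fun y hy => ?_
    by_cases hy0 : g.coeff y.1 * h.coeff y.2 = 0
    · rw [hy0]; exact dvd_zero _
    · have hyS : y ∈ S := Finset.mem_filter.mpr ⟨hy, hy0⟩
      have hle := hxmin y hyS
      rw [padicValInt_dvd_iff]
      right
      rw [padicValInt.mul (left_ne_zero_of_mul hy0) (right_ne_zero_of_mul hy0)]
      exact hle
  have hres := (padicValInt_dvd_iff t _).mp hdvd
  exact ⟨x.1, x.2, Finset.HasAntidiagonal.mem_antidiagonal.mp hxa, hg0, hh0, hres.resolve_left hne⟩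

lemma stmt9_L2 (p : ℕ) [Fact p.Prime] (g h : Polynomial ℤ) (i r₀ s₀ : ℕ)
    (hrs : r₀ + s₀ = i) (hg0 : g.coeff r₀ ≠ 0) (hh0 : h.coeff s₀ ≠ 0)
    (hmin : ∀ r s : ℕ, r + s = i → (r, s) ≠ (r₀, s₀) → g.coeff r = 0 ∨ h.coeff s = 0 ∨
      padicValInt p (g.coeff r₀) + padicValInt p (h.coeff s₀) <
        padicValInt p (g.coeff r) + padicValInt p (h.coeff s)) :
    (g * h).coeff i ≠ 0 ∧
      padicValInt p ((g * h).coeff i) =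
        padicValInt p (g.coeff r₀) + padicValInt p (h.coeff s₀) := by
  classical
  set t := padicValInt p (g.coeff r₀) + padicValInt p (h.coeff s₀) with ht
  have hmem : ((r₀, s₀) : ℕ × ℕ) ∈ Finset.HasAntidiagonal.antidiagonal i := Finset.HasAntidiagonal.mem_antidiagonal.mpr hrs
  have hsum : (g * h).coeff i = g.coeff r₀ * h.coeff s₀ +
      ∑ x ∈ (Finset.HasAntidiagonal.antidiagonal i).erase (r₀, s₀), g.coeff x.1 * h.coeff x.2 := by
    rw [Polynomial.coeff_mul, ← Finset.add_sum_erase _ _ hmem]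
  have hrest : (p : ℤ) ^ (t + 1) ∣
      ∑ x ∈ (Finset.HasAntidiagonal.antidiagonal i).erase (r₀, s₀), g.coeff x.1 * h.coeff x.2 := by
    refine Finset.dvd_sum fun y hy => ?_
    have hyne : y ≠ (r₀, s₀) := (Finset.mem_erase.mp hy).1
    have hya : y.1 + y.2 = i := Finset.HasAntidiagonal.mem_antidiagonal.mp (Finset.mem_erase.mp hy).2
    rcases hmin y.1 y.2 hya (by rwa [Prod.mk.eta]) with h1 | h2 | h3
    · rw [h1, zero_mul]; exact dvd_zero _
    · rw [h2, mul_zero]; exact dvd_zero _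
    · rw [padicValInt_dvd_iff]
      by_cases hz : g.coeff y.1 * h.coeff y.2 = 0
      · exact Or.inl hz
      · right
        rw [padicValInt.mul (left_ne_zero_of_mul hz) (right_ne_zero_of_mul hz)]
        omega
  have hmain0 : g.coeff r₀ * h.coeff s₀ ≠ 0 := mul_ne_zero hg0 hh0
  have hvmain : padicValInt p (g.coeff r₀ * h.coeff s₀) = t := padicValInt.mul hg0 hh0
  have hnotdvd : ¬ (p : ℤ) ^ (t + 1) ∣ g.coeff r₀ * h.coeff s₀ := by
    rw [padicValInt_dvd_iff]
    push_neg
    exact ⟨hmain0, by omega⟩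
  have hsub : g.coeff r₀ * h.coeff s₀ = (g * h).coeff i -
      ∑ x ∈ (Finset.HasAntidiagonal.antidiagonal i).erase (r₀, s₀), g.coeff x.1 * h.coeff x.2 := by
    rw [hsum]; ring
  have key : ¬ (p : ℤ) ^ (t + 1) ∣ (g * h).coeff i := by
    intro hdvd
    exact hnotdvd (hsub ▸ dvd_sub hdvd hrest)
  have hne : (g * h).coeff i ≠ 0 := fun h0 => key (h0 ▸ dvd_zero _)
  refine ⟨hne, ?_⟩
  have hdt : (p : ℤ) ^ t ∣ (g * h).coeff i := by
    rw [hsum]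
    have h1 : (p : ℤ) ^ t ∣ g.coeff r₀ * h.coeff s₀ := by
      have := padicValInt_dvd (p := p) (g.coeff r₀ * h.coeff s₀)
      rwa [hvmain] at this
    exact dvd_add h1 ((pow_dvd_pow _ (Nat.le_succ t)).trans hrest)
  have hl : t ≤ padicValInt p ((g * h).coeff i) :=
    ((padicValInt_dvd_iff t _).mp hdt).resolve_left hne
  have hu : padicValInt p ((g * h).coeff i) ≤ t := by
    by_contra hgt
    push_neg at hgt
    exact key ((padicValInt_dvd_iff _ _).mpr (Or.inr (by omega)))
  omega

lemma stmt9_min (q : Polynomial ℤ) (hq : q ≠ 0) (B : ℕ → ℕ) :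
    ∃ μ r₀ r₁ : ℕ, r₀ ≤ r₁ ∧ r₁ ≤ q.natDegree ∧
      q.coeff r₀ ≠ 0 ∧ q.coeff r₁ ≠ 0 ∧ B r₀ = μ ∧ B r₁ = μ ∧
      (∀ r, q.coeff r ≠ 0 → μ ≤ B r) ∧
      (∀ r, q.coeff r ≠ 0 → r < r₀ → μ + 1 ≤ B r) ∧
      (∀ r, q.coeff r ≠ 0 → r₁ < r → μ + 1 ≤ B r) := by
  classical
  have hSg : q.support.Nonempty := Polynomial.nonempty_support_iff.mpr hq
  set μ := (q.support.image B).min' (hSg.image B) with hμ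
  have hμle : ∀ r ∈ q.support, μ ≤ B r := fun r hr =>
    Finset.min'_le _ _ (Finset.mem_image_of_mem B hr)
  have hμmem : ∃ r ∈ q.support, B r = μ := by
    have := (q.support.image B).min'_mem (hSg.image B)
    rwa [Finset.mem_image] at this
  set T := q.support.filter (fun r => B r = μ) with hT
  have hTne : T.Nonempty := by
    obtain ⟨r, hr, hbr⟩ := hμmem
    exact ⟨r, Finset.mem_filter.mpr ⟨hr, hbr⟩⟩
  refine ⟨μ, T.min' hTne, T.max' hTne, T.min'_le _ (T.max'_mem hTne), ?_, ?_, ?_, ?_, ?_, ?_, ?_, ?_⟩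
  · exact Polynomial.le_natDegree_of_mem_supp _ ((Finset.mem_filter.mp (T.max'_mem hTne)).1)
  · exact Polynomial.mem_support_iff.mp (Finset.mem_filter.mp (T.min'_mem hTne)).1
  · exact Polynomial.mem_support_iff.mp (Finset.mem_filter.mp (T.max'_mem hTne)).1
  · exact (Finset.mem_filter.mp (T.min'_mem hTne)).2
  · exact (Finset.mem_filter.mp (T.max'_mem hTne)).2
  · exact fun r hr => hμle r (Polynomial.mem_support_iff.mpr hr)
  · intro r hr hlt
    have h1 := hμle r (Polynomial.mem_support_iff.mpr hr)
    rcases Nat.lt_or_ge μ (B r) with h | h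
    · omega
    · exfalso
      have heq : B r = μ := le_antisymm h h1
      have hrT : r ∈ T := by
        rw [hT]; exact Finset.mem_filter.mpr ⟨Polynomial.mem_support_iff.mpr hr, heq⟩
      have : T.min' hTne ≤ r := Finset.min'_le _ _ hrT
      omega
  · intro r hr hlt
    have h1 := hμle r (Polynomial.mem_support_iff.mpr hr)
    rcases Nat.lt_or_ge μ (B r) with h | h
    · omega
    · exfalso
      have heq : B r = μ := le_antisymm h h1
      have hrT : r ∈ T := by
        rw [hT]; exact Finset.mem_filter.mpr ⟨Polynomial.mem_support_iff.mpr hr, heq⟩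
      have : r ≤ T.max' hTne := Finset.le_max' _ _ hrT
      omega

/-- Theorem B of the paper for (ℤ, v_p): any factorization of f in ℤ[z]
has a factor of degree ≤ n - j + k. -/
theorem stmt_9 (p : ℕ) (hp : p.Prime) (f : Polynomial ℤ) (n j k : ℕ)
    (vp : ℤ → WithTop ℤ)
    (hvp : ∀ a : ℤ, vp a = if a = 0 then ⊤ else ((padicValInt p a : ℤ) : WithTop ℤ))
    (hdeg : f.natDegree = n) (hk : k + 1 ≤ j) (hjn : j ≤ n)
    (hcont : ¬ (p : ℤ) ∣ f.content)
    (hj0 : ¬ (p : ℤ) ∣ f.coeff j)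
    (hk0 : f.coeff k ≠ 0)
    (hii : ∀ i : ℕ, i < j → i ≠ k →
      ((((j : ℤ) - i) * (padicValInt p (f.coeff k) : ℤ) : ℤ) : WithTop ℤ) <
        ((((j : ℤ) - k) : ℤ) : WithTop ℤ) * vp (f.coeff i))
    (hgcd : Nat.gcd (padicValInt p (f.coeff k)) (j - k) = 1) :
    ∀ f₁ f₂ : Polynomial ℤ, f = f₁ * f₂ →
      f₁.natDegree ≤ n - j + k ∨ f₂.natDegree ≤ n - j + k := by

  intro f₁ f₂ hf
  haveI : Fact p.Prime := ⟨hp⟩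
  by_contra hcon
  push_neg at hcon
  obtain ⟨hd1, hd2⟩ := hcon
  -- basic facts
  have hfj : f.coeff j ≠ 0 := fun h0 => hj0 (h0 ▸ dvd_zero _)
  have hf0 : f ≠ 0 := fun h0 => hfj (by simp [h0])
  have hg0 : f₁ ≠ 0 := by rintro rfl; rw [zero_mul] at hf; exact hf0 hf
  have hh0 : f₂ ≠ 0 := by rintro rfl; rw [mul_zero] at hf; exact hf0 hf
  have hdsum : f₁.natDegree + f₂.natDegree = n := by
    rw [← hdeg, hf, Polynomial.natDegree_mul hg0 hh0]
  set m := padicValInt p (f.coeff k) with hm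
  set d := j - k with hd
  clear_value m d
  have hmpos : 1 ≤ m := by
    rcases Nat.eq_zero_or_pos m with h0 | h1
    · rw [h0, Nat.gcd_zero_left] at hgcd; omega
    · exact h1
  have hdk : d + k = j := by omega
  have hdpos : 1 ≤ d := by omega
  -- extract numeric inequality from hii
  have hii' : ∀ i : ℕ, i < j → i ≠ k → f.coeff i ≠ 0 →
      (j - i) * m + 1 ≤ d * padicValInt p (f.coeff i) := by
    intro i hij hik hne
    have h1 := hii i hij hik
    rw [hvp, if_neg hne, ← WithTop.coe_mul] at h1
    have h2 : ((j : ℤ) - i) * (m : ℤ) <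
        ((j : ℤ) - k) * (padicValInt p (f.coeff i) : ℤ) := WithTop.coe_lt_coe.mp h1
    have c1 : ((j - i : ℕ) : ℤ) = (j : ℤ) - i := by omega
    have c2 : ((j - k : ℕ) : ℤ) = (j : ℤ) - k := by omega
    rw [← c1, ← c2] at h2
    have h3 : (j - i) * m < (j - k) * padicValInt p (f.coeff i) := by exact_mod_cast h2
    have h4 : (j - i) * m < d * padicValInt p (f.coeff i) := by rw [hd]; exact h3
    exact Nat.succ_le_of_lt h4
  -- min data for the two factors
  obtain ⟨μ, r₀, r₁, hr01, hr₁deg, hb₀, hb₁, hBr₀, hBr₁, hμle, hμlow, hμhigh⟩ :=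
    stmt9_min f₁ hg0 (fun r => d * padicValInt p (f₁.coeff r) + m * r)
  obtain ⟨ν, s₀, s₁, hs01, hs₁deg, hc₀, hc₁, hCs₀, hCs₁, hνle, hνlow, hνhigh⟩ :=
    stmt9_min f₂ hh0 (fun s => d * padicValInt p (f₂.coeff s) + m * s)
  -- values of A at k and j
  have hAk : d * padicValInt p (f.coeff k) + m * k = m * j := by
    rw [← hm, ← hdk]; ring
  have hAj : d * padicValInt p (f.coeff j) + m * j = m * j := by
    rw [padicValInt.eq_zero_of_not_dvd hj0]; ring
  -- A is strictly above m*j away from k and j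
  have hAgt : ∀ i, f.coeff i ≠ 0 → i ≠ k → i ≠ j →
      m * j < d * padicValInt p (f.coeff i) + m * i := by
    intro i hne hik hij
    rcases Nat.lt_or_ge i j with hlt | hge
    · have h1 := hii' i hlt hik hne
      have e : (j - i) * m + m * i = m * j := by
        have e2 : j - i + i = j := by omega
        calc (j - i) * m + m * i = m * ((j - i) + i) := by ring
          _ = m * j := by rw [e2]
      have h5 : (j - i) * m < d * padicValInt p (f.coeff i) := Nat.lt_of_succ_le h1
      calc m * j = (j - i) * m + m * i := e.symm
        _ < d * padicValInt p (f.coeff i) + m * i := Nat.add_lt_add_right h5 _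
    · have hgt : j < i := by omega
      have h6 : m * j < m * i := mul_lt_mul_of_pos_left hgt (by omega)
      exact lt_of_lt_of_le h6 (Nat.le_add_left _ _)
  -- A is at least μ + ν everywhere on the support of f
  have hAge : ∀ i, f.coeff i ≠ 0 → μ + ν ≤ d * padicValInt p (f.coeff i) + m * i := by
    intro i hne
    obtain ⟨r, s, hrs, hbr, hcs, hv⟩ := stmt9_L1 p f₁ f₂ i (by rwa [← hf])
    have h1 := hμle r hbr
    have h2 := hνle s hcs
    have hv' : padicValInt p (f₁.coeff r) + padicValInt p (f₂.coeff s) ≤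
        padicValInt p (f.coeff i) := by rw [hf]; exact hv
    have h3 : d * (padicValInt p (f₁.coeff r) + padicValInt p (f₂.coeff s)) ≤
        d * padicValInt p (f.coeff i) := Nat.mul_le_mul le_rfl hv'
    have h4 : m * r + m * s = m * i := by rw [← mul_add, hrs]
    have h5 : d * (padicValInt p (f₁.coeff r) + padicValInt p (f₂.coeff s)) =
        d * padicValInt p (f₁.coeff r) + d * padicValInt p (f₂.coeff s) := mul_add _ _ _
    linarith
  have hμν_le : μ + ν ≤ m * j := by
    have h := hAge k hk0
    rwa [hAk] at h
  -- strict minimality off the argmin windows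
  have hlow : ∀ i, i < r₀ + s₀ → f.coeff i ≠ 0 →
      μ + ν + 1 ≤ d * padicValInt p (f.coeff i) + m * i := by
    intro i hi hne
    obtain ⟨r, s, hrs, hbr, hcs, hv⟩ := stmt9_L1 p f₁ f₂ i (by rwa [← hf])
    have h1 : μ + ν + 1 ≤ (d * padicValInt p (f₁.coeff r) + m * r) +
        (d * padicValInt p (f₂.coeff s) + m * s) := by
      rcases Nat.lt_or_ge r r₀ with h | h
      · have ha := hμlow r hbr h
        have hb := hνle s hcs
        linarith
      · have hs : s < s₀ := by omega
        have ha := hνlow s hcs hs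
        have hb := hμle r hbr
        linarith
    have hv' : padicValInt p (f₁.coeff r) + padicValInt p (f₂.coeff s) ≤
        padicValInt p (f.coeff i) := by rw [hf]; exact hv
    have h3 : d * (padicValInt p (f₁.coeff r) + padicValInt p (f₂.coeff s)) ≤
        d * padicValInt p (f.coeff i) := Nat.mul_le_mul le_rfl hv'
    have h4 : m * r + m * s = m * i := by rw [← mul_add, hrs]
    have h5 : d * (padicValInt p (f₁.coeff r) + padicValInt p (f₂.coeff s)) =
        d * padicValInt p (f₁.coeff r) + d * padicValInt p (f₂.coeff s) := mul_add _ _ _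
    linarith
  have hhigh : ∀ i, r₁ + s₁ < i → f.coeff i ≠ 0 →
      μ + ν + 1 ≤ d * padicValInt p (f.coeff i) + m * i := by
    intro i hi hne
    obtain ⟨r, s, hrs, hbr, hcs, hv⟩ := stmt9_L1 p f₁ f₂ i (by rwa [← hf])
    have h1 : μ + ν + 1 ≤ (d * padicValInt p (f₁.coeff r) + m * r) +
        (d * padicValInt p (f₂.coeff s) + m * s) := by
      rcases Nat.lt_or_ge r₁ r with h | h
      · have ha := hμhigh r hbr h
        have hb := hνle s hcs
        linarith
      · have hs : s₁ < s := by omega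
        have ha := hνhigh s hcs hs
        have hb := hμle r hbr
        linarith
    have hv' : padicValInt p (f₁.coeff r) + padicValInt p (f₂.coeff s) ≤
        padicValInt p (f.coeff i) := by rw [hf]; exact hv
    have h3 : d * (padicValInt p (f₁.coeff r) + padicValInt p (f₂.coeff s)) ≤
        d * padicValInt p (f.coeff i) := Nat.mul_le_mul le_rfl hv'
    have h4 : m * r + m * s = m * i := by rw [← mul_add, hrs]
    have h5 : d * (padicValInt p (f₁.coeff r) + padicValInt p (f₂.coeff s)) =
        d * padicValInt p (f₁.coeff r) + d * padicValInt p (f₂.coeff s) := mul_add _ _ _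
    linarith
  -- equality at the two corner points via L2
  have hminstar : ∀ r s : ℕ, r + s = r₀ + s₀ → (r, s) ≠ (r₀, s₀) →
      f₁.coeff r = 0 ∨ f₂.coeff s = 0 ∨
      padicValInt p (f₁.coeff r₀) + padicValInt p (f₂.coeff s₀) <
        padicValInt p (f₁.coeff r) + padicValInt p (f₂.coeff s) := by
    intro r s hsum hne
    by_cases hbr : f₁.coeff r = 0
    · exact Or.inl hbr
    by_cases hcs : f₂.coeff s = 0
    · exact Or.inr (Or.inl hcs)
    right; right
    have h2 : μ + ν + 1 ≤ (d * padicValInt p (f₁.coeff r) + m * r) +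
        (d * padicValInt p (f₂.coeff s) + m * s) := by
      rcases Nat.lt_trichotomy r r₀ with h | h | h
      · have ha := hμlow r hbr h
        have hb := hνle s hcs
        linarith
      · exfalso
        have hs : s = s₀ := by omega
        exact hne (by rw [h, hs])
      · have hs : s < s₀ := by omega
        have ha := hνlow s hcs hs
        have hb := hμle r hbr
        linarith
    have hmr : m * r + m * s = m * r₀ + m * s₀ := by
      have : m * (r + s) = m * (r₀ + s₀) := by rw [hsum]
      simpa [mul_add] using this
    have h3 : d * padicValInt p (f₁.coeff r₀) + d * padicValInt p (f₂.coeff s₀) + 1 ≤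
        d * padicValInt p (f₁.coeff r) + d * padicValInt p (f₂.coeff s) := by
      linarith [hBr₀, hCs₀]
    have h5 : d * (padicValInt p (f₁.coeff r₀) + padicValInt p (f₂.coeff s₀)) <
        d * (padicValInt p (f₁.coeff r) + padicValInt p (f₂.coeff s)) := by
      rw [mul_add, mul_add]; linarith
    exact Nat.lt_of_mul_lt_mul_left h5
  have hminend : ∀ r s : ℕ, r + s = r₁ + s₁ → (r, s) ≠ (r₁, s₁) →
      f₁.coeff r = 0 ∨ f₂.coeff s = 0 ∨
      padicValInt p (f₁.coeff r₁) + padicValInt p (f₂.coeff s₁) <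
        padicValInt p (f₁.coeff r) + padicValInt p (f₂.coeff s) := by
    intro r s hsum hne
    by_cases hbr : f₁.coeff r = 0
    · exact Or.inl hbr
    by_cases hcs : f₂.coeff s = 0
    · exact Or.inr (Or.inl hcs)
    right; right
    have h2 : μ + ν + 1 ≤ (d * padicValInt p (f₁.coeff r) + m * r) +
        (d * padicValInt p (f₂.coeff s) + m * s) := by
      rcases Nat.lt_trichotomy r₁ r with h | h | h
      · have ha := hμhigh r hbr h
        have hb := hνle s hcs
        linarith
      · exfalso
        have hs : s = s₁ := by omega
        exact hne (by rw [← h, hs])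
      · have hs : s₁ < s := by omega
        have ha := hνhigh s hcs hs
        have hb := hμle r hbr
        linarith
    have hmr : m * r + m * s = m * r₁ + m * s₁ := by
      have : m * (r + s) = m * (r₁ + s₁) := by rw [hsum]
      simpa [mul_add] using this
    have h3 : d * padicValInt p (f₁.coeff r₁) + d * padicValInt p (f₂.coeff s₁) + 1 ≤
        d * padicValInt p (f₁.coeff r) + d * padicValInt p (f₂.coeff s) := by
      linarith [hBr₁, hCs₁]
    have h5 : d * (padicValInt p (f₁.coeff r₁) + padicValInt p (f₂.coeff s₁)) <
        d * (padicValInt p (f₁.coeff r) + padicValInt p (f₂.coeff s)) := by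
      rw [mul_add, mul_add]; linarith
    exact Nat.lt_of_mul_lt_mul_left h5
  obtain ⟨hstar_ne', hstar_v⟩ := stmt9_L2 p f₁ f₂ (r₀ + s₀) r₀ s₀ rfl hb₀ hc₀ hminstar
  obtain ⟨hend_ne', hend_v⟩ := stmt9_L2 p f₁ f₂ (r₁ + s₁) r₁ s₁ rfl hb₁ hc₁ hminend
  have hfstar : f.coeff (r₀ + s₀) ≠ 0 := by rw [hf]; exact hstar_ne'
  have hfend : f.coeff (r₁ + s₁) ≠ 0 := by rw [hf]; exact hend_ne'
  have hAstar : d * padicValInt p (f.coeff (r₀ + s₀)) + m * (r₀ + s₀) = μ + ν := by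
    rw [hf, hstar_v, mul_add m, mul_add d, ← hBr₀, ← hCs₀]
    ring
  have hAend : d * padicValInt p (f.coeff (r₁ + s₁)) + m * (r₁ + s₁) = μ + ν := by
    rw [hf, hend_v, mul_add m, mul_add d, ← hBr₁, ← hCs₁]
    ring
  -- the two corner indices lie in {k, j}
  have hstar_kj : r₀ + s₀ = k ∨ r₀ + s₀ = j := by
    by_contra hcc
    push_neg at hcc
    have h := hAgt (r₀ + s₀) hfstar hcc.1 hcc.2
    rw [hAstar] at h
    exact absurd (lt_of_lt_of_le h hμν_le) (lt_irrefl _)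
  have hend_kj : r₁ + s₁ = k ∨ r₁ + s₁ = j := by
    by_contra hcc
    push_neg at hcc
    have h := hAgt (r₁ + s₁) hfend hcc.1 hcc.2
    rw [hAend] at h
    exact absurd (lt_of_lt_of_le h hμν_le) (lt_irrefl _)
  have hμνj : μ + ν = m * j := by
    rcases hstar_kj with h | h
    · rw [h] at hAstar; exact hAstar.symm.trans hAk
    · rw [h] at hAstar; exact hAstar.symm.trans hAj
  have hk_le : r₀ + s₀ ≤ k := by
    by_contra hcc
    push_neg at hcc
    have h := hlow k hcc hk0
    rw [hAk, ← hμνj] at h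
    omega
  have hj_ge : j ≤ r₁ + s₁ := by
    by_contra hcc
    push_neg at hcc
    have h := hhigh j hcc hfj
    rw [hAj, ← hμνj] at h
    omega
  have hstar_k : r₀ + s₀ = k := by rcases hstar_kj with h | h <;> omega
  have hend_j : r₁ + s₁ = j := by rcases hend_kj with h | h <;> omega
  -- divisibility by d of the window lengths
  have hBeq : d * padicValInt p (f₁.coeff r₀) + m * r₀ =
      d * padicValInt p (f₁.coeff r₁) + m * r₁ := by rw [hBr₀, hBr₁]
  have hCeq : d * padicValInt p (f₂.coeff s₀) + m * s₀ =
      d * padicValInt p (f₂.coeff s₁) + m * s₁ := by rw [hCs₀, hCs₁]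
  have hdvd1 : (d : ℤ) ∣ ((m * (r₁ - r₀) : ℕ) : ℤ) := by
    refine ⟨(padicValInt p (f₁.coeff r₀) : ℤ) - padicValInt p (f₁.coeff r₁), ?_⟩
    have hc : ((d * padicValInt p (f₁.coeff r₀) + m * r₀ : ℕ) : ℤ) =
        ((d * padicValInt p (f₁.coeff r₁) + m * r₁ : ℕ) : ℤ) := by exact_mod_cast hBeq
    push_cast [Nat.cast_sub hr01] at hc ⊢
    linear_combination (-1 : ℤ) * hc
  have hdvd2 : (d : ℤ) ∣ ((m * (s₁ - s₀) : ℕ) : ℤ) := by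
    refine ⟨(padicValInt p (f₂.coeff s₀) : ℤ) - padicValInt p (f₂.coeff s₁), ?_⟩
    have hc : ((d * padicValInt p (f₂.coeff s₀) + m * s₀ : ℕ) : ℤ) =
        ((d * padicValInt p (f₂.coeff s₁) + m * s₁ : ℕ) : ℤ) := by exact_mod_cast hCeq
    push_cast [Nat.cast_sub hs01] at hc ⊢
    linear_combination (-1 : ℤ) * hc
  have hdvd1' : d ∣ m * (r₁ - r₀) := by exact_mod_cast hdvd1
  have hdvd2' : d ∣ m * (s₁ - s₀) := by exact_mod_cast hdvd2
  have hcop : Nat.Coprime d m := Nat.Coprime.symm hgcd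
  have hdr : d ∣ (r₁ - r₀) := hcop.dvd_of_dvd_mul_left hdvd1'
  have hds : d ∣ (s₁ - s₀) := hcop.dvd_of_dvd_mul_left hdvd2'
  -- window lengths are shorter than d, hence zero
  have hdeg1 : f₁.natDegree ≤ d - 1 := by
    clear * - hdsum hd2 hd hk hjn
    omega
  have hdeg2 : f₂.natDegree ≤ d - 1 := by
    clear * - hdsum hd1 hd hk hjn
    omega
  have hr_zero : r₁ - r₀ = 0 := Nat.eq_zero_of_dvd_of_lt hdr (by
    clear * - hr₁deg hdeg1 hdpos
    omega)
  have hs_zero : s₁ - s₀ = 0 := Nat.eq_zero_of_dvd_of_lt hds (by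
    clear * - hs₁deg hdeg2 hdpos
    omega)
  clear * - hr_zero hs_zero hr01 hs01 hstar_k hend_j hk
  omega
end

section
/- Let 𝔽 be a field. In 𝔽(x, y)[z], the polynomial P₃ = y + xz + (1 + xy²)z² + x²yz³ + xyz⁴ factors as P₃ = (1 + xyz²)·(y + xz + z²), and both factors y + xz + z² and 1 + xyz² are irreducible in 𝔽(x,y)[z]. -/
lemma aux_sq {F : Type*} [Field F] {r : RatFunc F} (hr : r ≠ 0) :
    (r ^ 2).intDegree = 2 * r.intDegree := by
  rw [sq, RatFunc.intDegree_mul hr hr]; ring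

lemma aux1 {F : Type*} [Field F] {a r : RatFunc F} (ha : a ≠ 0)
    (hd : a.intDegree = 1) : 1 + a * r ^ 2 ≠ 0 := by
  intro h
  have hr : r ≠ 0 := by rintro rfl; simp at h
  have h2 : a * r ^ 2 = -1 := by linear_combination h
  have := congrArg RatFunc.intDegree h2
  rw [RatFunc.intDegree_mul ha (pow_ne_zero 2 hr), aux_sq hr, hd,
    RatFunc.intDegree_neg, RatFunc.intDegree_one] at this
  omega

lemma aux2 {F : Type*} [Field F] {a r : RatFunc F} (ha : a ≠ 0)
    (hd : a.intDegree = 0) : RatFunc.X + a * r + r ^ 2 ≠ 0 := by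
  intro h
  have hX : (RatFunc.X : RatFunc F) ≠ 0 := RatFunc.X_ne_zero
  have hr : r ≠ 0 := by rintro rfl; simp at h; exact hX h
  have har : a * r ≠ 0 := mul_ne_zero ha hr
  have hr2 : r ^ 2 ≠ 0 := pow_ne_zero 2 hr
  have hdar : (a * r).intDegree = r.intDegree := by
    rw [RatFunc.intDegree_mul ha hr, hd, zero_add]
  have e1 : r ^ 2 = -(RatFunc.X + a * r) := by linear_combination h
  have e2 : (RatFunc.X : RatFunc F) = -(a * r + r ^ 2) := by linear_combination h
  have h1 : (RatFunc.X + a * r : RatFunc F) ≠ 0 := by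
    intro h'; rw [h', neg_zero] at e1; exact hr2 e1
  have h2 : (a * r + r ^ 2 : RatFunc F) ≠ 0 := by
    intro h'; rw [h', neg_zero] at e2; exact hX e2
  have b1 : (r ^ 2).intDegree ≤ max (RatFunc.X : RatFunc F).intDegree (a * r).intDegree := by
    rw [e1, RatFunc.intDegree_neg]; exact RatFunc.intDegree_add_le har h1
  have b2 : (RatFunc.X : RatFunc F).intDegree ≤ max (a * r).intDegree (r ^ 2).intDegree := by
    rw [e2, RatFunc.intDegree_neg]; exact RatFunc.intDegree_add_le hr2 h2
  rw [aux_sq hr, hdar, RatFunc.intDegree_X] at b1 b2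
  omega

lemma irr1 {F : Type*} [Field F] {a : RatFunc F} (ha : a ≠ 0) (hd : a.intDegree = 1) :
    Irreducible (1 + Polynomial.C a * Polynomial.X ^ 2) := by
  have hdeg : (1 + Polynomial.C a * Polynomial.X ^ 2).natDegree = 2 := by
    compute_degree!
  rw [Polynomial.irreducible_iff_roots_eq_zero_of_degree_le_three (by omega) (by omega),
    Multiset.eq_zero_iff_forall_notMem]
  intro r hr
  rw [Polynomial.mem_roots (by intro h0; rw [h0] at hdeg; simp at hdeg),
    Polynomial.IsRoot] at hr
  exact aux1 ha hd (by simpa using hr)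

lemma irr2 {F : Type*} [Field F] {a : RatFunc F} (ha : a ≠ 0) (hd : a.intDegree = 0) :
    Irreducible (Polynomial.C (RatFunc.X : RatFunc F) + Polynomial.C a * Polynomial.X
      + Polynomial.X ^ 2) := by
  have hdeg : (Polynomial.C (RatFunc.X : RatFunc F) + Polynomial.C a * Polynomial.X
      + Polynomial.X ^ 2).natDegree = 2 := by
    compute_degree!
  rw [Polynomial.irreducible_iff_roots_eq_zero_of_degree_le_three (by omega) (by omega),
    Multiset.eq_zero_iff_forall_notMem]
  intro r hr
  rw [Polynomial.mem_roots (by intro h0; rw [h0] at hdeg; simp at hdeg),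
    Polynomial.IsRoot] at hr
  exact aux2 ha hd (by simpa using hr)

/-- Example 3 of the paper: P₃ factors into two irreducible quadratics in 𝔽(x,y)[z]. -/
theorem stmt_12 (𝔽 : Type*) [Field 𝔽] :
    let K := RatFunc (RatFunc 𝔽)
    let x : K := RatFunc.C RatFunc.X
    let y : K := RatFunc.X
    let C : K →+* Polynomial K := Polynomial.C
    let Z : Polynomial K := Polynomial.X
    let P₃ : Polynomial K :=
      C y + C x * Z + C (1 + x * y ^ 2) * Z ^ 2 + C (x ^ 2 * y) * Z ^ 3 + C (x * y) * Z ^ 4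
    P₃ = (1 + C (x * y) * Z ^ 2) * (C y + C x * Z + Z ^ 2) ∧
      Irreducible (1 + C (x * y) * Z ^ 2) ∧ Irreducible (C y + C x * Z + Z ^ 2) := by
  intro K x y C Z P₃
  have hx0 : x ≠ 0 := (_root_.map_ne_zero _).mpr RatFunc.X_ne_zero
  have hy0 : y ≠ 0 := RatFunc.X_ne_zero
  have hxy0 : x * y ≠ 0 := mul_ne_zero hx0 hy0
  have hdx : x.intDegree = 0 := RatFunc.intDegree_C _
  have hdxy : (x * y).intDegree = 1 := by
    rw [RatFunc.intDegree_mul hx0 hy0, hdx, RatFunc.intDegree_X]; ring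
  refine ⟨?_, irr1 hxy0 hdxy, irr2 hx0 hdx⟩
  show C y + C x * Z + C (1 + x * y ^ 2) * Z ^ 2 + C (x ^ 2 * y) * Z ^ 3 + C (x * y) * Z ^ 4
      = (1 + C (x * y) * Z ^ 2) * (C y + C x * Z + Z ^ 2)
  simp only [map_add, map_mul, map_one, map_pow]
  ring
end

section
/- Let K be a field with a surjective valuation v : K → ℤ ∪ {∞}, and let f = a₀ + ⋯ + aₙzⁿ ∈ K[z] satisfy the hypotheses of the generalized Dumas criterion for indices j, k with 1 ≤ k+1 ≤ j ≤ n: v(aⱼ) = 0; v(aₖ)/(j−k) < v(aᵢ)/(j−i) for all 0 ≤ i < j, i ≠ k; if j < n then v(aₖ)/(j−k) > v(aᵢ)/(j−i) for all j < i ≤ n; and gcd(v(aₖ), j−k) = 1. Then f has an irreducible factor in K[z] of degree at least j − k. -/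
namespace Dumas13

variable {K : Type*} [Field K]

noncomputable def uval (v : K → WithTop ℤ) (x : K) : ℤ := (v x).untopD 0

lemma v_ne_top (v : K → WithTop ℤ) (hv0 : ∀ x : K, v x = ⊤ ↔ x = 0) {x : K} (hx : x ≠ 0) :
    v x ≠ ⊤ := fun h => hx ((hv0 x).1 h)

lemma v_coe (v : K → WithTop ℤ) (hv0 : ∀ x : K, v x = ⊤ ↔ x = 0) {x : K} (hx : x ≠ 0) :
    v x = (uval v x : WithTop ℤ) := by
  obtain ⟨a, ha⟩ := WithTop.ne_top_iff_exists.1 (v_ne_top v hv0 hx)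
  rw [← ha]; simp [uval, ← ha]

lemma u_mul (v : K → WithTop ℤ) (hv0 : ∀ x : K, v x = ⊤ ↔ x = 0)
    (hvmul : ∀ x y : K, v (x * y) = v x + v y) {x y : K} (hx : x ≠ 0) (hy : y ≠ 0) :
    uval v (x * y) = uval v x + uval v y := by
  have h := hvmul x y
  rw [v_coe v hv0 (mul_ne_zero hx hy), v_coe v hv0 hx, v_coe v hv0 hy, ← WithTop.coe_add] at h
  exact_mod_cast h

lemma v_neg (v : K → WithTop ℤ) (hv0 : ∀ x : K, v x = ⊤ ↔ x = 0)
    (hvmul : ∀ x y : K, v (x * y) = v x + v y) (x : K) : v (-x) = v x := by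
  have h1 : v ((-1 : K) * (-1 : K)) = v (-1 : K) + v (-1 : K) := hvmul _ _
  have hne : ((-1 : K)) ≠ 0 := by norm_num
  have h1' : v ((1 : K) * (1 : K)) = v (1 : K) + v (1 : K) := hvmul _ _
  rw [mul_one] at h1'
  obtain ⟨a, ha⟩ := WithTop.ne_top_iff_exists.1 (v_ne_top v hv0 (one_ne_zero : (1:K) ≠ 0))
  rw [← ha] at h1'
  have ha0 : a = 0 := by
    have : a = a + a := by exact_mod_cast h1'
    omega
  have hb : ((-1 : K)) * (-1 : K) = 1 := by ring
  rw [hb, ← ha, ha0] at h1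
  obtain ⟨b, hbv⟩ := WithTop.ne_top_iff_exists.1 (v_ne_top v hv0 hne)
  rw [← hbv] at h1
  have hb0 : b = 0 := by
    have : (0 : ℤ) = b + b := by exact_mod_cast h1
    omega
  have : v (-x) = v ((-1 : K) * x) := by ring_nf
  rw [this, hvmul, ← hbv, hb0]
  simp

lemma v_add_eq_left (v : K → WithTop ℤ) (hv0 : ∀ x : K, v x = ⊤ ↔ x = 0)
    (hvmul : ∀ x y : K, v (x * y) = v x + v y)
    (hvadd : ∀ x y : K, min (v x) (v y) ≤ v (x + y))
    {x y : K} (h : v x < v y) : v (x + y) = v x := by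
  have h1 : v x ≤ v (x + y) := by
    have := hvadd x y
    rwa [min_eq_left h.le] at this
  have h2 : v (x + y) ≤ v x := by
    have hx : x = (x + y) + (-y) := by ring
    have h3 : min (v (x + y)) (v (-y)) ≤ v ((x + y) + (-y)) := hvadd _ _
    rw [← hx, v_neg v hv0 hvmul] at h3
    rcases min_le_iff.1 h3 with h4 | h4
    · exact h4
    · exact absurd h4 (not_le.2 h)
  exact le_antisymm h2 h1

lemma v_sum_ge (v : K → WithTop ℤ) (hv0 : ∀ x : K, v x = ⊤ ↔ x = 0)
    (hvadd : ∀ x y : K, min (v x) (v y) ≤ v (x + y))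
    {α : Type*} [DecidableEq α] (s : Finset α) (g : α → K) (C : WithTop ℤ)
    (h : ∀ x ∈ s, C ≤ v (g x)) : C ≤ v (∑ x ∈ s, g x) := by
  induction s using Finset.induction with
  | empty => simp [(hv0 (0 : K)).2 rfl]
  | insert _ _ hx ih =>
    rename_i a s'
    rw [Finset.sum_insert hx]
    refine le_trans (le_min (h a (Finset.mem_insert_self a s')) (ih ?_)) (hvadd _ _)
    exact fun x hxs => h x (Finset.mem_insert_of_mem hxs)

lemma v_sum_dominant (v : K → WithTop ℤ) (hv0 : ∀ x : K, v x = ⊤ ↔ x = 0)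
    (hvmul : ∀ x y : K, v (x * y) = v x + v y)
    (hvadd : ∀ x y : K, min (v x) (v y) ≤ v (x + y))
    {α : Type*} [DecidableEq α] (s : Finset α) (g : α → K) (x0 : α) (hx0 : x0 ∈ s)
    (hdom : ∀ x ∈ s, x ≠ x0 → v (g x0) < v (g x)) :
    v (∑ x ∈ s, g x) = v (g x0) := by
  rw [← Finset.add_sum_erase s g hx0]
  rcases Finset.eq_empty_or_nonempty (s.erase x0) with he | hne
  · simp [he]
  · obtain ⟨y, hy⟩ := hne
    have hvx0 : v (g x0) ≠ ⊤ :=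
      (hdom y (Finset.mem_of_mem_erase hy) (Finset.ne_of_mem_erase hy)).ne_top
    obtain ⟨a, ha⟩ := WithTop.ne_top_iff_exists.1 hvx0
    have hrest : ((a + 1 : ℤ) : WithTop ℤ) ≤ v (∑ x ∈ s.erase x0, g x) := by
      refine v_sum_ge v hv0 hvadd _ _ _ (fun x hx => ?_)
      have hlt := hdom x (Finset.mem_of_mem_erase hx) (Finset.ne_of_mem_erase hx)
      rw [← ha] at hlt
      rcases eq_or_ne (v (g x)) ⊤ with ht | ht
      · simp [ht]
      · obtain ⟨b, hb⟩ := WithTop.ne_top_iff_exists.1 ht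
        rw [← hb] at hlt ⊢
        exact_mod_cast (by exact_mod_cast hlt : a < b)
    refine v_add_eq_left v hv0 hvmul hvadd ?_
    calc v (g x0) = (a : WithTop ℤ) := ha.symm
    _ < ((a + 1 : ℤ) : WithTop ℤ) := by exact_mod_cast lt_add_one a
    _ ≤ _ := hrest

noncomputable def cf (v : K → WithTop ℤ) (d m : ℤ) (p : Polynomial K) (i : ℕ) : ℤ :=
  d * uval v (p.coeff i) + m * i

noncomputable def Aset (v : K → WithTop ℤ) (d m : ℤ) (p : Polynomial K) : Finset ℕ :=
  p.support.filter fun i => ∀ t ∈ p.support, cf v d m p i ≤ cf v d m p t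

lemma Aset_nonempty (v : K → WithTop ℤ) (d m : ℤ) {p : Polynomial K} (hp : p ≠ 0) :
    (Aset v d m p).Nonempty := by
  obtain ⟨i, hi, hmin⟩ := Finset.exists_min_image p.support (cf v d m p)
    (Polynomial.nonempty_support_iff.2 hp)
  exact ⟨i, Finset.mem_filter.2 ⟨hi, hmin⟩⟩

noncomputable def Ilo (v : K → WithTop ℤ) (d m : ℤ) (p : Polynomial K) : ℕ :=
  if h : (Aset v d m p).Nonempty then (Aset v d m p).min' h else 0

noncomputable def Shi (v : K → WithTop ℤ) (d m : ℤ) (p : Polynomial K) : ℕ :=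
  if h : (Aset v d m p).Nonempty then (Aset v d m p).max' h else 0

lemma Ilo_mem (v : K → WithTop ℤ) (d m : ℤ) {p : Polynomial K} (hp : p ≠ 0) :
    Ilo v d m p ∈ Aset v d m p := by
  rw [Ilo, dif_pos (Aset_nonempty v d m hp)]
  exact Finset.min'_mem _ _

lemma Shi_mem (v : K → WithTop ℤ) (d m : ℤ) {p : Polynomial K} (hp : p ≠ 0) :
    Shi v d m p ∈ Aset v d m p := by
  rw [Shi, dif_pos (Aset_nonempty v d m hp)]
  exact Finset.max'_mem _ _

lemma Ilo_le (v : K → WithTop ℤ) (d m : ℤ) {p : Polynomial K} (hp : p ≠ 0)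
    {i : ℕ} (hi : i ∈ Aset v d m p) : Ilo v d m p ≤ i := by
  rw [Ilo, dif_pos (Aset_nonempty v d m hp)]
  exact Finset.min'_le _ _ hi

lemma le_Shi (v : K → WithTop ℤ) (d m : ℤ) {p : Polynomial K} (hp : p ≠ 0)
    {i : ℕ} (hi : i ∈ Aset v d m p) : i ≤ Shi v d m p := by
  rw [Shi, dif_pos (Aset_nonempty v d m hp)]
  exact Finset.le_max' _ _ hi

lemma Ilo_le_Shi (v : K → WithTop ℤ) (d m : ℤ) {p : Polynomial K} (hp : p ≠ 0) :
    Ilo v d m p ≤ Shi v d m p :=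
  le_Shi v d m hp (Ilo_mem v d m hp)

lemma mem_Aset_iff (v : K → WithTop ℤ) (d m : ℤ) (p : Polynomial K) (i : ℕ) :
    i ∈ Aset v d m p ↔ i ∈ p.support ∧ ∀ t ∈ p.support, cf v d m p i ≤ cf v d m p t :=
  Finset.mem_filter

lemma Ilo_support (v : K → WithTop ℤ) (d m : ℤ) {p : Polynomial K} (hp : p ≠ 0) :
    Ilo v d m p ∈ p.support := ((mem_Aset_iff v d m p _).1 (Ilo_mem v d m hp)).1

lemma Shi_support (v : K → WithTop ℤ) (d m : ℤ) {p : Polynomial K} (hp : p ≠ 0) :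
    Shi v d m p ∈ p.support := ((mem_Aset_iff v d m p _).1 (Shi_mem v d m hp)).1

lemma cf_Ilo_le (v : K → WithTop ℤ) (d m : ℤ) {p : Polynomial K} (hp : p ≠ 0)
    {t : ℕ} (ht : t ∈ p.support) : cf v d m p (Ilo v d m p) ≤ cf v d m p t :=
  ((mem_Aset_iff v d m p _).1 (Ilo_mem v d m hp)).2 t ht

lemma cf_Shi_le (v : K → WithTop ℤ) (d m : ℤ) {p : Polynomial K} (hp : p ≠ 0)
    {t : ℕ} (ht : t ∈ p.support) : cf v d m p (Shi v d m p) ≤ cf v d m p t :=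
  ((mem_Aset_iff v d m p _).1 (Shi_mem v d m hp)).2 t ht

lemma cf_Ilo_eq_cf_Shi (v : K → WithTop ℤ) (d m : ℤ) {p : Polynomial K} (hp : p ≠ 0) :
    cf v d m p (Ilo v d m p) = cf v d m p (Shi v d m p) :=
  le_antisymm (cf_Ilo_le v d m hp (Shi_support v d m hp))
    (cf_Shi_le v d m hp (Ilo_support v d m hp))

lemma cf_lt_of_lt_Ilo (v : K → WithTop ℤ) (d m : ℤ) {p : Polynomial K} (hp : p ≠ 0)
    {i : ℕ} (hi : i ∈ p.support) (hlt : i < Ilo v d m p) :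
    cf v d m p (Ilo v d m p) < cf v d m p i := by
  by_contra h
  push_neg at h
  have : i ∈ Aset v d m p := (mem_Aset_iff v d m p i).2
    ⟨hi, fun t ht => le_trans h (cf_Ilo_le v d m hp ht)⟩
  exact absurd (Ilo_le v d m hp this) (not_le.2 hlt)

lemma cf_lt_of_Shi_lt (v : K → WithTop ℤ) (d m : ℤ) {p : Polynomial K} (hp : p ≠ 0)
    {i : ℕ} (hi : i ∈ p.support) (hlt : Shi v d m p < i) :
    cf v d m p (Shi v d m p) < cf v d m p i := by
  by_contra h
  push_neg at h
  have : i ∈ Aset v d m p := (mem_Aset_iff v d m p i).2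
    ⟨hi, fun t ht => le_trans h (cf_Shi_le v d m hp ht)⟩
  exact absurd (le_Shi v d m hp this) (not_le.2 hlt)


lemma v_coeff_mul_I (v : K → WithTop ℤ) (hv0 : ∀ x : K, v x = ⊤ ↔ x = 0)
    (hvmul : ∀ x y : K, v (x * y) = v x + v y)
    (hvadd : ∀ x y : K, min (v x) (v y) ≤ v (x + y))
    (d m : ℤ) (hd : 0 < d) {p q : Polynomial K} (hp : p ≠ 0) (hq : q ≠ 0) :
    v ((p * q).coeff (Ilo v d m p + Ilo v d m q)) =
      ((uval v (p.coeff (Ilo v d m p)) + uval v (q.coeff (Ilo v d m q)) : ℤ) : WithTop ℤ) := by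
  set Ip := Ilo v d m p with hIp
  set Iq := Ilo v d m q with hIq
  have hpI : p.coeff Ip ≠ 0 := Polynomial.mem_support_iff.1 (Ilo_support v d m hp)
  have hqI : q.coeff Iq ≠ 0 := Polynomial.mem_support_iff.1 (Ilo_support v d m hq)
  have hVI : v (p.coeff Ip * q.coeff Iq) =
      ((uval v (p.coeff Ip) + uval v (q.coeff Iq) : ℤ) : WithTop ℤ) := by
    rw [hvmul, v_coe v hv0 hpI, v_coe v hv0 hqI, ← WithTop.coe_add]
  rw [Polynomial.coeff_mul, ← hVI]
  refine v_sum_dominant v hv0 hvmul hvadd _ _ (Ip, Iq) (by simp) ?_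
  rintro ⟨a, b⟩ hab hne
  have hsum : a + b = Ip + Iq := Finset.HasAntidiagonal.mem_antidiagonal.1 hab
  rw [hVI]
  rcases eq_or_ne (p.coeff a) 0 with h0 | ha0
  · rw [h0, zero_mul, (hv0 (0 : K)).2 rfl]
    exact WithTop.coe_lt_top _
  rcases eq_or_ne (q.coeff b) 0 with h0 | hb0
  · rw [h0, mul_zero, (hv0 (0 : K)).2 rfl]
    exact WithTop.coe_lt_top _
  have haS : a ∈ p.support := Polynomial.mem_support_iff.2 ha0
  have hbS : b ∈ q.support := Polynomial.mem_support_iff.2 hb0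
  have hstrict : a < Ip ∨ b < Iq := by
    by_contra hc
    push_neg at hc
    have ha : a = Ip ∧ b = Iq := by omega
    exact hne (by simp [Prod.ext_iff, ha.1, ha.2])
  have h3 : cf v d m p Ip + cf v d m q Iq < cf v d m p a + cf v d m q b := by
    rcases hstrict with h | h
    · exact add_lt_add_of_lt_of_le (cf_lt_of_lt_Ilo v d m hp haS h)
        (cf_Ilo_le v d m hq hbS)
    · exact add_lt_add_of_le_of_lt (cf_Ilo_le v d m hp haS)
        (cf_lt_of_lt_Ilo v d m hq hbS h)
  have key : uval v (p.coeff Ip) + uval v (q.coeff Iq) <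
      uval v (p.coeff a) + uval v (q.coeff b) := by
    unfold cf at h3
    have hcast : (a : ℤ) + b = (Ip : ℤ) + Iq := by exact_mod_cast hsum
    have hm : m * (a : ℤ) + m * (b : ℤ) = m * (Ip : ℤ) + m * (Iq : ℤ) := by
      rw [← mul_add, ← mul_add, hcast]
    have hdd : d * (uval v (p.coeff Ip) + uval v (q.coeff Iq)) <
        d * (uval v (p.coeff a) + uval v (q.coeff b)) := by ring_nf; ring_nf at h3; linarith
    exact lt_of_mul_lt_mul_left hdd hd.le
  rw [hvmul, v_coe v hv0 ha0, v_coe v hv0 hb0, ← WithTop.coe_add]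
  exact_mod_cast key

lemma v_coeff_mul_S (v : K → WithTop ℤ) (hv0 : ∀ x : K, v x = ⊤ ↔ x = 0)
    (hvmul : ∀ x y : K, v (x * y) = v x + v y)
    (hvadd : ∀ x y : K, min (v x) (v y) ≤ v (x + y))
    (d m : ℤ) (hd : 0 < d) {p q : Polynomial K} (hp : p ≠ 0) (hq : q ≠ 0) :
    v ((p * q).coeff (Shi v d m p + Shi v d m q)) =
      ((uval v (p.coeff (Shi v d m p)) + uval v (q.coeff (Shi v d m q)) : ℤ) : WithTop ℤ) := by
  set Sp := Shi v d m p with hSp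
  set Sq := Shi v d m q with hSq
  have hpI : p.coeff Sp ≠ 0 := Polynomial.mem_support_iff.1 (Shi_support v d m hp)
  have hqI : q.coeff Sq ≠ 0 := Polynomial.mem_support_iff.1 (Shi_support v d m hq)
  have hVI : v (p.coeff Sp * q.coeff Sq) =
      ((uval v (p.coeff Sp) + uval v (q.coeff Sq) : ℤ) : WithTop ℤ) := by
    rw [hvmul, v_coe v hv0 hpI, v_coe v hv0 hqI, ← WithTop.coe_add]
  rw [Polynomial.coeff_mul, ← hVI]
  refine v_sum_dominant v hv0 hvmul hvadd _ _ (Sp, Sq) (by simp) ?_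
  rintro ⟨a, b⟩ hab hne
  have hsum : a + b = Sp + Sq := Finset.HasAntidiagonal.mem_antidiagonal.1 hab
  rw [hVI]
  rcases eq_or_ne (p.coeff a) 0 with h0 | ha0
  · rw [h0, zero_mul, (hv0 (0 : K)).2 rfl]
    exact WithTop.coe_lt_top _
  rcases eq_or_ne (q.coeff b) 0 with h0 | hb0
  · rw [h0, mul_zero, (hv0 (0 : K)).2 rfl]
    exact WithTop.coe_lt_top _
  have haS : a ∈ p.support := Polynomial.mem_support_iff.2 ha0
  have hbS : b ∈ q.support := Polynomial.mem_support_iff.2 hb0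
  have hstrict : Sp < a ∨ Sq < b := by
    by_contra hc
    push_neg at hc
    have ha : a = Sp ∧ b = Sq := by omega
    exact hne (by simp [Prod.ext_iff, ha.1, ha.2])
  have h3 : cf v d m p Sp + cf v d m q Sq < cf v d m p a + cf v d m q b := by
    rcases hstrict with h | h
    · exact add_lt_add_of_lt_of_le (cf_lt_of_Shi_lt v d m hp haS h)
        (cf_Shi_le v d m hq hbS)
    · exact add_lt_add_of_le_of_lt (cf_Shi_le v d m hp haS)
        (cf_lt_of_Shi_lt v d m hq hbS h)
  have key : uval v (p.coeff Sp) + uval v (q.coeff Sq) <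
      uval v (p.coeff a) + uval v (q.coeff b) := by
    unfold cf at h3
    have hcast : (a : ℤ) + b = (Sp : ℤ) + Sq := by exact_mod_cast hsum
    have hm : m * (a : ℤ) + m * (b : ℤ) = m * (Sp : ℤ) + m * (Sq : ℤ) := by
      rw [← mul_add, ← mul_add, hcast]
    have hdd : d * (uval v (p.coeff Sp) + uval v (q.coeff Sq)) <
        d * (uval v (p.coeff a) + uval v (q.coeff b)) := by ring_nf; ring_nf at h3; linarith
    exact lt_of_mul_lt_mul_left hdd hd.le
  rw [hvmul, v_coe v hv0 ha0, v_coe v hv0 hb0, ← WithTop.coe_add]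
  exact_mod_cast key

lemma cf_mul_ge (v : K → WithTop ℤ) (hv0 : ∀ x : K, v x = ⊤ ↔ x = 0)
    (hvmul : ∀ x y : K, v (x * y) = v x + v y)
    (hvadd : ∀ x y : K, min (v x) (v y) ≤ v (x + y))
    (d m : ℤ) (hd : 0 < d) {p q : Polynomial K} (hp : p ≠ 0) (hq : q ≠ 0)
    {s : ℕ} (hs : s ∈ (p * q).support) :
    (cf v d m p (Ilo v d m p) + cf v d m q (Ilo v d m q) ≤ cf v d m (p * q) s) ∧
    (s < Ilo v d m p + Ilo v d m q →
      cf v d m p (Ilo v d m p) + cf v d m q (Ilo v d m q) < cf v d m (p * q) s) ∧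
    (Shi v d m p + Shi v d m q < s →
      cf v d m p (Ilo v d m p) + cf v d m q (Ilo v d m q) < cf v d m (p * q) s) := by
  have hcs : (p * q).coeff s ≠ 0 := Polynomial.mem_support_iff.1 hs
  obtain ⟨x, hxmem, hxmin⟩ := Finset.exists_min_image (Finset.HasAntidiagonal.antidiagonal s)
    (fun x : ℕ × ℕ => v (p.coeff x.1 * q.coeff x.2)) ⟨(0, s), by simp⟩
  have hge : v (p.coeff x.1 * q.coeff x.2) ≤ v ((p * q).coeff s) := by
    rw [Polynomial.coeff_mul]
    exact v_sum_ge v hv0 hvadd _ _ _ hxmin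
  have hx0 : p.coeff x.1 * q.coeff x.2 ≠ 0 := by
    intro h
    rw [h, (hv0 (0 : K)).2 rfl, top_le_iff] at hge
    exact hcs ((hv0 _).1 hge)
  have ha0 : p.coeff x.1 ≠ 0 := fun h => hx0 (by rw [h, zero_mul])
  have hb0 : q.coeff x.2 ≠ 0 := fun h => hx0 (by rw [h, mul_zero])
  have haS : x.1 ∈ p.support := Polynomial.mem_support_iff.2 ha0
  have hbS : x.2 ∈ q.support := Polynomial.mem_support_iff.2 hb0
  have hsum : x.1 + x.2 = s := Finset.HasAntidiagonal.mem_antidiagonal.1 hxmem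
  have hu : uval v (p.coeff x.1) + uval v (q.coeff x.2) ≤ uval v ((p * q).coeff s) := by
    rw [hvmul, v_coe v hv0 ha0, v_coe v hv0 hb0, ← WithTop.coe_add,
      v_coe v hv0 hcs] at hge
    exact_mod_cast hge
  have hcfs : cf v d m p x.1 + cf v d m q x.2 ≤ cf v d m (p * q) s := by
    unfold cf
    have hcast : (x.1 : ℤ) + x.2 = (s : ℤ) := by exact_mod_cast hsum
    have hm : m * (x.1 : ℤ) + m * (x.2 : ℤ) = m * (s : ℤ) := by
      rw [← mul_add, hcast]
    have hdd := mul_le_mul_of_nonneg_left hu hd.le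
    linarith
  have h1 : cf v d m p (Ilo v d m p) ≤ cf v d m p x.1 := cf_Ilo_le v d m hp haS
  have h2 : cf v d m q (Ilo v d m q) ≤ cf v d m q x.2 := cf_Ilo_le v d m hq hbS
  refine ⟨by linarith, ?_, ?_⟩
  · intro hlt
    have : x.1 < Ilo v d m p ∨ x.2 < Ilo v d m q := by omega
    rcases this with h | h
    · have := cf_lt_of_lt_Ilo v d m hp haS h
      linarith
    · have := cf_lt_of_lt_Ilo v d m hq hbS h
      linarith
  · intro hlt
    have heq : cf v d m p (Ilo v d m p) + cf v d m q (Ilo v d m q) =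
        cf v d m p (Shi v d m p) + cf v d m q (Shi v d m q) := by
      rw [cf_Ilo_eq_cf_Shi v d m hp, cf_Ilo_eq_cf_Shi v d m hq]
    have h1' : cf v d m p (Shi v d m p) ≤ cf v d m p x.1 := cf_Shi_le v d m hp haS
    have h2' : cf v d m q (Shi v d m q) ≤ cf v d m q x.2 := cf_Shi_le v d m hq hbS
    have : Shi v d m p < x.1 ∨ Shi v d m q < x.2 := by omega
    rcases this with h | h
    · have := cf_lt_of_Shi_lt v d m hp haS h
      linarith
    · have := cf_lt_of_Shi_lt v d m hq hbS h
      linarith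

lemma Ilo_mul (v : K → WithTop ℤ) (hv0 : ∀ x : K, v x = ⊤ ↔ x = 0)
    (hvmul : ∀ x y : K, v (x * y) = v x + v y)
    (hvadd : ∀ x y : K, min (v x) (v y) ≤ v (x + y))
    (d m : ℤ) (hd : 0 < d) {p q : Polynomial K} (hp : p ≠ 0) (hq : q ≠ 0) :
    Ilo v d m (p * q) = Ilo v d m p + Ilo v d m q := by
  have hpq : p * q ≠ 0 := mul_ne_zero hp hq
  set t0 := Ilo v d m p + Ilo v d m q with ht0def
  have hv1 := v_coeff_mul_I v hv0 hvmul hvadd d m hd hp hq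
  have ht0ne : (p * q).coeff t0 ≠ 0 := by
    intro h
    rw [h, (hv0 (0 : K)).2 rfl] at hv1
    exact (WithTop.coe_ne_top (α := ℤ)) hv1.symm
  have ht0 : t0 ∈ (p * q).support := Polynomial.mem_support_iff.2 ht0ne
  have huv : uval v ((p * q).coeff t0) =
      uval v (p.coeff (Ilo v d m p)) + uval v (q.coeff (Ilo v d m q)) := by
    have h2 := v_coe v hv0 ht0ne
    rw [ht0def] at h2
    rw [hv1] at h2
    exact_mod_cast h2.symm
  have hcf0 : cf v d m (p * q) t0 =
      cf v d m p (Ilo v d m p) + cf v d m q (Ilo v d m q) := by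
    unfold cf
    rw [huv]
    push_cast [ht0def]
    ring
  have hA : t0 ∈ Aset v d m (p * q) := (mem_Aset_iff v d m _ _).2
    ⟨ht0, fun t ht => by
      rw [hcf0]
      exact (cf_mul_ge v hv0 hvmul hvadd d m hd hp hq ht).1⟩
  refine le_antisymm (Ilo_le v d m hpq hA) ?_
  by_contra hc
  push_neg at hc
  have hstr := (cf_mul_ge v hv0 hvmul hvadd d m hd hp hq
    (Ilo_support v d m hpq)).2.1 hc
  have hle : cf v d m (p * q) (Ilo v d m (p * q)) ≤ cf v d m (p * q) t0 :=
    cf_Ilo_le v d m hpq ht0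
  rw [hcf0] at hle
  linarith

lemma Shi_mul (v : K → WithTop ℤ) (hv0 : ∀ x : K, v x = ⊤ ↔ x = 0)
    (hvmul : ∀ x y : K, v (x * y) = v x + v y)
    (hvadd : ∀ x y : K, min (v x) (v y) ≤ v (x + y))
    (d m : ℤ) (hd : 0 < d) {p q : Polynomial K} (hp : p ≠ 0) (hq : q ≠ 0) :
    Shi v d m (p * q) = Shi v d m p + Shi v d m q := by
  have hpq : p * q ≠ 0 := mul_ne_zero hp hq
  set t0 := Shi v d m p + Shi v d m q with ht0def
  have hv1 := v_coeff_mul_S v hv0 hvmul hvadd d m hd hp hq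
  have ht0ne : (p * q).coeff t0 ≠ 0 := by
    intro h
    rw [h, (hv0 (0 : K)).2 rfl] at hv1
    exact (WithTop.coe_ne_top (α := ℤ)) hv1.symm
  have ht0 : t0 ∈ (p * q).support := Polynomial.mem_support_iff.2 ht0ne
  have huv : uval v ((p * q).coeff t0) =
      uval v (p.coeff (Shi v d m p)) + uval v (q.coeff (Shi v d m q)) := by
    have h2 := v_coe v hv0 ht0ne
    rw [ht0def] at h2
    rw [hv1] at h2
    exact_mod_cast h2.symm
  have hcf0 : cf v d m (p * q) t0 =
      cf v d m p (Ilo v d m p) + cf v d m q (Ilo v d m q) := by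
    unfold cf
    rw [huv]
    have e1 := cf_Ilo_eq_cf_Shi v d m hp
    have e2 := cf_Ilo_eq_cf_Shi v d m hq
    unfold cf at e1 e2
    push_cast [ht0def]
    linarith
  have hA : t0 ∈ Aset v d m (p * q) := (mem_Aset_iff v d m _ _).2
    ⟨ht0, fun t ht => by
      rw [hcf0]
      exact (cf_mul_ge v hv0 hvmul hvadd d m hd hp hq ht).1⟩
  refine le_antisymm ?_ (le_Shi v d m hpq hA)
  by_contra hc
  push_neg at hc
  have hstr := (cf_mul_ge v hv0 hvmul hvadd d m hd hp hq
    (Shi_support v d m hpq)).2.2 hc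
  have hle : cf v d m (p * q) (Shi v d m (p * q)) ≤ cf v d m (p * q) t0 :=
    cf_Shi_le v d m hpq ht0
  rw [hcf0] at hle
  linarith


lemma d_dvd_sub (v : K → WithTop ℤ) (d m : ℤ) (hcop : IsCoprime d m)
    {p : Polynomial K} (hp : p ≠ 0) :
    d ∣ ((Shi v d m p : ℤ) - (Ilo v d m p : ℤ)) := by
  have h := cf_Ilo_eq_cf_Shi v d m hp
  unfold cf at h
  have hdvd : d ∣ m * ((Shi v d m p : ℤ) - (Ilo v d m p : ℤ)) := by
    refine ⟨uval v (p.coeff (Ilo v d m p)) - uval v (p.coeff (Shi v d m p)), ?_⟩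
    ring_nf
    ring_nf at h
    linarith
  exact hcop.dvd_of_dvd_mul_left hdvd

lemma exists_irred_factor (v : K → WithTop ℤ) (hv0 : ∀ x : K, v x = ⊤ ↔ x = 0)
    (hvmul : ∀ x y : K, v (x * y) = v x + v y)
    (hvadd : ∀ x y : K, min (v x) (v y) ≤ v (x + y))
    (d m : ℤ) (hd : 0 < d) :
    ∀ N : ℕ, ∀ p : Polynomial K, p ≠ 0 → p.natDegree ≤ N →
      Ilo v d m p < Shi v d m p →
      ∃ g : Polynomial K, Irreducible g ∧ g ∣ p ∧ Ilo v d m g < Shi v d m g := by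
  intro N
  induction N with
  | zero =>
    intro p hp hdeg hIS
    exfalso
    have h1 : Ilo v d m p ≤ p.natDegree := Polynomial.le_natDegree_of_mem_supp _
      (Ilo_support v d m hp)
    have h2 : Shi v d m p ≤ p.natDegree := Polynomial.le_natDegree_of_mem_supp _
      (Shi_support v d m hp)
    omega
  | succ N ih =>
    intro p hp hdeg hIS
    by_cases hirr : Irreducible p
    · exact ⟨p, hirr, dvd_rfl, hIS⟩
    have hunit : ¬ IsUnit p := by
      intro hu
      have hnd : p.natDegree = 0 := Polynomial.natDegree_eq_zero_of_isUnit hu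
      have h1 : Ilo v d m p ≤ p.natDegree := Polynomial.le_natDegree_of_mem_supp _
        (Ilo_support v d m hp)
      have h2 : Shi v d m p ≤ p.natDegree := Polynomial.le_natDegree_of_mem_supp _
        (Shi_support v d m hp)
      omega
    obtain ⟨a, b, hab, ha, hb⟩ : ∃ a b : Polynomial K, p = a * b ∧ ¬ IsUnit a ∧ ¬ IsUnit b := by
      by_contra h
      push_neg at h
      exact hirr ⟨hunit, fun a b hab => by
        by_contra hc
        push_neg at hc
        exact hc.2 (h a b hab hc.1)⟩
    have ha0 : a ≠ 0 := by rintro rfl; exact hp (by simp [hab])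
    have hb0 : b ≠ 0 := by rintro rfl; exact hp (by simp [hab])
    have hdega : 1 ≤ a.natDegree := by
      rcases Nat.eq_zero_or_pos a.natDegree with h | h
      · exact absurd (Polynomial.isUnit_iff_degree_eq_zero.2
          (by rw [Polynomial.degree_eq_natDegree ha0, h]; rfl)) ha
      · exact h
    have hdegb : 1 ≤ b.natDegree := by
      rcases Nat.eq_zero_or_pos b.natDegree with h | h
      · exact absurd (Polynomial.isUnit_iff_degree_eq_zero.2
          (by rw [Polynomial.degree_eq_natDegree hb0, h]; rfl)) hb
      · exact h
    have hnd : p.natDegree = a.natDegree + b.natDegree := by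
      rw [hab]; exact Polynomial.natDegree_mul ha0 hb0
    have hImul : Ilo v d m p = Ilo v d m a + Ilo v d m b := by
      rw [hab]; exact Ilo_mul v hv0 hvmul hvadd d m hd ha0 hb0
    have hSmul : Shi v d m p = Shi v d m a + Shi v d m b := by
      rw [hab]; exact Shi_mul v hv0 hvmul hvadd d m hd ha0 hb0
    have hIa : Ilo v d m a ≤ Shi v d m a := Ilo_le_Shi v d m ha0
    have hIb : Ilo v d m b ≤ Shi v d m b := Ilo_le_Shi v d m hb0
    have hcase : Ilo v d m a < Shi v d m a ∨ Ilo v d m b < Shi v d m b := by omega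
    rcases hcase with h | h
    · obtain ⟨g, hg1, hg2, hg3⟩ := ih a ha0 (by omega) h
      exact ⟨g, hg1, hg2.trans ⟨b, hab⟩, hg3⟩
    · obtain ⟨g, hg1, hg2, hg3⟩ := ih b hb0 (by omega) h
      exact ⟨g, hg1, hg2.trans ⟨a, by rw [hab]; ring⟩, hg3⟩

end Dumas13

/-- Under the hypotheses of the generalized Dumas criterion, f has an irreducible
factor of degree at least j - k. -/
theorem stmt_13 {K : Type*} [Field K] (v : K → WithTop ℤ)
    (hv0 : ∀ x : K, v x = ⊤ ↔ x = 0)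
    (hvmul : ∀ x y : K, v (x * y) = v x + v y)
    (hvadd : ∀ x y : K, min (v x) (v y) ≤ v (x + y))
    (hvsurj : ∀ g : ℤ, ∃ x : K, v x = (g : WithTop ℤ))
    (f : Polynomial K) (n j k : ℕ) (m : ℤ)
    (hdeg : f.natDegree = n) (hk : k + 1 ≤ j) (hjn : j ≤ n)
    (hvj : v (f.coeff j) = 0)
    (hvk : v (f.coeff k) = (m : WithTop ℤ))
    (hii : ∀ i : ℕ, i < j → i ≠ k →
      ((((j : ℤ) - i) * m : ℤ) : WithTop ℤ) < ((((j : ℤ) - k) : ℤ) : WithTop ℤ) * v (f.coeff i))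
    (hiii : j < n → ∀ i : ℕ, j < i → i ≤ n →
      ((((j : ℤ) - i) * m : ℤ) : WithTop ℤ) < ((((j : ℤ) - k) : ℤ) : WithTop ℤ) * v (f.coeff i))
    (hgcd : Int.gcd m ((j : ℤ) - k) = 1) :
    ∃ g : Polynomial K, Irreducible g ∧ g ∣ f ∧ j - k ≤ g.natDegree := by
  classical
  set d : ℤ := (j : ℤ) - k with hddef
  have hd : 0 < d := by rw [hddef]; push_cast; omega
  have hajne : f.coeff j ≠ 0 := by
    intro h
    rw [h, (hv0 (0 : K)).2 rfl] at hvj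
    simp at hvj
  have hakne : f.coeff k ≠ 0 := by
    intro h
    rw [h, (hv0 (0 : K)).2 rfl] at hvk
    simp at hvk
  have hf0 : f ≠ 0 := fun h => hajne (by simp [h])
  have hjS : j ∈ f.support := Polynomial.mem_support_iff.2 hajne
  have hkS : k ∈ f.support := Polynomial.mem_support_iff.2 hakne
  have huj : Dumas13.uval v (f.coeff j) = 0 := by
    unfold Dumas13.uval
    rw [hvj]
    simp
  have huk : Dumas13.uval v (f.coeff k) = m := by
    unfold Dumas13.uval
    rw [hvk]
    simp
  have hcfk : Dumas13.cf v d m f k = m * j := by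
    unfold Dumas13.cf
    rw [huk, hddef]
    ring
  have hcfj : Dumas13.cf v d m f j = m * j := by
    unfold Dumas13.cf
    rw [huj]
    ring
  have hmin : ∀ i ∈ f.support,
      m * j ≤ Dumas13.cf v d m f i ∧
        (i ≠ k → i ≠ j → m * j < Dumas13.cf v d m f i) := by
    intro i hi
    have hin : i ≤ n := hdeg ▸ Polynomial.le_natDegree_of_mem_supp i hi
    have hine : f.coeff i ≠ 0 := Polynomial.mem_support_iff.1 hi
    by_cases hik : i = k
    · subst hik
      exact ⟨le_of_eq hcfk.symm, fun h _ => absurd rfl h⟩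
    by_cases hij : i = j
    · subst hij
      exact ⟨le_of_eq hcfj.symm, fun _ h => absurd rfl h⟩
    have hvi : v (f.coeff i) = ((Dumas13.uval v (f.coeff i) : ℤ) : WithTop ℤ) :=
      Dumas13.v_coe v hv0 hine
    have hstrict : m * j < Dumas13.cf v d m f i := by
      have hkey : ∀ h : ((((j : ℤ) - i) * m : ℤ) : WithTop ℤ) <
          ((d : ℤ) : WithTop ℤ) * v (f.coeff i), m * j < Dumas13.cf v d m f i := by
        intro h
        rw [hvi, ← WithTop.coe_mul] at h
        have h' : ((j : ℤ) - i) * m < d * Dumas13.uval v (f.coeff i) := by exact_mod_cast h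
        unfold Dumas13.cf
        nlinarith [h']
      rcases lt_or_gt_of_ne (fun h : i = j => hij h) with hlt | hgt
      · exact hkey (hii i hlt hik)
      · have hjn' : j < n := lt_of_lt_of_le hgt hin
        exact hkey (hiii hjn' i hgt hin)
    exact ⟨hstrict.le, fun _ _ => hstrict⟩
  have hkA : k ∈ Dumas13.Aset v d m f := (Dumas13.mem_Aset_iff v d m f k).2
    ⟨hkS, fun t ht => by rw [hcfk]; exact (hmin t ht).1⟩
  have hjA : j ∈ Dumas13.Aset v d m f := (Dumas13.mem_Aset_iff v d m f j).2
    ⟨hjS, fun t ht => by rw [hcfj]; exact (hmin t ht).1⟩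
  have hIlo : Dumas13.Ilo v d m f = k := by
    have h1 : Dumas13.Ilo v d m f ≤ k := Dumas13.Ilo_le v d m hf0 hkA
    have h2 : Dumas13.Ilo v d m f ∈ f.support := Dumas13.Ilo_support v d m hf0
    have h3 : Dumas13.cf v d m f (Dumas13.Ilo v d m f) ≤ m * j := by
      rw [← hcfk]
      exact Dumas13.cf_Ilo_le v d m hf0 hkS
    by_contra hne
    have hnej : Dumas13.Ilo v d m f ≠ j := by omega
    have := (hmin _ h2).2 hne hnej
    linarith
  have hShi : Dumas13.Shi v d m f = j := by
    have h1 : j ≤ Dumas13.Shi v d m f := Dumas13.le_Shi v d m hf0 hjA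
    have h2 : Dumas13.Shi v d m f ∈ f.support := Dumas13.Shi_support v d m hf0
    have h3 : Dumas13.cf v d m f (Dumas13.Shi v d m f) ≤ m * j := by
      rw [← hcfj]
      exact Dumas13.cf_Shi_le v d m hf0 hjS
    by_contra hne
    have hnek : Dumas13.Shi v d m f ≠ k := by omega
    have := (hmin _ h2).2 hnek hne
    linarith
  obtain ⟨g, hg1, hg2, hg3⟩ := Dumas13.exists_irred_factor v hv0 hvmul hvadd d m hd
    f.natDegree f hf0 le_rfl (by rw [hIlo, hShi]; omega)
  refine ⟨g, hg1, hg2, ?_⟩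
  have hg0 : g ≠ 0 := hg1.ne_zero
  have hcop : IsCoprime d m := (Int.isCoprime_iff_gcd_eq_one.2 hgcd).symm
  have hdvd := Dumas13.d_dvd_sub v d m hcop hg0
  have hS : Dumas13.Shi v d m g ≤ g.natDegree :=
    Polynomial.le_natDegree_of_mem_supp _ (Dumas13.Shi_support v d m hg0)
  have hpos : (0 : ℤ) < (Dumas13.Shi v d m g : ℤ) - (Dumas13.Ilo v d m g : ℤ) := by
    have : (Dumas13.Ilo v d m g : ℤ) < (Dumas13.Shi v d m g : ℤ) := by exact_mod_cast hg3
    linarith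
  have hdle : d ≤ (Dumas13.Shi v d m g : ℤ) - (Dumas13.Ilo v d m g : ℤ) :=
    Int.le_of_dvd hpos hdvd
  have hSc : ((Dumas13.Shi v d m g : ℤ)) ≤ (g.natDegree : ℤ) := by exact_mod_cast hS
  have hIc : (0 : ℤ) ≤ (Dumas13.Ilo v d m g : ℤ) := Int.natCast_nonneg _
  have hfin : (j : ℤ) - (k : ℤ) ≤ (g.natDegree : ℤ) := by
    rw [hddef] at hdle
    linarith
  omega
end

section
/- Let K be a field with a surjective valuation v : K → ℤ ∪ {∞}, and let f ∈ K[z] of degree n satisfy: v(aₙ) = 0, v(a₀) = 1, and n·v(aᵢ) ≥ n − i for all 0 ≤ i ≤ n−1 (i.e., v(a₀)/n ≤ v(aᵢ)/(n−i)). Then f is irreducible in K[z]. -/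
open Polynomial

/-- Order-reversing map from `WithTop ℤ` to `ℤₘ₀`. -/
noncomputable def eAux : WithTop ℤ → WithZero (Multiplicative ℤ)
  | ⊤ => 0
  | (z : ℤ) => ((Multiplicative.ofAdd (-z) : Multiplicative ℤ) : WithZero (Multiplicative ℤ))

@[simp] lemma eAux_top : eAux ⊤ = 0 := rfl
@[simp] lemma eAux_coe (z : ℤ) :
    eAux (z : WithTop ℤ) = ((Multiplicative.ofAdd (-z) : Multiplicative ℤ) :
      WithZero (Multiplicative ℤ)) := rfl

lemma eAux_add (a b : WithTop ℤ) : eAux (a + b) = eAux a * eAux b := by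
  induction a using WithTop.recTopCoe with
  | top => rw [top_add, eAux_top, zero_mul]
  | coe a =>
    induction b using WithTop.recTopCoe with
    | top => rw [add_top, eAux_top, mul_zero]
    | coe b =>
      rw [← WithTop.coe_add, eAux_coe, eAux_coe, eAux_coe, ← WithZero.coe_mul]
      congr 1
      rw [← ofAdd_add]
      congr 1
      ring

lemma eAux_le_eAux (a b : WithTop ℤ) (h : a ≤ b) : eAux b ≤ eAux a := by
  induction b using WithTop.recTopCoe with
  | top => rw [eAux_top]; exact zero_le'
  | coe b =>
    induction a using WithTop.recTopCoe with
    | top => exact absurd h (by simp)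
    | coe a =>
      rw [eAux_coe, eAux_coe, WithZero.coe_le_coe, Multiplicative.ofAdd_le]
      have : a ≤ b := by exact_mod_cast h
      omega

lemma eAux_min (a b : WithTop ℤ) : eAux (min a b) = max (eAux a) (eAux b) := by
  rcases le_total a b with h | h
  · rw [min_eq_left h, max_eq_left (eAux_le_eAux a b h)]
  · rw [min_eq_right h, max_eq_right (eAux_le_eAux b a h)]

lemma eAux_le_one_iff (a : WithTop ℤ) : eAux a ≤ 1 ↔ 0 ≤ a := by
  induction a using WithTop.recTopCoe with
  | top => simp
  | coe a =>
    rw [eAux_coe, ← WithZero.coe_one, WithZero.coe_le_coe,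
      show (1 : Multiplicative ℤ) = Multiplicative.ofAdd 0 from rfl, Multiplicative.ofAdd_le]
    constructor
    · intro h
      exact_mod_cast (by omega : (0:ℤ) ≤ a)
    · intro h
      have h2 : (0:ℤ) ≤ a := by exact_mod_cast h
      omega

/-- Generalized Eisenstein criterion over a discretely valued field: if v(aₙ) = 0,
v(a₀) = 1 and n·v(aᵢ) ≥ n - i for all i < n, then f is irreducible. -/
theorem stmt_15 {K : Type*} [Field K] (v : K → WithTop ℤ)
    (hv0 : ∀ x : K, v x = ⊤ ↔ x = 0)
    (hvmul : ∀ x y : K, v (x * y) = v x + v y)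
    (hvadd : ∀ x y : K, min (v x) (v y) ≤ v (x + y))
    (hvsurj : ∀ g : ℤ, ∃ x : K, v x = (g : WithTop ℤ))
    (f : Polynomial K) (n : ℕ)
    (hdeg : f.natDegree = n)
    (hvn : v (f.coeff n) = 0)
    (hv0' : v (f.coeff 0) = (1 : WithTop ℤ))
    (hii : ∀ i : ℕ, i < n →
      ((((n : ℤ) - i) : ℤ) : WithTop ℤ) ≤ ((n : ℕ) : WithTop ℤ) * v (f.coeff i)) :
    Irreducible f := by
  classical
  -- basic facts about v
  have hvzero : v 0 = ⊤ := (hv0 0).mpr rfl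
  have hv1 : v 1 = 0 := by
    have h := hvmul 1 1
    rw [mul_one] at h
    obtain ⟨z, hz⟩ := WithTop.ne_top_iff_exists.mp
      (fun ht => one_ne_zero ((hv0 1).mp ht))
    rw [← hz, ← WithTop.coe_add, WithTop.coe_eq_coe] at h
    have hz0 : z = 0 := by omega
    rw [← hz, hz0]
    norm_num
  -- the multiplicative valuation
  set w : Valuation K (WithZero (Multiplicative ℤ)) :=
    { toFun := fun x => eAux (v x)
      map_zero' := by show eAux (v 0) = 0; rw [hvzero, eAux_top]
      map_one' := by
        show eAux (v 1) = 1
        rw [hv1]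
        rw [show (0 : WithTop ℤ) = ((0:ℤ) : WithTop ℤ) by norm_num, eAux_coe]
        simp
      map_mul' := fun x y => by
        show eAux (v (x * y)) = eAux (v x) * eAux (v y)
        rw [hvmul]; exact eAux_add _ _
      map_add_le_max' := fun x y => by
        show eAux (v (x + y)) ≤ max (eAux (v x)) (eAux (v y))
        calc eAux (v (x + y)) ≤ eAux (min (v x) (v y)) := eAux_le_eAux _ _ (hvadd x y)
          _ = max (eAux (v x)) (eAux (v y)) := eAux_min _ _ } with hw
  have hwval : ∀ x : K, w x = eAux (v x) := fun x => rfl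
  have hmem : ∀ x : K, x ∈ w.integer ↔ 0 ≤ v x := by
    intro x
    rw [Valuation.mem_integer_iff, hwval, eAux_le_one_iff]
  -- degree is positive
  have hn0 : 0 < n := by
    rcases Nat.eq_zero_or_pos n with h | h
    · rw [h] at hvn; rw [hvn] at hv0'; exact absurd hv0' (by norm_num)
    · exact h
  have han : f.coeff n ≠ 0 := fun h => by
    rw [h, hvzero] at hvn; exact absurd hvn (by simp)
  have hf0 : f ≠ 0 := fun h => han (by simp [h])
  have hlc : f.leadingCoeff = f.coeff n := by rw [leadingCoeff, hdeg]
  -- v of the inverse of the leading coefficient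
  have haninv : v (f.coeff n)⁻¹ = 0 := by
    have h := hvmul (f.coeff n) (f.coeff n)⁻¹
    rw [mul_inv_cancel₀ han, hv1, hvn, zero_add] at h
    exact h.symm
  -- the monic rescaling
  set g : Polynomial K := f * C (f.coeff n)⁻¹ with hg
  have hgmonic : g.Monic := by
    have := monic_mul_leadingCoeff_inv hf0
    rwa [hlc] at this
  have hgcoeff : ∀ i, v (g.coeff i) = v (f.coeff i) := by
    intro i
    rw [hg, coeff_mul_C, hvmul, haninv, add_zero]
  have hgdeg : g.natDegree = n := by
    rw [hg, natDegree_mul_C (inv_ne_zero han), hdeg]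
  -- coefficients below degree have valuation ≥ 1
  have hvge1 : ∀ i, i < n → (1 : WithTop ℤ) ≤ v (f.coeff i) := by
    intro i hi
    by_cases htop : v (f.coeff i) = ⊤
    · rw [htop]; exact le_top
    obtain ⟨z, hz⟩ := WithTop.ne_top_iff_exists.mp htop
    have h := hii i hi
    rw [← hz] at h ⊢
    have h2 : ((n : ℤ) - i) ≤ (n : ℤ) * z := by exact_mod_cast h
    have hin : (i : ℤ) < (n : ℤ) := by exact_mod_cast hi
    have hz1 : (1:ℤ) ≤ z := by
      by_contra hcon
      push_neg at hcon
      have hzle : z ≤ 0 := by omega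
      have : (n:ℤ) * z ≤ 0 :=
        mul_nonpos_iff.mpr (Or.inl ⟨by positivity, hzle⟩)
      linarith
    exact_mod_cast hz1
  -- all coefficients lie in the valuation subring
  have hcoef : ∀ i, 0 ≤ v (g.coeff i) := by
    intro i
    rcases lt_or_ge i n with hi | hi
    · rw [hgcoeff]
      exact le_trans zero_le_one (hvge1 i hi)
    · rcases eq_or_lt_of_le hi with rfl | hi'
      · rw [hgcoeff, hvn]
      · rw [coeff_eq_zero_of_natDegree_lt (by omega : g.natDegree < i), hvzero]
        exact le_top
  have hsub : (↑g.coeffs : Set K) ⊆ (w.integer : Set K) := by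
    intro c hc
    rw [Finset.mem_coe, mem_coeffs_iff] at hc
    obtain ⟨i, _, rfl⟩ := hc
    exact (hmem _).mpr (hcoef i)
  set g₀ : Polynomial w.integer := g.toSubring w.integer hsub with hg₀
  have hg₀monic : g₀.Monic := (monic_toSubring _ _ _).mpr hgmonic
  -- the prime ideal
  set P : Ideal w.integer :=
    { carrier := {x | (1 : WithTop ℤ) ≤ v (x : K)}
      add_mem' := fun {a b} ha hb => le_trans (le_min ha hb) (hvadd _ _)
      zero_mem' := by
        show (1 : WithTop ℤ) ≤ v ((0 : w.integer) : K)
        rw [ZeroMemClass.coe_zero, hvzero]; exact le_top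
      smul_mem' := fun c x hx => by
        show (1 : WithTop ℤ) ≤ v ((c * x : w.integer) : K)
        push_cast
        rw [hvmul]
        calc (1 : WithTop ℤ) = 0 + 1 := by rw [zero_add]
          _ ≤ v (c : K) + v (x : K) := add_le_add ((hmem _).mp c.2) hx } with hP
  have hPmem : ∀ x : w.integer, x ∈ P ↔ (1 : WithTop ℤ) ≤ v (x : K) := fun x => Iff.rfl
  have hlt_one : ∀ a : WithTop ℤ, ¬ (1 : WithTop ℤ) ≤ a → a ≤ 0 := by
    intro a ha
    by_cases htop : a = ⊤
    · exact absurd (htop ▸ le_top) ha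
    obtain ⟨z, hz⟩ := WithTop.ne_top_iff_exists.mp htop
    rw [← hz] at ha ⊢
    have : ¬ (1:ℤ) ≤ z := fun h => ha (by exact_mod_cast h)
    exact_mod_cast (by omega : z ≤ (0:ℤ))
  have hPprime : P.IsPrime := by
    constructor
    · intro h
      have h1 : (1 : w.integer) ∈ P := h ▸ Submodule.mem_top
      rw [hPmem] at h1
      rw [OneMemClass.coe_one, hv1] at h1
      exact absurd h1 (by norm_num)
    · intro x y hxy
      by_contra hcon
      push_neg at hcon
      obtain ⟨hx, hy⟩ := hcon
      rw [hPmem] at hx hy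
      rw [hPmem] at hxy
      push_cast at hxy
      rw [hvmul] at hxy
      have hle : v (x : K) + v (y : K) ≤ 0 :=
        le_trans (add_le_add (hlt_one _ hx) (hlt_one _ hy)) (by rw [add_zero])
      exact absurd (le_trans hxy hle) (by norm_num)
  -- P² avoids coeff 0
  have hP2 : ∀ x : w.integer, x ∈ P ^ 2 → (2 : WithTop ℤ) ≤ v (x : K) := by
    intro x hx
    set Q : Ideal w.integer :=
      { carrier := {x | (2 : WithTop ℤ) ≤ v (x : K)}
        add_mem' := fun {a b} ha hb => le_trans (le_min ha hb) (hvadd _ _)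
        zero_mem' := by
          show (2 : WithTop ℤ) ≤ v ((0 : w.integer) : K)
          rw [ZeroMemClass.coe_zero, hvzero]; exact le_top
        smul_mem' := fun c x hx => by
          show (2 : WithTop ℤ) ≤ v ((c * x : w.integer) : K)
          push_cast
          rw [hvmul]
          calc (2 : WithTop ℤ) = 0 + 2 := by rw [zero_add]
            _ ≤ v (c : K) + v (x : K) := add_le_add ((hmem _).mp c.2) hx } with hQ
    have hle : P ^ 2 ≤ Q := by
      rw [pow_two, Ideal.mul_le]
      intro r hr s hs
      show (2 : WithTop ℤ) ≤ v ((r * s : w.integer) : K)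
      push_cast
      rw [hvmul]
      calc (2 : WithTop ℤ) = 1 + 1 := by norm_num
        _ ≤ v (r : K) + v (s : K) := add_le_add hr hs
    exact hle hx
  -- Eisenstein in the valuation ring
  have hg₀deg : g₀.natDegree = n := by rw [hg₀, natDegree_toSubring, hgdeg]
  have hg₀degpos : 0 < g₀.degree := by
    rw [hg₀, degree_toSubring]
    have hd : g.degree = (n : WithBot ℕ) := by
      rw [degree_eq_natDegree hgmonic.ne_zero, hgdeg]
    rw [hd]
    exact_mod_cast hn0
  have hirr₀ : Irreducible g₀ := by
    apply irreducible_of_eisenstein_criterion hPprime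
    · rw [hg₀monic.leadingCoeff]
      intro h
      rw [hPmem, OneMemClass.coe_one, hv1] at h
      exact absurd h (by norm_num)
    · intro i hi
      have hin : i < n := by
        rw [degree_eq_natDegree (fun h => by simp [h] at hg₀degpos), hg₀deg] at hi
        exact_mod_cast hi
      rw [hPmem]
      have hc : ((g₀.coeff i : K)) = g.coeff i := coeff_toSubring _ _ hsub
      rw [hc, hgcoeff]
      exact hvge1 i hin
    · exact hg₀degpos
    · intro h
      have h2 := hP2 _ h
      have hc : ((g₀.coeff 0 : K)) = g.coeff 0 := coeff_toSubring _ _ hsub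
      rw [hc, hgcoeff, hv0'] at h2
      exact absurd h2 (by norm_num)
    · exact hg₀monic.isPrimitive
  -- transfer to K via Gauss's lemma
  haveI : IsIntegrallyClosed w.integer :=
    (Valuation.integer.integers w).isIntegrallyClosed
  have hmapeq : g₀.map (algebraMap w.integer K) = g := by
    rw [hg₀]
    exact map_toSubring _ _ _
  have hirrg : Irreducible g :=
    hmapeq ▸ (hg₀monic.irreducible_iff_irreducible_map_fraction_map).mp hirr₀
  -- f is associated to g
  have hassoc : Associated g f := by
    refine ⟨(Units.map C.toMonoidHom (Units.mk0 (f.coeff n) han) : (Polynomial K)ˣ), ?_⟩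
    show g * C (f.coeff n) = f
    rw [hg, mul_assoc, ← C_mul, inv_mul_cancel₀ han, C_1, mul_one]
  exact hassoc.irreducible hirrg
end
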